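/- arXiv:1701.03899 — 6 statements merged into one kernel-verified Lean document; each statement's English description precedes it below -/
import Mathlib

section
/- Let v, ṽ ∈ D2 be two orthogonal unit vectors. Then ⟨L(v,ṽ),L(v,ṽ)⟩ = τ holds if and only if ṽ ∈ V_v(τ). Moreover, if u ∈ V_v(0) is a unit vector and ⟨L(v,ṽ),L(v,ṽ)⟩ = τ, then u ∈ V_ṽ(τ). -/
open scoped RealInnerProductSpace
open Module Submodule

noncomputable section

variable {V : Type*} [NormedAddCommGroup V] [InnerProductSpace ℝ V]

/-- The curvature-type operator built from `ε` and the difference tensor `K`: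
`R(X,Y)Z = ε(⟨Y,Z⟩X − ⟨X,Z⟩Y) − K(X,K(Y,Z)) + K(Y,K(X,Z))`. -/
def Rc (ε : ℝ) (K : V →ₗ[ℝ] V →ₗ[ℝ] V) (X Y Z : V) : V :=
  ε • (⟪Y, Z⟫ • X - ⟪X, Z⟫ • Y) - K X (K Y Z) + K Y (K X Z)

/-- The bilinear map `L(v₁,v₂) = K(v₁,v₂) − (λ₁/2)⟨v₁,v₂⟩ e₁`. -/
def Lop (lam1 : ℝ) (e1 : V) (K : V →ₗ[ℝ] V →ₗ[ℝ] V) (v1 v2 : V) : V :=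
  K v1 v2 - (lam1 / 2 * ⟪v1, v2⟫) • e1

/-- The distribution `D₂ = {v : v ⟂ e₁, K(e₁,v) = (λ₁/2)v}`. -/
def D2s (lam1 : ℝ) (e1 : V) (K : V →ₗ[ℝ] V →ₗ[ℝ] V) : Submodule ℝ V :=
  (ℝ ∙ e1)ᗮ ⊓ Module.End.eigenspace (K e1) (lam1 / 2)

/-- The distribution `D₃ = {w : w ⟂ e₁, K(e₁,w) = μw}`. -/
def D3s (mu : ℝ) (e1 : V) (K : V →ₗ[ℝ] V →ₗ[ℝ] V) : Submodule ℝ V :=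
  (ℝ ∙ e1)ᗮ ⊓ Module.End.eigenspace (K e1) mu

/-- The operator `P_v(ṽ) = K(v, L(v,ṽ))`, as a linear endomorphism of `V`. -/
def Pop (lam1 : ℝ) (e1 : V) (K : V →ₗ[ℝ] V →ₗ[ℝ] V) (v : V) : V →ₗ[ℝ] V :=
  (K v) ∘ₗ (K v - (lam1 / 2) •
    ((LinearMap.toSpanSingleton ℝ V e1) ∘ₗ (innerSL ℝ v).toLinearMap))

/-- The eigenspace `V_v(c)` of `P_v` within the orthogonal complement of `v` in `D₂`. -/
def Vvs (lam1 c : ℝ) (e1 : V) (K : V →ₗ[ℝ] V →ₗ[ℝ] V) (v : V) : Submodule ℝ V :=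
  D2s lam1 e1 K ⊓ (ℝ ∙ v)ᗮ ⊓ Module.End.eigenspace (Pop lam1 e1 K v) c

set_option maxHeartbeats 1000000 in
/-- Lemma 4.10: for orthogonal unit vectors `v, ṽ ∈ D₂`, one has
`⟨L(v,ṽ),L(v,ṽ)⟩ = τ` iff `ṽ ∈ V_v(τ)`; moreover if `u ∈ V_v(0)` is a unit vector and
the equality holds, then `u ∈ V_ṽ(τ)`. -/
theorem stmt_12 {V : Type*} [NormedAddCommGroup V] [InnerProductSpace ℝ V]
    (n m : ℕ) (hn : finrank ℝ V = n) (hn2 : 2 ≤ n)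
    (ε : ℝ) (hε : ε = 1 ∨ ε = -1)
    (K : V →ₗ[ℝ] V →ₗ[ℝ] V)
    (hKsymm : ∀ X Y : V, K X Y = K Y X)
    (hKcub : ∀ X Y Z : V, ⟪K X Y, Z⟫ = ⟪K X Z, Y⟫)
    (hpar : ∀ X Y Z U : V,
      Rc ε K X Y (K Z U) = K (Rc ε K X Y Z) U + K Z (Rc ε K X Y U))
    (e1 : V) (he1 : ‖e1‖ = 1)
    (lam1 η μ τ : ℝ)
    (hlam1 : lam1 = ⟪K e1 e1, e1⟫) (hlam1pos : 0 < lam1)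
    (hmax : ∀ u : V, ‖u‖ = 1 → ⟪K u u, u⟫ ≤ lam1)
    (hdisc : 0 < lam1 ^ 2 - 4 * ε)
    (hη : η = Real.sqrt (lam1 ^ 2 - 4 * ε) / 2)
    (hμ : μ = (lam1 - Real.sqrt (lam1 ^ 2 - 4 * ε)) / 2)
    (hτ : τ = η * (η + lam1 / 2) / 4)
    (hm2 : 2 ≤ m) (hmn : m ≤ n - 1)
    (hdimD2 : finrank ℝ (D2s lam1 e1 K) = m - 1)
    (hsplit : (ℝ ∙ e1) ⊔ D2s lam1 e1 K ⊔ D3s μ e1 K = ⊤)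
    (hLD3 : ∀ v1 ∈ D2s lam1 e1 K, ∀ v2 ∈ D2s lam1 e1 K,
      Lop lam1 e1 K v1 v2 ∈ D3s μ e1 K)
    (hKD2 : ∀ v ∈ D2s lam1 e1 K, ∀ w ∈ D3s μ e1 K, K v w ∈ D2s lam1 e1 K)
    (v vt : V) (hv : v ∈ D2s lam1 e1 K) (hvt : vt ∈ D2s lam1 e1 K)
    (hvu : ‖v‖ = 1) (hvtu : ‖vt‖ = 1) (horth : ⟪v, vt⟫ = 0) :
    (⟪Lop lam1 e1 K v vt, Lop lam1 e1 K v vt⟫ = τ ↔ vt ∈ Vvs lam1 τ e1 K v) ∧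
    (∀ w : V, ‖w‖ = 1 → w ∈ Vvs lam1 0 e1 K v →
      ⟪Lop lam1 e1 K v vt, Lop lam1 e1 K v vt⟫ = τ → w ∈ Vvs lam1 τ e1 K vt) := by
  -- ===== scalar facts =====
  have hd0 : (0:ℝ) ≤ lam1 ^ 2 - 4 * ε := hdisc.le
  have hsq : Real.sqrt (lam1 ^ 2 - 4 * ε) ^ 2 = lam1 ^ 2 - 4 * ε := Real.sq_sqrt hd0
  have hsqrtpos : 0 < Real.sqrt (lam1 ^ 2 - 4 * ε) := Real.sqrt_pos.mpr hdisc
  have hηpos : 0 < η := by rw [hη]; linarith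
  have hηne : η ≠ 0 := ne_of_gt hηpos
  have heps : ε = lam1 ^ 2 / 4 - η ^ 2 := by
    rw [hη, div_pow, hsq]; ring
  have hmu' : μ = lam1 / 2 - η := by rw [hμ, hη]; ring
  have hτ' : τ = (η ^ 2 + η * (lam1 / 2)) / 4 := by rw [hτ]; ring
  have hτpos : 0 < τ := by rw [hτ']; nlinarith
  have hτne : τ ≠ 0 := ne_of_gt hτpos
  have hl1ne : lam1 / 2 ≠ 0 := by positivity
  have he1i : ⟪e1, e1⟫ = 1 := by rw [real_inner_self_eq_norm_sq, he1]; norm_num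
  have hunit : ∀ b : V, ‖b‖ = 1 → ⟪b, b⟫ = 1 := by
    intro b hb; rw [real_inner_self_eq_norm_sq, hb]; norm_num
  -- ===== membership extractors =====
  have hD2o : ∀ z ∈ D2s lam1 e1 K, ⟪e1, z⟫ = 0 := fun z hz =>
    Submodule.mem_orthogonal_singleton_iff_inner_right.mp (Submodule.mem_inf.mp hz).1
  have hD2e : ∀ z ∈ D2s lam1 e1 K, K e1 z = (lam1 / 2) • z := fun z hz =>
    Module.End.mem_eigenspace_iff.mp (Submodule.mem_inf.mp hz).2
  have hD3o : ∀ w ∈ D3s μ e1 K, ⟪e1, w⟫ = 0 := fun w hw =>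
    Submodule.mem_orthogonal_singleton_iff_inner_right.mp (Submodule.mem_inf.mp hw).1
  have hD3e : ∀ w ∈ D3s μ e1 K, K e1 w = μ • w := fun w hw =>
    Module.End.mem_eigenspace_iff.mp (Submodule.mem_inf.mp hw).2
  have hlmu : lam1 / 2 - μ = η := by rw [hmu']; ring
  have hD2D3o : ∀ z ∈ D2s lam1 e1 K, ∀ w ∈ D3s μ e1 K, ⟪z, w⟫ = 0 := by
    intro z hz w hw
    have h1 : ⟪K e1 z, w⟫ = ⟪K e1 w, z⟫ := hKcub e1 z w
    rw [hD2e z hz, hD3e w hw, real_inner_smul_left, real_inner_smul_left,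
        real_inner_comm w z] at h1
    have h2 : (lam1 / 2 - μ) * ⟪z, w⟫ = 0 := by
      rw [real_inner_comm w z]; linear_combination h1
    rw [hlmu] at h2
    exact (mul_eq_zero.mp h2).resolve_left hηne
  -- ===== K e1 e1 = lam1 • e1 =====
  have hK11 : K e1 e1 = lam1 • e1 := by
    have hmem : K e1 e1 ∈ (ℝ ∙ e1) ⊔ D2s lam1 e1 K ⊔ D3s μ e1 K := by
      rw [hsplit]; exact Submodule.mem_top
    obtain ⟨p, hp, z3, hz3, hpq⟩ := Submodule.mem_sup.mp hmem
    obtain ⟨q, hq, z2, hz2, rfl⟩ := Submodule.mem_sup.mp hp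
    obtain ⟨a, rfl⟩ := Submodule.mem_span_singleton.mp hq
    have hcz2 : ⟪K e1 e1, z2⟫ = 0 := by
      rw [hKcub e1 e1 z2, hD2e z2 hz2, real_inner_smul_left, real_inner_comm,
          hD2o z2 hz2, mul_zero]
    have hcz3 : ⟪K e1 e1, z3⟫ = 0 := by
      rw [hKcub e1 e1 z3, hD3e z3 hz3, real_inner_smul_left, real_inner_comm,
          hD3o z3 hz3, mul_zero]
    have hz3z2 : ⟪z3, z2⟫ = 0 := by
      rw [real_inner_comm]; exact hD2D3o z2 hz2 z3 hz3
    have h2 : ⟪z2, z2⟫ = 0 := by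
      rw [← hpq, inner_add_left, inner_add_left, real_inner_smul_left,
          hD2o z2 hz2, hz3z2] at hcz2
      linarith
    have h3 : ⟪z3, z3⟫ = 0 := by
      rw [← hpq, inner_add_left, inner_add_left, real_inner_smul_left,
          hD3o z3 hz3, hD2D3o z2 hz2 z3 hz3] at hcz3
      linarith
    have hz20 : z2 = 0 := inner_self_eq_zero.mp h2
    have hz30 : z3 = 0 := inner_self_eq_zero.mp h3
    rw [hz20, hz30, add_zero, add_zero] at hpq
    have ha : a = lam1 := by
      have h4 : ⟪K e1 e1, e1⟫ = a := by
        rw [← hpq, real_inner_smul_left, he1i, mul_one]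
      rw [hlam1, h4]
    rw [← hpq, ha]
  -- ===== L basics =====
  have hLdef : ∀ a b : V, K a b = (lam1 / 2 * ⟪a, b⟫) • e1 + Lop lam1 e1 K a b := by
    intro a b; simp only [Lop]; abel
  have hLsym : ∀ a b : V, Lop lam1 e1 K a b = Lop lam1 e1 K b a := by
    intro a b; simp only [Lop, hKsymm a b, real_inner_comm a b]
  have hLo1 : ∀ a ∈ D2s lam1 e1 K, ∀ b ∈ D2s lam1 e1 K, ⟪e1, Lop lam1 e1 K a b⟫ = 0 :=
    fun a ha b hb => hD3o _ (hLD3 a ha b hb)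
  have hKe1L : ∀ a ∈ D2s lam1 e1 K, ∀ b ∈ D2s lam1 e1 K,
      K e1 (Lop lam1 e1 K a b) = μ • Lop lam1 e1 K a b :=
    fun a ha b hb => hD3e _ (hLD3 a ha b hb)
  have hPmem : ∀ b ∈ D2s lam1 e1 K, ∀ x ∈ D2s lam1 e1 K,
      K b (Lop lam1 e1 K b x) ∈ D2s lam1 e1 K :=
    fun b hb x hx => hKD2 b hb _ (hLD3 b hb x hx)
  have hKbe1 : ∀ b ∈ D2s lam1 e1 K, K b e1 = (lam1 / 2) • b := by
    intro b hb; rw [hKsymm b e1]; exact hD2e b hb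
  -- ===== Rc linearity in last argument =====
  have hRadd : ∀ X Y : V, ∀ c : ℝ, ∀ z1 z2 : V,
      Rc ε K X Y (c • z1 + z2) = c • Rc ε K X Y z1 + Rc ε K X Y z2 := by
    intro X Y c z1 z2
    simp only [Rc, inner_add_right, real_inner_smul_right, map_add, map_smul]
    module
  -- ===== Rc computations =====
  have hR1 : ∀ b ∈ D2s lam1 e1 K, Rc ε K e1 b e1 = (η ^ 2) • b := by
    intro b hb
    have hbe1 : ⟪b, e1⟫ = 0 := by rw [real_inner_comm]; exact hD2o b hb
    simp only [Rc, hbe1, he1i, hKbe1 b hb, hK11, map_smul, hD2e b hb]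
    rw [heps]; module
  have hR2 : ∀ b ∈ D2s lam1 e1 K, ∀ x ∈ D2s lam1 e1 K, Rc ε K e1 b x =
      (-(η ^ 2) * ⟪b, x⟫) • e1 + η • Lop lam1 e1 K b x := by
    intro b hb x hx
    simp only [Rc, hD2o x hx, hLdef b x, map_add, map_smul, hK11,
      hKe1L b hb x hx, hD2e x hx]
    rw [heps, hmu']; module
  have hR3 : ∀ b ∈ D2s lam1 e1 K, ∀ w ∈ D3s μ e1 K,
      Rc ε K e1 b w = (-η) • K b w := by
    intro b hb w hw
    simp only [Rc, hD2D3o b hb w hw, hD3o w hw, hD3e w hw, map_smul,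
      hD2e _ (hKD2 b hb w hw)]
    rw [hmu']; module
  -- ===== the key identity (★) =====
  have hstar : ∀ b ∈ D2s lam1 e1 K, ‖b‖ = 1 → ∀ x ∈ D2s lam1 e1 K,
      K x (Lop lam1 e1 K b b) = (η * lam1 * ⟪b, x⟫) • b + (η * lam1 / 2) • x
        - (2:ℝ) • K b (Lop lam1 e1 K b x) := by
    intro b hb hbu x hx
    have hbb : ⟪b, b⟫ = 1 := hunit b hbu
    have h := hpar e1 b b x
    rw [hLdef b x, hRadd, hR1 b hb, hR3 b hb _ (hLD3 b hb x hx),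
        hR2 b hb b hb, hR2 b hb x hx] at h
    simp only [map_add, map_smul, LinearMap.add_apply, LinearMap.smul_apply] at h
    rw [hKsymm (Lop lam1 e1 K b b) x, hD2e x hx, hKbe1 b hb, hbb] at h
    refine smul_right_injective V hηne ?_
    linear_combination (norm := module) -h
  -- ===== K b (L b b) = (η lam1/2) b =====
  have hC : ∀ b ∈ D2s lam1 e1 K, ‖b‖ = 1 →
      K b (Lop lam1 e1 K b b) = (η * lam1 / 2) • b := by
    intro b hb hbu
    have h := hstar b hb hbu b hb
    rw [hunit b hbu] at h
    linear_combination (norm := module) ((1:ℝ)/3) • h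
  -- ===== Rc of two D2 vectors =====
  have hRvxe1 : ∀ b ∈ D2s lam1 e1 K, ∀ x ∈ D2s lam1 e1 K, Rc ε K b x e1 = 0 := by
    intro b hb x hx
    have hbe1 : ⟪b, e1⟫ = 0 := by rw [real_inner_comm]; exact hD2o b hb
    have hxe1 : ⟪x, e1⟫ = 0 := by rw [real_inner_comm]; exact hD2o x hx
    simp only [Rc, hbe1, hxe1, hKbe1 b hb, hKbe1 x hx, map_smul, hKsymm x b]
    module
  have hRvxv : ∀ b ∈ D2s lam1 e1 K, ‖b‖ = 1 → ∀ x ∈ D2s lam1 e1 K, ⟪b, x⟫ = 0 →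
      Rc ε K b x b = (4 * τ) • x - (3:ℝ) • K b (Lop lam1 e1 K b x) := by
    intro b hb hbu x hx hbx
    have hbb : ⟪b, b⟫ = 1 := hunit b hbu
    have hxb : ⟪x, b⟫ = 0 := by rw [real_inner_comm]; exact hbx
    have hKx : K x (Lop lam1 e1 K b b) = (η * lam1 / 2) • x
        - (2:ℝ) • K b (Lop lam1 e1 K b x) := by
      rw [hstar b hb hbu x hx, hbx]
      module
    simp only [Rc, hLdef x b, hLdef b b, hxb, hbb, map_add, map_smul,
      hKbe1 b hb, hKbe1 x hx, hKx, hLsym x b]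
    rw [heps, hτ']; module
  -- ===== P_b ∘ P_b = τ P_b ===== (key consequence of hpar b x b b)
  have hKP : ∀ b ∈ D2s lam1 e1 K, ‖b‖ = 1 → ∀ x ∈ D2s lam1 e1 K, ⟪b, x⟫ = 0 →
      K b (K b (Lop lam1 e1 K b x)) = τ • Lop lam1 e1 K b x := by
    intro b hb hbu x hx hbx
    have hbb : ⟪b, b⟫ = 1 := hunit b hbu
    have hRL : Rc ε K b x (Lop lam1 e1 K b b)
        = (2:ℝ) • K b (K b (Lop lam1 e1 K b x)) := by
      have hbL : ⟪b, Lop lam1 e1 K b b⟫ = 0 := hD2D3o b hb _ (hLD3 b hb b hb)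
      have hxL : ⟪x, Lop lam1 e1 K b b⟫ = 0 := hD2D3o x hx _ (hLD3 b hb b hb)
      have hKx : K x (Lop lam1 e1 K b b) = (η * lam1 / 2) • x
          - (2:ℝ) • K b (Lop lam1 e1 K b x) := by
        rw [hstar b hb hbu x hx, hbx]
        module
      simp only [Rc, hbL, hxL, hKx, hC b hb hbu, map_sub, map_smul]
      rw [hKsymm x b]
      module
    have h := hpar b x b b
    rw [hLdef b b, hRadd, hRvxe1 b hb x hx, hRL, hRvxv b hb hbu x hx hbx] at h
    simp only [map_sub, map_smul, LinearMap.sub_apply, LinearMap.smul_apply,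
      smul_zero] at h
    rw [hKsymm x b, hKsymm (K b (Lop lam1 e1 K b x)) b, hLdef b x, hbx] at h
    linear_combination (norm := module) ((1:ℝ)/8) • h
  have hbP0 : ∀ b ∈ D2s lam1 e1 K, ‖b‖ = 1 → ∀ x ∈ D2s lam1 e1 K, ⟪b, x⟫ = 0 →
      ⟪b, K b (Lop lam1 e1 K b x)⟫ = 0 := by
    intro b hb hbu x hx hbx
    have h1 : ⟪K b (K b (Lop lam1 e1 K b x)), e1⟫ = 0 := by
      rw [hKP b hb hbu x hx hbx, real_inner_smul_left, real_inner_comm,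
          hLo1 b hb x hx, mul_zero]
    rw [hKcub b (K b (Lop lam1 e1 K b x)) e1, hKbe1 b hb, real_inner_smul_left] at h1
    exact (mul_eq_zero.mp h1).resolve_left hl1ne
  have hLP : ∀ b ∈ D2s lam1 e1 K, ‖b‖ = 1 → ∀ x ∈ D2s lam1 e1 K, ⟪b, x⟫ = 0 →
      Lop lam1 e1 K b (K b (Lop lam1 e1 K b x)) = τ • Lop lam1 e1 K b x := by
    intro b hb hbu x hx hbx
    have hQ : Lop lam1 e1 K b (K b (Lop lam1 e1 K b x))
        = K b (K b (Lop lam1 e1 K b x))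
          - (lam1 / 2 * ⟪b, K b (Lop lam1 e1 K b x)⟫) • e1 := rfl
    rw [hQ, hKP b hb hbu x hx hbx, hbP0 b hb hbu x hx hbx, mul_zero, zero_smul,
        sub_zero]
  -- ===== inner product identities =====
  have hLL : ∀ b ∈ D2s lam1 e1 K, ∀ x ∈ D2s lam1 e1 K, ∀ y ∈ D2s lam1 e1 K,
      ⟪K b (Lop lam1 e1 K b x), y⟫ = ⟪Lop lam1 e1 K b x, Lop lam1 e1 K b y⟫ := by
    intro b hb x hx y hy
    rw [hKcub b (Lop lam1 e1 K b x) y, hLdef b y, inner_add_left,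
        real_inner_smul_left, hLo1 b hb x hx, mul_zero, zero_add, real_inner_comm]
  have hLgen : ∀ a ∈ D2s lam1 e1 K, ∀ b ∈ D2s lam1 e1 K, ∀ c ∈ D2s lam1 e1 K,
      ⟪K a (Lop lam1 e1 K b c), a⟫ = ⟪Lop lam1 e1 K a a, Lop lam1 e1 K b c⟫ := by
    intro a ha b hb c hc
    rw [hKcub a (Lop lam1 e1 K b c) a, hLdef a a, inner_add_left,
        real_inner_smul_left, hLo1 b hb c hc, mul_zero, zero_add]
  -- ===== eigen extraction =====
  have hEig : ∀ b ∈ D2s lam1 e1 K, ‖b‖ = 1 → ∀ x ∈ D2s lam1 e1 K, ‖x‖ = 1 →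
      ⟪b, x⟫ = 0 → ⟪K b (Lop lam1 e1 K b x), x⟫ = τ →
      K b (Lop lam1 e1 K b x) = τ • x := by
    intro b hb hbu x hx hxu hbx hτx
    have hQD2 : K b (Lop lam1 e1 K b x) ∈ D2s lam1 e1 K := hPmem b hb x hx
    have hLxLx : ⟪Lop lam1 e1 K b x, Lop lam1 e1 K b x⟫ = τ := by
      rw [← hLL b hb x hx x hx]; exact hτx
    have hQQ : ⟪K b (Lop lam1 e1 K b x), K b (Lop lam1 e1 K b x)⟫ = τ ^ 2 := by
      rw [hLL b hb x hx _ hQD2, hLP b hb hbu x hx hbx, real_inner_smul_right,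
          hLxLx]
      ring
    have hτx' : ⟪x, K b (Lop lam1 e1 K b x)⟫ = τ := by
      rw [real_inner_comm]; exact hτx
    have hzero : ⟪K b (Lop lam1 e1 K b x) - τ • x,
        K b (Lop lam1 e1 K b x) - τ • x⟫ = 0 := by
      simp only [inner_sub_left, inner_sub_right, real_inner_smul_left,
        real_inner_smul_right, hQQ, hτx, hτx', hunit x hxu]
      ring
    exact sub_eq_zero.mp (inner_self_eq_zero.mp hzero)
  -- ===== Pop and Vvs unfolding =====
  have hPop : ∀ b x : V, Pop lam1 e1 K b x = K b (Lop lam1 e1 K b x) := by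
    intro b x
    simp only [Pop, Lop, LinearMap.comp_apply, LinearMap.sub_apply,
      LinearMap.smul_apply, LinearMap.toSpanSingleton_apply,
      ContinuousLinearMap.coe_coe, innerSL_apply_apply, smul_smul]
  have hVvs : ∀ (c : ℝ) (b z : V), z ∈ Vvs lam1 c e1 K b ↔
      (z ∈ D2s lam1 e1 K ∧ ⟪b, z⟫ = 0 ∧ K b (Lop lam1 e1 K b z) = c • z) := by
    intro c b z
    rw [Vvs, Submodule.mem_inf, Submodule.mem_inf,
        Submodule.mem_orthogonal_singleton_iff_inner_right,
        Module.End.mem_eigenspace_iff, hPop, and_assoc]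
  -- ===== part 1 =====
  have hfwd : ⟪Lop lam1 e1 K v vt, Lop lam1 e1 K v vt⟫ = τ →
      K v (Lop lam1 e1 K v vt) = τ • vt := by
    intro hLτ
    refine hEig v hv hvu vt hvt hvtu horth ?_
    rw [hLL v hv vt hvt vt hvt]; exact hLτ
  constructor
  · constructor
    · intro hLτ
      exact (hVvs τ v vt).mpr ⟨hvt, horth, hfwd hLτ⟩
    · intro hmem
      obtain ⟨_, _, h3⟩ := (hVvs τ v vt).mp hmem
      rw [← hLL v hv vt hvt vt hvt, h3, real_inner_smul_left, hunit vt hvtu,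
          mul_one]
  -- ===== part 2 =====
  · intro w hwu hw0 hLτ
    obtain ⟨hwD2, hvw, hPw0⟩ := (hVvs 0 v w).mp hw0
    rw [zero_smul] at hPw0
    have hPvvt : K v (Lop lam1 e1 K v vt) = τ • vt := hfwd hLτ
    -- L v w = 0
    have hLvw : Lop lam1 e1 K v w = 0 := by
      have h0 : ⟪Lop lam1 e1 K v w, Lop lam1 e1 K v w⟫ = 0 := by
        rw [← hLL v hv w hwD2 w hwD2, hPw0, inner_zero_left]
      exact inner_self_eq_zero.mp h0
    -- ⟪vt, w⟫ = 0
    have hvtw : ⟪vt, w⟫ = 0 := by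
      have h1 : ⟪K v (Lop lam1 e1 K v vt), w⟫
          = ⟪Lop lam1 e1 K v vt, Lop lam1 e1 K v w⟫ := hLL v hv vt hvt w hwD2
      rw [hPvvt, hLvw, inner_zero_right, real_inner_smul_left] at h1
      exact (mul_eq_zero.mp h1).resolve_left hτne
    -- K v (L w w) = (η lam1/2) v
    have hKvLww : K v (Lop lam1 e1 K w w) = (η * lam1 / 2) • v := by
      have h := hstar w hwD2 hwu v hv
      have hwv : ⟪w, v⟫ = 0 := by rw [real_inner_comm]; exact hvw
      rw [hwv, hLsym w v, hLvw, map_zero] at h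
      rw [h]; module
    -- inner products of the L(b,b)
    have hLvvLvv : ⟪Lop lam1 e1 K v v, Lop lam1 e1 K v v⟫ = η * lam1 / 2 := by
      have h := hLgen v hv v hv v hv
      rw [hC v hv hvu, real_inner_smul_left, hunit v hvu, mul_one] at h
      exact h.symm
    have hLwwLww : ⟪Lop lam1 e1 K w w, Lop lam1 e1 K w w⟫ = η * lam1 / 2 := by
      have h := hLgen w hwD2 w hwD2 w hwD2
      rw [hC w hwD2 hwu, real_inner_smul_left, hunit w hwu, mul_one] at h
      exact h.symm
    have hLwwLvv : ⟪Lop lam1 e1 K w w, Lop lam1 e1 K v v⟫ = η * lam1 / 2 := by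
      have h := hLgen v hv w hwD2 w hwD2
      rw [hKvLww, real_inner_smul_left, hunit v hvu, mul_one] at h
      rw [real_inner_comm]; exact h.symm
    have hLww_eq : Lop lam1 e1 K w w = Lop lam1 e1 K v v := by
      have hc : ⟪Lop lam1 e1 K v v, Lop lam1 e1 K w w⟫ = η * lam1 / 2 := by
        rw [real_inner_comm]; exact hLwwLvv
      have h0 : ⟪Lop lam1 e1 K w w - Lop lam1 e1 K v v,
          Lop lam1 e1 K w w - Lop lam1 e1 K v v⟫ = 0 := by
        simp only [inner_sub_left, inner_sub_right, hLvvLvv, hLwwLww, hLwwLvv, hc]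
        ring
      exact sub_eq_zero.mp (inner_self_eq_zero.mp h0)
    -- ⟪L v v, L vt vt⟫ = η lam1/2 - 2τ
    have hKvtLvv : K vt (Lop lam1 e1 K v v) = (η * lam1 / 2 - 2 * τ) • vt := by
      have h := hstar v hv hvu vt hvt
      rw [horth, hPvvt] at h
      rw [h]; module
    have hLvvLtt : ⟪Lop lam1 e1 K v v, Lop lam1 e1 K vt vt⟫
        = η * lam1 / 2 - 2 * τ := by
      have h := hLgen vt hvt v hv v hv
      rw [hKvtLvv, real_inner_smul_left, hunit vt hvtu, mul_one] at h
      rw [real_inner_comm]; exact h.symm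
    -- ⟪P_vt w, w⟫ = τ
    have hPvtw : ⟪K vt (Lop lam1 e1 K vt w), w⟫ = τ := by
      have h := hstar vt hvt hvtu w hwD2
      rw [hvtw] at h
      have h2 : ⟪K w (Lop lam1 e1 K vt vt), w⟫ = η * lam1 / 2 - 2 * τ := by
        rw [hLgen w hwD2 vt hvt vt hvt, hLww_eq, hLvvLtt]
      have h3 := congrArg (fun z : V => ⟪z, w⟫) h
      simp only [inner_sub_left, inner_add_left, real_inner_smul_left,
        hunit w hwu, h2] at h3
      have hwvt : ⟪vt, w⟫ = 0 := hvtw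
      rw [hwvt] at h3
      -- h3 : η*lam1/2 - 2τ = η*lam1*0*? ... linear in ⟪K vt (L vt w), w⟫
      nlinarith [h3]
    have hfin := hEig vt hvt hvtu w hwD2 hwu hvtw hPvtw
    exact (hVvs τ vt w).mpr ⟨hwD2, hvtw, hfin⟩

end
end

section
/- Let v1, v2, v3 ∈ D2 be orthonormal vectors satisfying v1, v2 ∈ V_{v3}(τ). Then for every vector v ∈ D2 one has ⟨L(v1,v2), L(v,v3)⟩ = 0. -/
open scoped RealInnerProductSpace
open Module Submodule

noncomputable section

variable {V : Type*} [NormedAddCommGroup V] [InnerProductSpace ℝ V]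

/-- Lemma 4.11: if `v₁, v₂, v₃ ∈ D₂` are orthonormal with `v₁, v₂ ∈ V_{v₃}(τ)`, then
`⟨L(v₁,v₂), L(v,v₃)⟩ = 0` for every `v ∈ D₂`. -/
theorem stmt_13 {V : Type*} [NormedAddCommGroup V] [InnerProductSpace ℝ V]
    (n m : ℕ) (hn : finrank ℝ V = n) (hn2 : 2 ≤ n)
    (ε : ℝ) (hε : ε = 1 ∨ ε = -1)
    (K : V →ₗ[ℝ] V →ₗ[ℝ] V)
    (hKsymm : ∀ X Y : V, K X Y = K Y X)
    (hKcub : ∀ X Y Z : V, ⟪K X Y, Z⟫ = ⟪K X Z, Y⟫)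
    (hpar : ∀ X Y Z U : V,
      Rc ε K X Y (K Z U) = K (Rc ε K X Y Z) U + K Z (Rc ε K X Y U))
    (e1 : V) (he1 : ‖e1‖ = 1)
    (lam1 η μ τ : ℝ)
    (hlam1 : lam1 = ⟪K e1 e1, e1⟫) (hlam1pos : 0 < lam1)
    (hmax : ∀ u : V, ‖u‖ = 1 → ⟪K u u, u⟫ ≤ lam1)
    (hdisc : 0 < lam1 ^ 2 - 4 * ε)
    (hη : η = Real.sqrt (lam1 ^ 2 - 4 * ε) / 2)
    (hμ : μ = (lam1 - Real.sqrt (lam1 ^ 2 - 4 * ε)) / 2)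
    (hτ : τ = η * (η + lam1 / 2) / 4)
    (hm2 : 2 ≤ m) (hmn : m ≤ n - 1)
    (hdimD2 : finrank ℝ (D2s lam1 e1 K) = m - 1)
    (hsplit : (ℝ ∙ e1) ⊔ D2s lam1 e1 K ⊔ D3s μ e1 K = ⊤)
    (hLD3 : ∀ v1 ∈ D2s lam1 e1 K, ∀ v2 ∈ D2s lam1 e1 K,
      Lop lam1 e1 K v1 v2 ∈ D3s μ e1 K)
    (hKD2 : ∀ v ∈ D2s lam1 e1 K, ∀ w ∈ D3s μ e1 K, K v w ∈ D2s lam1 e1 K)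
    (v1 v2 v3 : V) (hv1 : v1 ∈ D2s lam1 e1 K) (hv2 : v2 ∈ D2s lam1 e1 K)
    (hv3 : v3 ∈ D2s lam1 e1 K) (hON : Orthonormal ℝ ![v1, v2, v3])
    (hv1τ : v1 ∈ Vvs lam1 τ e1 K v3) (hv2τ : v2 ∈ Vvs lam1 τ e1 K v3) :
    ∀ v ∈ D2s lam1 e1 K, ⟪Lop lam1 e1 K v1 v2, Lop lam1 e1 K v v3⟫ = 0 := by
  intro v _hv
  -- basic scalar facts
  have hdisc' : (0:ℝ) ≤ lam1 ^ 2 - 4 * ε := hdisc.le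
  have hηpos : 0 < η := by
    rw [hη]
    have := Real.sqrt_pos.mpr hdisc
    linarith
  have hηne : η ≠ 0 := ne_of_gt hηpos
  have hηsq : η * η = (lam1 ^ 2 - 4 * ε) / 4 := by
    rw [hη, div_mul_div_comm, Real.mul_self_sqrt hdisc']; ring
  have hε' : ε = lam1 ^ 2 / 4 - η * η := by rw [hηsq]; ring
  have hμη : μ = lam1 / 2 - η := by rw [hμ, hη]; ring
  -- membership helpers
  have memD2K : ∀ x, x ∈ D2s lam1 e1 K → K e1 x = (lam1 / 2) • x := fun x hx =>
    Module.End.mem_eigenspace_iff.mp (Submodule.mem_inf.mp hx).2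
  have memD3K : ∀ x, x ∈ D3s μ e1 K → K e1 x = μ • x := fun x hx =>
    Module.End.mem_eigenspace_iff.mp (Submodule.mem_inf.mp hx).2
  have perpD2 : ∀ x, x ∈ D2s lam1 e1 K → ⟪e1, x⟫ = 0 := fun x hx =>
    (Submodule.mem_inf.mp hx).1 e1 (Submodule.mem_span_singleton_self e1)
  have perpD3 : ∀ x, x ∈ D3s μ e1 K → ⟪e1, x⟫ = 0 := fun x hx =>
    (Submodule.mem_inf.mp hx).1 e1 (Submodule.mem_span_singleton_self e1)
  have hD2D3 : ∀ x, x ∈ D2s lam1 e1 K → ∀ y, y ∈ D3s μ e1 K → ⟪x, y⟫ = 0 := by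
    intro x hx y hy
    have h1 : ⟪K e1 x, y⟫ = ⟪K e1 y, x⟫ := hKcub e1 x y
    rw [memD2K x hx, memD3K y hy, real_inner_smul_left, real_inner_smul_left,
      real_inner_comm x y] at h1
    have h2 : (lam1 / 2 - μ) * ⟪x, y⟫ = 0 := by linarith
    have h3 : lam1 / 2 - μ = η := by rw [hμη]; ring
    rw [h3] at h2
    exact (mul_eq_zero.mp h2).resolve_left hηne
  -- orthonormality data
  have n1 : ‖v1‖ = 1 := by simpa using hON.1 0
  have n2 : ‖v2‖ = 1 := by simpa using hON.1 1
  have n3 : ‖v3‖ = 1 := by simpa using hON.1 2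
  have iv12 : ⟪v1, v2⟫ = 0 := by simpa using hON.2 (show (0:Fin 3) ≠ 1 by decide)
  have iv13 : ⟪v1, v3⟫ = 0 := by simpa using hON.2 (show (0:Fin 3) ≠ 2 by decide)
  have iv23 : ⟪v2, v3⟫ = 0 := by simpa using hON.2 (show (1:Fin 3) ≠ 2 by decide)
  have iv21 : ⟪v2, v1⟫ = 0 := by rw [real_inner_comm]; exact iv12
  have iv31 : ⟪v3, v1⟫ = 0 := by rw [real_inner_comm]; exact iv13
  have iv32 : ⟪v3, v2⟫ = 0 := by rw [real_inner_comm]; exact iv23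
  have iv33 : ⟪v3, v3⟫ = 1 := by
    rw [real_inner_self_eq_norm_mul_norm, n3]; norm_num
  have ie1 : ⟪e1, v1⟫ = 0 := perpD2 v1 hv1
  have ie2 : ⟪e1, v2⟫ = 0 := perpD2 v2 hv2
  have ie3 : ⟪e1, v3⟫ = 0 := perpD2 v3 hv3
  have iee : ⟪e1, e1⟫ = 1 := by
    rw [real_inner_self_eq_norm_mul_norm, he1]; norm_num
  -- K e1 e1 = lam1 • e1
  have ke : K e1 e1 = lam1 • e1 := by
    have hd : K e1 e1 - lam1 • e1 ∈ ((ℝ ∙ e1) ⊔ D2s lam1 e1 K ⊔ D3s μ e1 K)ᗮ := by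
      rw [Submodule.mem_orthogonal]
      rintro u hu
      obtain ⟨ab, hab, c, hc, rfl⟩ := Submodule.mem_sup.mp hu
      obtain ⟨x, hx, y, hy, rfl⟩ := Submodule.mem_sup.mp hab
      obtain ⟨t, rfl⟩ := Submodule.mem_span_singleton.mp hx
      have h1 : ⟪e1, K e1 e1 - lam1 • e1⟫ = 0 := by
        rw [inner_sub_right, real_inner_smul_right, iee, real_inner_comm, ← hlam1]; ring
      have h2 : ⟪y, K e1 e1 - lam1 • e1⟫ = 0 := by
        have hcu : ⟪K e1 e1, y⟫ = ⟪K e1 y, e1⟫ := hKcub e1 e1 y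
        rw [memD2K y hy, real_inner_smul_left] at hcu
        have e1y : ⟪y, e1⟫ = 0 := by rw [real_inner_comm]; exact perpD2 y hy
        have hy3 : ⟪y, K e1 e1⟫ = lam1 / 2 * ⟪y, e1⟫ := by
          rw [real_inner_comm]; rw [hcu, e1y]
        rw [inner_sub_right, real_inner_smul_right, hy3, e1y]
        ring
      have h3 : ⟪c, K e1 e1 - lam1 • e1⟫ = 0 := by
        have hcu : ⟪K e1 e1, c⟫ = ⟪K e1 c, e1⟫ := hKcub e1 e1 c
        rw [memD3K c hc, real_inner_smul_left] at hcu
        have e1c : ⟪c, e1⟫ = 0 := by rw [real_inner_comm]; exact perpD3 c hc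
        have hc3 : ⟪c, K e1 e1⟫ = μ * ⟪c, e1⟫ := by
          rw [real_inner_comm]; rw [hcu, e1c]
        rw [inner_sub_right, real_inner_smul_right, hc3, e1c]
        ring
      rw [inner_add_left, inner_add_left, real_inner_smul_left, h1, h2, h3]; ring
    rw [hsplit, Submodule.top_orthogonal_eq_bot, Submodule.mem_bot] at hd
    exact sub_eq_zero.mp hd
  -- D3 memberships of K-products
  have hL12 : K v1 v2 ∈ D3s μ e1 K := by
    have h := hLD3 v1 hv1 v2 hv2
    simpa [Lop, iv12] using h
  have hL13 : K v3 v1 ∈ D3s μ e1 K := by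
    have h := hLD3 v3 hv3 v1 hv1
    simpa [Lop, iv31] using h
  have hL23 : K v3 v2 ∈ D3s μ e1 K := by
    have h := hLD3 v3 hv3 v2 hv2
    simpa [Lop, iv32] using h
  have hL33 : K v3 v3 - (lam1 / 2) • e1 ∈ D3s μ e1 K := by
    have h := hLD3 v3 hv3 v3 hv3
    simpa [Lop, iv33, n3] using h
  -- D2 membership of w' := K v3 (K v1 v2)
  have hw : K v3 (K v1 v2) ∈ D2s lam1 e1 K := hKD2 v3 hv3 _ hL12
  -- inner products with D3 elements
  have j1 : ⟪v3, K v1 v2⟫ = 0 := hD2D3 v3 hv3 _ hL12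
  have j2 : ⟪e1, K v1 v2⟫ = 0 := perpD3 _ hL12
  have j3 : ⟪v3, K v3 v1⟫ = 0 := hD2D3 v3 hv3 _ hL13
  have j4 : ⟪e1, K v3 v1⟫ = 0 := perpD3 _ hL13
  have j5 : ⟪v3, K v3 v2⟫ = 0 := hD2D3 v3 hv3 _ hL23
  have j6 : ⟪e1, K v3 v2⟫ = 0 := perpD3 _ hL23
  have j7 : ⟪v1, K v3 v2⟫ = 0 := hD2D3 v1 hv1 _ hL23
  have j8 : ⟪v2, K v3 v1⟫ = 0 := hD2D3 v2 hv2 _ hL13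
  -- K e1 values
  have kv1 : K e1 v1 = (lam1 / 2) • v1 := memD2K v1 hv1
  have kv2 : K e1 v2 = (lam1 / 2) • v2 := memD2K v2 hv2
  have kv3 : K e1 v3 = (lam1 / 2) • v3 := memD2K v3 hv3
  have mL12 : K e1 (K v1 v2) = μ • K v1 v2 := memD3K _ hL12
  have mL13 : K e1 (K v3 v1) = μ • K v3 v1 := memD3K _ hL13
  have mL23 : K e1 (K v3 v2) = μ • K v3 v2 := memD3K _ hL23
  have kw : K e1 (K v3 (K v1 v2)) = (lam1 / 2) • K v3 (K v1 v2) := memD2K _ hw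
  have kM33 : K e1 (K v3 v3) = μ • K v3 v3 + ((lam1 - μ) * (lam1 / 2)) • e1 := by
    have h3 := memD3K _ hL33
    simp only [map_sub, map_smul, ke] at h3
    linear_combination (norm := module) h3
  -- eigen relations from hv1τ, hv2τ
  have hE1 : K v3 (K v3 v1) = τ • v1 := by
    have h := Module.End.mem_eigenspace_iff.mp (Submodule.mem_inf.mp hv1τ).2
    simpa [Pop, LinearMap.comp_apply, LinearMap.sub_apply, LinearMap.smul_apply,
      LinearMap.toSpanSingleton_apply, ContinuousLinearMap.coe_coe, innerSL_apply_apply,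
      iv31] using h
  have hE2 : K v3 (K v3 v2) = τ • v2 := by
    have h := Module.End.mem_eigenspace_iff.mp (Submodule.mem_inf.mp hv2τ).2
    simpa [Pop, LinearMap.comp_apply, LinearMap.sub_apply, LinearMap.smul_apply,
      LinearMap.toSpanSingleton_apply, ContinuousLinearMap.coe_coe, innerSL_apply_apply,
      iv32] using h
  -- Instance 1: hpar e1 v3 v1 v2  ⟹  w' = -(p' + q')
  have I1 : K v3 (K v1 v2) = -K v1 (K v3 v2) - K v2 (K v3 v1) := by
    have h := hpar e1 v3 v1 v2
    simp only [Rc, j1, j2, iv31, iv32, ie1, ie2, kv1, kv2, mL12, mL13, mL23, kw,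
      map_sub, map_add, map_smul, map_neg, LinearMap.sub_apply, LinearMap.add_apply,
      LinearMap.smul_apply, LinearMap.neg_apply, zero_smul, smul_zero, sub_zero,
      zero_sub, sub_self, map_zero, LinearMap.zero_apply, neg_zero, add_zero,
      zero_add, hKsymm (K v3 v1) v2] at h
    apply smul_right_injective V hηne
    rw [hμη] at h
    linear_combination (norm := module) -h
  -- Instance 2: hpar e1 v3 v3 v1  ⟹  K v1 (K v3 v3) = k • v1
  have I2 : K v1 (K v3 v3) = (lam1 ^ 2 / 4 + η * lam1 / 2 - 2 * τ) • v1 := by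
    have h := hpar e1 v3 v3 v1
    simp only [Rc, j3, j4, iv33, iv31, ie1, ie3, kv1, kv3, mL13, kM33, hE1,
      map_sub, map_add, map_smul, map_neg, LinearMap.sub_apply, LinearMap.add_apply,
      LinearMap.smul_apply, LinearMap.neg_apply, zero_smul, smul_zero, sub_zero,
      zero_sub, sub_self, map_zero, LinearMap.zero_apply, neg_zero, add_zero,
      zero_add, one_smul, hKsymm (K v3 v3) v1] at h
    apply smul_right_injective V hηne
    rw [hε', hμη] at h
    linear_combination (norm := module) -h
  -- Instance 3: hpar e1 v3 v3 v2  ⟹  K v2 (K v3 v3) = k • v2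
  have I3 : K v2 (K v3 v3) = (lam1 ^ 2 / 4 + η * lam1 / 2 - 2 * τ) • v2 := by
    have h := hpar e1 v3 v3 v2
    simp only [Rc, j5, j6, iv33, iv32, ie2, ie3, kv2, kv3, mL23, kM33, hE2,
      map_sub, map_add, map_smul, map_neg, LinearMap.sub_apply, LinearMap.add_apply,
      LinearMap.smul_apply, LinearMap.neg_apply, zero_smul, smul_zero, sub_zero,
      zero_sub, sub_self, map_zero, LinearMap.zero_apply, neg_zero, add_zero,
      zero_add, one_smul, hKsymm (K v3 v3) v2] at h
    apply smul_right_injective V hηne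
    rw [hε', hμη] at h
    linear_combination (norm := module) -h
  -- Instance 4: hpar v1 v3 v3 v2  ⟹  K v3 (K v3 (K v1 v2)) = 2 • K v3 (K v1 (K v3 v2))
  have I4 : K v3 (K v3 (K v1 v2)) = (2:ℝ) • K v3 (K v1 (K v3 v2)) := by
    have h := hpar v1 v3 v3 v2
    simp only [Rc] at h
    rw [hKsymm v1 v3] at h
    simp only [ j5, j7, iv33, iv13, iv31, iv32, iv12, hE1, hE2, I2,
      map_sub, map_add, map_smul, map_neg, LinearMap.sub_apply, LinearMap.add_apply,
      LinearMap.smul_apply, LinearMap.neg_apply, zero_smul, smul_zero, sub_zero,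
      zero_sub, sub_self, map_zero, LinearMap.zero_apply, neg_zero, add_zero,
      zero_add, one_smul] at h
    rw [hε', hτ] at h
    linear_combination (norm := module) -h
  -- Instance 5: hpar v2 v3 v3 v1  ⟹  K v3 (K v3 (K v1 v2)) = 2 • K v3 (K v2 (K v3 v1))
  have I5 : K v3 (K v3 (K v1 v2)) = (2:ℝ) • K v3 (K v2 (K v3 v1)) := by
    have h := hpar v2 v3 v3 v1
    simp only [Rc] at h
    rw [hKsymm v2 v3] at h
    simp only [ j3, j8, iv33, iv23, iv32, iv31, iv21, hE1, hE2, I3,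
      map_sub, map_add, map_smul, map_neg, LinearMap.sub_apply, LinearMap.add_apply,
      LinearMap.smul_apply, LinearMap.neg_apply, zero_smul, smul_zero, sub_zero,
      zero_sub, sub_self, map_zero, LinearMap.zero_apply, neg_zero, add_zero,
      zero_add, one_smul, hKsymm v2 v1] at h
    rw [hε', hτ] at h
    linear_combination (norm := module) -h
  -- combine
  have I1' : K v3 (K v3 (K v1 v2)) =
      -K v3 (K v1 (K v3 v2)) - K v3 (K v2 (K v3 v1)) := by
    have h := congrArg (⇑(K v3)) I1
    simpa [map_sub, map_neg] using h
  have h4 : (4:ℝ) • K v3 (K v3 (K v1 v2)) = 0 := by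
    linear_combination (norm := module) (2:ℝ) • I1' + I4 + I5
  have key0 : K v3 (K v3 (K v1 v2)) = 0 :=
    (smul_eq_zero.mp h4).resolve_left (by norm_num)
  have hw0 : K v3 (K v1 v2) = 0 := by
    have h := hKcub v3 (K v1 v2) (K v3 (K v1 v2))
    rw [key0] at h
    simp only [inner_zero_left] at h
    exact inner_self_eq_zero.mp h
  -- finish
  simp only [Lop, iv12, mul_zero, zero_smul, sub_zero]
  rw [inner_sub_right, real_inner_smul_right]
  have t1 : ⟪K v1 v2, e1⟫ = 0 := by rw [real_inner_comm]; exact j2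
  have t2 : ⟪K v1 v2, K v v3⟫ = 0 := by
    rw [real_inner_comm, hKcub v v3 (K v1 v2), hKsymm v (K v1 v2),
      hKcub (K v1 v2) v v3, ← hKsymm v3 (K v1 v2), hw0, inner_zero_left]
  rw [t1, t2]; ring

end
end

section
/- There exist an integer k0 ≥ 1 and unit vectors v_1, …, v_{k0} ∈ D2 such that D2 decomposes as the orthogonal direct sum D2 = (span{v_1} ⊕ V_{v_1}(0)) ⊕ (span{v_2} ⊕ V_{v_2}(0)) ⊕ ⋯ ⊕ (span{v_{k0}} ⊕ V_{v_{k0}}(0)), and moreover v_l ∈ V_{v_j}(τ) whenever j ≠ l. -/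
open scoped RealInnerProductSpace
open Module Submodule

noncomputable section

variable {V : Type*} [NormedAddCommGroup V] [InnerProductSpace ℝ V]

set_option maxHeartbeats 3000000 in
/-- Proposition 4.1: `D₂` admits an orthogonal direct sum decomposition
`D₂ = (span{v₁} ⊕ V_{v₁}(0)) ⊕ ⋯ ⊕ (span{v_{k₀}} ⊕ V_{v_{k₀}}(0))`, with
`v_l ∈ V_{v_j}(τ)` whenever `j ≠ l`. -/
theorem stmt_14 {V : Type*} [NormedAddCommGroup V] [InnerProductSpace ℝ V]
    (n m : ℕ) (hn : finrank ℝ V = n) (hn2 : 2 ≤ n)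
    (ε : ℝ) (hε : ε = 1 ∨ ε = -1)
    (K : V →ₗ[ℝ] V →ₗ[ℝ] V)
    (hKsymm : ∀ X Y : V, K X Y = K Y X)
    (hKcub : ∀ X Y Z : V, ⟪K X Y, Z⟫ = ⟪K X Z, Y⟫)
    (hpar : ∀ X Y Z U : V,
      Rc ε K X Y (K Z U) = K (Rc ε K X Y Z) U + K Z (Rc ε K X Y U))
    (e1 : V) (he1 : ‖e1‖ = 1)
    (lam1 η μ τ : ℝ)
    (hlam1 : lam1 = ⟪K e1 e1, e1⟫) (hlam1pos : 0 < lam1)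
    (hmax : ∀ u : V, ‖u‖ = 1 → ⟪K u u, u⟫ ≤ lam1)
    (hdisc : 0 < lam1 ^ 2 - 4 * ε)
    (hη : η = Real.sqrt (lam1 ^ 2 - 4 * ε) / 2)
    (hμ : μ = (lam1 - Real.sqrt (lam1 ^ 2 - 4 * ε)) / 2)
    (hτ : τ = η * (η + lam1 / 2) / 4)
    (hm2 : 2 ≤ m) (hmn : m ≤ n - 1)
    (hdimD2 : finrank ℝ (D2s lam1 e1 K) = m - 1)
    (hsplit : (ℝ ∙ e1) ⊔ D2s lam1 e1 K ⊔ D3s μ e1 K = ⊤)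
    (hLD3 : ∀ v1 ∈ D2s lam1 e1 K, ∀ v2 ∈ D2s lam1 e1 K,
      Lop lam1 e1 K v1 v2 ∈ D3s μ e1 K)
    (hKD2 : ∀ v ∈ D2s lam1 e1 K, ∀ w ∈ D3s μ e1 K, K v w ∈ D2s lam1 e1 K)
    :
    ∃ (k0 : ℕ) (v : Fin k0 → V), 1 ≤ k0 ∧
      (∀ j, ‖v j‖ = 1 ∧ v j ∈ D2s lam1 e1 K) ∧
      (∀ j l, j ≠ l →
        ∀ x ∈ (ℝ ∙ v j) ⊔ Vvs lam1 0 e1 K (v j),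
          ∀ y ∈ (ℝ ∙ v l) ⊔ Vvs lam1 0 e1 K (v l), ⟪x, y⟫ = 0) ∧
      (⨆ j, (ℝ ∙ v j) ⊔ Vvs lam1 0 e1 K (v j)) = D2s lam1 e1 K ∧
      (∀ j l, j ≠ l → v l ∈ Vvs lam1 τ e1 K (v j)) := by

  classical
  haveI : FiniteDimensional ℝ V := FiniteDimensional.of_finrank_pos (by rw [hn]; omega)
  -- scalar facts
  have hsq : Real.sqrt (lam1 ^ 2 - 4 * ε) ^ 2 = lam1 ^ 2 - 4 * ε := Real.sq_sqrt hdisc.le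
  have hηpos : 0 < η := by
    rw [hη]; have := Real.sqrt_pos.2 hdisc; linarith
  have hηne : η ≠ 0 := ne_of_gt hηpos
  have hη2 : η ^ 2 = lam1 ^ 2 / 4 - ε := by rw [hη, div_pow, hsq]; ring
  have hεη : ε = lam1 ^ 2 / 4 - η ^ 2 := by linarith
  have hμη : μ = lam1 / 2 - η := by rw [hμ, hη]; ring
  have hτpos : 0 < τ := by
    have h1 : 0 < η + lam1 / 2 := by linarith
    rw [hτ]; exact div_pos (mul_pos hηpos h1) (by norm_num)
  have hτne : τ ≠ 0 := ne_of_gt hτpos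
  have hτη : τ = η * (η + lam1 / 2) / 4 := hτ
  -- cyclic symmetry
  have hKs3 : ∀ X Y Z : V, ⟪K X Y, Z⟫ = ⟪K Y Z, X⟫ := by
    intro X Y Z; rw [hKsymm X Y, hKcub Y X Z]
  have he1e1 : ⟪e1, e1⟫ = (1 : ℝ) := by
    rw [real_inner_self_eq_norm_sq, he1]; norm_num
  -- membership unfolds
  have memD2 : ∀ {x : V}, x ∈ D2s lam1 e1 K ↔ ⟪e1, x⟫ = 0 ∧ K e1 x = (lam1 / 2) • x := by
    intro x
    simp [D2s, Submodule.mem_inf, Submodule.mem_orthogonal_singleton_iff_inner_right,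
      Module.End.mem_eigenspace_iff]
  have memD3 : ∀ {x : V}, x ∈ D3s μ e1 K ↔ ⟪e1, x⟫ = 0 ∧ K e1 x = μ • x := by
    intro x
    simp [D3s, Submodule.mem_inf, Submodule.mem_orthogonal_singleton_iff_inner_right,
      Module.End.mem_eigenspace_iff]
  have hD2D3 : ∀ x ∈ D2s lam1 e1 K, ∀ w ∈ D3s μ e1 K, ⟪x, w⟫ = 0 := by
    intro x hx w hw
    have h1 : ⟪K e1 x, w⟫ = ⟪K e1 w, x⟫ := hKcub e1 x w
    rw [(memD2.1 hx).2, (memD3.1 hw).2, real_inner_smul_left, real_inner_smul_left,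
      real_inner_comm x w] at h1
    have h2 : (lam1 / 2 - μ) * ⟪x, w⟫ = 0 := by linarith
    rcases mul_eq_zero.1 h2 with h3 | h3
    · exfalso; rw [hμη] at h3; exact hηne (by linarith)
    · exact h3
  -- residual lemma
  have hresid : ∀ x : V, ⟪e1, x⟫ = 0 → (∀ y ∈ D2s lam1 e1 K, ⟪y, x⟫ = 0) →
      x ∈ D3s μ e1 K := by
    intro x hxe hxd
    have hx : x ∈ (ℝ ∙ e1) ⊔ D2s lam1 e1 K ⊔ D3s μ e1 K := by rw [hsplit]; trivial
    rcases Submodule.mem_sup.1 hx with ⟨ab, hab, c, hc, hsum⟩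
    rcases Submodule.mem_sup.1 hab with ⟨a, ha, b, hb, rfl⟩
    rcases Submodule.mem_span_singleton.1 ha with ⟨t, rfl⟩
    have hbe : ⟪e1, b⟫ = 0 := (memD2.1 hb).1
    have hce : ⟪e1, c⟫ = 0 := (memD3.1 hc).1
    have ht : t = 0 := by
      have h5 := hxe
      rw [← hsum, inner_add_right, inner_add_right, real_inner_smul_right, he1e1, hbe, hce] at h5
      linarith
    have hbx : ⟪b, x⟫ = 0 := hxd b hb
    have hb0 : b = 0 := by
      rw [← hsum, ht, zero_smul, zero_add, inner_add_right] at hbx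
      rw [hD2D3 b hb c hc] at hbx
      have : ⟪b, b⟫ = (0 : ℝ) := by linarith
      exact inner_self_eq_zero.1 this
    rw [← hsum, ht, hb0, zero_smul, zero_add, zero_add]
    exact hc
  -- K e1 e1 = lam1 e1
  have hKe1e1 : K e1 e1 = lam1 • e1 := by
    set x := K e1 e1 - lam1 • e1 with hxdef
    have hxe : ⟪e1, x⟫ = 0 := by
      rw [hxdef, inner_sub_right, real_inner_smul_right, he1e1,
        real_inner_comm (K e1 e1) e1, ← hlam1]
      ring
    have hxd : ∀ y ∈ D2s lam1 e1 K, ⟪y, x⟫ = 0 := by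
      intro y hy
      have hye : ⟪y, e1⟫ = 0 := by
        rw [real_inner_comm e1 y]; exact (memD2.1 hy).1
      have h1 : ⟪K e1 e1, y⟫ = ⟪K e1 y, e1⟫ := hKcub e1 e1 y
      rw [(memD2.1 hy).2, real_inner_smul_left, hye] at h1
      rw [hxdef, inner_sub_right, real_inner_smul_right, real_inner_comm (K e1 e1) y, h1, hye]
      ring
    have hxD3 : x ∈ D3s μ e1 K := hresid x hxe hxd
    have hxx : ⟪x, x⟫ = (0 : ℝ) := by
      have hxe1 : ⟪x, e1⟫ = 0 := by
        rw [real_inner_comm e1 x]; exact (memD3.1 hxD3).1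
      have h1 : ⟪K e1 e1, x⟫ = ⟪K e1 x, e1⟫ := hKcub e1 e1 x
      rw [(memD3.1 hxD3).2, real_inner_smul_left, hxe1] at h1
      nth_rewrite 1 [hxdef]
      rw [inner_sub_left, real_inner_smul_left, h1, real_inner_comm x e1, hxe1]
      ring
    have h2 : x = 0 := inner_self_eq_zero.1 hxx
    rw [hxdef, sub_eq_zero] at h2; exact h2
  -- L layer
  set Lf : V → V → V := Lop lam1 e1 K with hLfdef
  have hKL : ∀ a b : V, K a b = (lam1 / 2 * ⟪a, b⟫) • e1 + Lf a b := by
    intro a b; rw [hLfdef]; simp [Lop]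
  have hLsymm : ∀ a b : V, Lf a b = Lf b a := by
    intro a b; rw [hLfdef]; simp only [Lop, hKsymm a b, real_inner_comm b a]
  have hLmem : ∀ a ∈ D2s lam1 e1 K, ∀ b ∈ D2s lam1 e1 K, Lf a b ∈ D3s μ e1 K := hLD3
  -- linear combination helpers
  have lc : ∀ {A B C D : V}, C = D → A - B = C - D → A = B := by
    intro A B C D h h2
    have h3 : A - B = 0 := by rw [h2, h, sub_self]
    exact sub_eq_zero.1 h3
  have lc2 : ∀ {A B C D E F : V}, C = D → E = F → A - B = C - D + (E - F) → A = B := by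
    intro A B C D E F h h' h2
    have h3 : A - B = 0 := by rw [h2, h, h', sub_self, sub_self, add_zero]
    exact sub_eq_zero.1 h3
  have hcancel : ∀ {A B : V}, η • A = η • B → A = B := fun h => smul_right_injective V hηne h
  have hcancelτ : ∀ {A B : V}, τ • A = τ • B → A = B := fun h => smul_right_injective V hτne h
  -- Rc is linear in the Z argument
  have hRlin : ∀ (X Y : V) (a : ℝ) (z1 z2 : V), Rc ε K X Y (a • z1 + z2) =
      a • Rc ε K X Y z1 + Rc ε K X Y z2 := by
    intro X Y a z1 z2
    simp only [Rc, inner_add_right, real_inner_smul_right, map_add, map_smul]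
    module
  have hKe1D2 : ∀ x ∈ D2s lam1 e1 K, K e1 x = (lam1 / 2) • x := fun x hx => (memD2.1 hx).2
  have hKe1D3 : ∀ w ∈ D3s μ e1 K, K e1 w = μ • w := fun w hw => (memD3.1 hw).2
  have he1D2 : ∀ x ∈ D2s lam1 e1 K, ⟪e1, x⟫ = 0 := fun x hx => (memD2.1 hx).1
  have he1D3 : ∀ w ∈ D3s μ e1 K, ⟪e1, w⟫ = 0 := fun w hw => (memD3.1 hw).1
  -- curvature images
  have r1 : ∀ v ∈ D2s lam1 e1 K, Rc ε K e1 v e1 = η ^ 2 • v := by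
    intro v hv
    have h1 : K v e1 = (lam1 / 2) • v := by rw [hKsymm]; exact hKe1D2 v hv
    have h2 : ⟪v, e1⟫ = 0 := by rw [real_inner_comm e1 v]; exact he1D2 v hv
    simp only [Rc, h1, h2, hKe1e1, map_smul, hKe1D2 v hv, he1e1]
    rw [hεη]; module
  have r2 : ∀ v ∈ D2s lam1 e1 K, ∀ u ∈ D2s lam1 e1 K,
      Rc ε K e1 v u = (-(η ^ 2) * ⟪v, u⟫) • e1 + η • Lf v u := by
    intro v hv u hu
    have h1 : K v u = (lam1 / 2 * ⟪v, u⟫) • e1 + Lf v u := hKL v u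
    simp only [Rc, h1, map_add, map_smul, hKe1e1, hKe1D2 u hu,
      hKe1D3 _ (hLmem v hv u hu), he1D2 u hu]
    rw [hεη, hμη]; module
  have r3 : ∀ v ∈ D2s lam1 e1 K, ∀ w ∈ D3s μ e1 K, Rc ε K e1 v w = (-η) • K v w := by
    intro v hv w hw
    have h2 : ⟪v, w⟫ = 0 := hD2D3 v hv w hw
    have h3 : ⟪e1, w⟫ = 0 := he1D3 w hw
    have h4 : K e1 (K v w) = (lam1 / 2) • K v w := hKe1D2 _ (hKD2 v hv w hw)
    simp only [Rc, h2, h3, hKe1D3 w hw, map_smul, h4]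
    rw [hμη]; module
  -- the fundamental cubic identity (star)
  have hstar : ∀ v ∈ D2s lam1 e1 K, ∀ u ∈ D2s lam1 e1 K, ∀ u' ∈ D2s lam1 e1 K,
      K v (Lf u u') + K u' (Lf v u) + K u (Lf v u') =
        (lam1 * η / 2) • (⟪u, u'⟫ • v + ⟪v, u⟫ • u' + ⟪v, u'⟫ • u) := by
    intro v hv u hu u' hu'
    have hKue1 : K u e1 = (lam1 / 2) • u := by rw [hKsymm]; exact hKe1D2 u hu
    have h := hpar e1 v u u'
    rw [hKL u u', hRlin, r1 v hv, r3 v hv _ (hLmem u hu u' hu'), r2 v hv u hu,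
      r2 v hv u' hu'] at h
    simp only [map_add, map_smul, LinearMap.add_apply, LinearMap.smul_apply,
      hKe1D2 u' hu', hKue1, hKsymm (Lf v u) u'] at h
    apply hcancel
    exact lc h.symm (by module)
  -- Gram identity
  have hgram : ∀ b ∈ D2s lam1 e1 K, ∀ c ∈ D2s lam1 e1 K, ∀ a d : V,
      ⟪K a (Lf b c), d⟫ = ⟪Lf a d, Lf b c⟫ := by
    intro b hb c hc a d
    have h1 : ⟪K a (Lf b c), d⟫ = ⟪K a d, Lf b c⟫ := hKcub a (Lf b c) d
    rw [h1, hKL a d, inner_add_left, real_inner_smul_left, he1D3 _ (hLmem b hb c hc)]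
    ring
  have icomm : ∀ x y : V, ⟪x, y⟫ = ⟪y, x⟫ := fun x y => real_inner_comm y x
  -- generalized linear-combination helpers
  have lcs2 : ∀ (r s : ℝ) {A B C D E F : V}, C = D → E = F →
      A - B = r • (C - D) + s • (E - F) → A = B := by
    intro r s A B C D E F h h' h2
    have h3 : A - B = 0 := by rw [h2, h, h', sub_self, sub_self, smul_zero, smul_zero, add_zero]
    exact sub_eq_zero.1 h3
  have lcs4 : ∀ (r s t p : ℝ) {A B C1 D1 C2 D2 C3 D3 C4 D4 : V},
      C1 = D1 → C2 = D2 → C3 = D3 → C4 = D4 →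
      A - B = r • (C1 - D1) + s • (C2 - D2) + t • (C3 - D3) + p • (C4 - D4) → A = B := by
    intro r s t p A B C1 D1 C2 D2 C3 D3 C4 D4 h1 h2 h3 h4 h5
    have h6 : A - B = 0 := by
      rw [h5, h1, h2, h3, h4, sub_self, sub_self, sub_self, sub_self,
        smul_zero, smul_zero, smul_zero, smul_zero, add_zero, add_zero, add_zero]
    exact sub_eq_zero.1 h6
  -- star specializations
  have star0 : ∀ v ∈ D2s lam1 e1 K, ‖v‖ = 1 → K v (Lf v v) = (lam1 * η / 2) • v := by
    intro v hv hv1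
    have hvv : ⟪v, v⟫ = (1 : ℝ) := by rw [real_inner_self_eq_norm_sq, hv1]; norm_num
    have h := hstar v hv v hv v hv
    rw [hvv] at h
    exact lcs2 (1/3 : ℝ) 0 h h (by module)
  have star1 : ∀ v ∈ D2s lam1 e1 K, ‖v‖ = 1 → ∀ u ∈ D2s lam1 e1 K, ⟪v, u⟫ = 0 →
      K u (Lf v v) = (lam1 * η / 2) • u - (2 : ℝ) • K v (Lf v u) := by
    intro v hv hv1 u hu hvu
    have hvv : ⟪v, v⟫ = (1 : ℝ) := by rw [real_inner_self_eq_norm_sq, hv1]; norm_num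
    have h := hstar v hv v hv u hu
    rw [hvv, hvu] at h
    exact lc h (by module)
  -- star2
  have star2 : ∀ v ∈ D2s lam1 e1 K, ‖v‖ = 1 → ∀ w ∈ D3s μ e1 K,
      (2 : ℝ) • Lf v (K v w) = (-(η * μ)) • w + K (Lf v v) w - (μ * ⟪Lf v v, w⟫) • e1 := by
    intro v hv hv1 w hw
    have hvv : ⟪v, v⟫ = (1 : ℝ) := by rw [real_inner_self_eq_norm_sq, hv1]; norm_num
    have hc : ⟪v, K v w⟫ = ⟪Lf v v, w⟫ := by
      rw [icomm v (K v w), hKcub v w v, hKL v v, inner_add_left,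
        real_inner_smul_left, he1D3 w hw]
      ring
    have h := hpar e1 v v w
    rw [r2 v hv v hv, r3 v hv w hw,
      r2 v hv (K v w) (hKD2 v hv w hw)] at h
    simp only [map_add, map_smul, LinearMap.add_apply, LinearMap.smul_apply,
      hKe1D3 w hw] at h
    rw [hKL v (K v w)] at h
    rw [hc, hvv] at h
    apply hcancel
    exact lc h (by rw [hμη]; module)
  -- S maps D3 x D3 into D3
  have hSD3 : ∀ w1 ∈ D3s μ e1 K, ∀ w2 ∈ D3s μ e1 K,
      K w1 w2 - (μ * ⟪w1, w2⟫) • e1 ∈ D3s μ e1 K := by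
    intro w1 hw1 w2 hw2
    apply hresid
    · rw [inner_sub_right, real_inner_smul_right, he1e1, icomm e1 (K w1 w2), hKcub w1 w2 e1,
        hKsymm w1 e1, hKe1D3 w1 hw1, real_inner_smul_left]
      ring
    · intro y hy
      have h1 : ⟪K w1 w2, y⟫ = 0 := by
        rw [hKcub w1 w2 y, hKsymm w1 y]
        exact hD2D3 (K y w1) (hKD2 y hy w1 hw1) w2 hw2
      rw [inner_sub_right, real_inner_smul_right, icomm y (K w1 w2), h1,
        icomm y e1, he1D2 y hy]
      ring
  -- star3
  have star3 : ∀ v ∈ D2s lam1 e1 K, ∀ w1 ∈ D3s μ e1 K, ∀ w2 ∈ D3s μ e1 K,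
      K v (K w1 w2 - (μ * ⟪w1, w2⟫) • e1) =
        (μ * η * ⟪w1, w2⟫) • v + K (K v w1) w2 + K w1 (K v w2) := by
    intro v hv w1 hw1 w2 hw2
    have h := hpar e1 v w1 w2
    rw [r3 v hv w1 hw1, r3 v hv w2 hw2] at h
    rw [show K w1 w2 = (μ * ⟪w1, w2⟫) • e1 + (K w1 w2 - (μ * ⟪w1, w2⟫) • e1) by module] at h
    rw [hRlin, r1 v hv, r3 v hv _ (hSD3 w1 hw1 w2 hw2)] at h
    simp only [map_smul, LinearMap.smul_apply] at h
    apply hcancel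
    exact lcs2 (-1 : ℝ) 0 h h (by module)
  -- the core spectral identity : P_v^2 = tau P_v on D2 cap v-perp
  have core : ∀ v ∈ D2s lam1 e1 K, ‖v‖ = 1 → ∀ u ∈ D2s lam1 e1 K, ⟪v, u⟫ = 0 →
      K v (Lf v (K v (Lf v u))) = τ • K v (Lf v u) := by
    intro v hv hv1 u hu hvu
    have hw' : Lf v u ∈ D3s μ e1 K := hLmem v hv u hu
    have hPu : K v (Lf v u) ∈ D2s lam1 e1 K := hKD2 v hv _ hw'
    have c0 : ⟪Lf v v, Lf v u⟫ = 0 := by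
      have h1 := hgram v hv v hv v u
      rw [star0 v hv hv1, real_inner_smul_left, hvu] at h1
      rw [icomm (Lf v v) (Lf v u), ← h1]
      ring
    have hPuv : ⟪v, K v (Lf v u)⟫ = 0 := by
      rw [icomm v (K v (Lf v u)), hgram v hv u hu v v, icomm (Lf v v) (Lf v u)] at *
      exact c0
    have h1 := star2 v hv hv1 (Lf v u) hw'
    have h1' := congrArg (K v) h1
    simp only [map_add, map_smul, map_sub] at h1'
    have h2 := star3 v hv (Lf v v) (hLmem v hv v hv) (Lf v u) hw'
    rw [map_sub (K v), map_smul (K v)] at h2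
    have h3 : K (Lf v v) (K v (Lf v u)) =
        (lam1 * η / 2) • K v (Lf v u) - (2 : ℝ) • K v (Lf v (K v (Lf v u))) := by
      rw [hKsymm (Lf v v) (K v (Lf v u))]
      exact star1 v hv hv1 _ hPu hPuv
    have h4 : K (K v (Lf v v)) (Lf v u) = (lam1 * η / 2) • K v (Lf v u) := by
      rw [star0 v hv hv1, map_smul, LinearMap.smul_apply]
    refine lcs4 (1/4) (1/4) (1/4) (1/4) h1' h2 h3 h4 ?_
    rw [c0, hμη, hτη]
    module
  -- Pop unfolding
  have hPop : ∀ v x : V, Pop lam1 e1 K v x = K v (Lf v x) := by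
    intro v x
    rw [hLfdef]
    simp [Pop, Lop, LinearMap.comp_apply, LinearMap.sub_apply, LinearMap.smul_apply,
      LinearMap.toSpanSingleton_apply, ContinuousLinearMap.coe_coe, innerSL_apply_apply, smul_smul]
  have memVv : ∀ (v : V) (c : ℝ) (x : V), x ∈ Vvs lam1 c e1 K v ↔
      x ∈ D2s lam1 e1 K ∧ ⟪v, x⟫ = 0 ∧ K v (Lf v x) = c • x := by
    intro v c x
    rw [Vvs]
    simp [Submodule.mem_inf, Submodule.mem_orthogonal_singleton_iff_inner_right,
      Module.End.mem_eigenspace_iff, hPop, and_assoc]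
  -- Gram/self-adjointness facts
  have hPgram : ∀ v ∈ D2s lam1 e1 K, ∀ x ∈ D2s lam1 e1 K, ∀ y : V,
      ⟪K v (Lf v x), y⟫ = ⟪Lf v y, Lf v x⟫ := fun v hv x hx y => hgram v hv x hx v y
  have hPself : ∀ v ∈ D2s lam1 e1 K, ∀ x ∈ D2s lam1 e1 K, ∀ y ∈ D2s lam1 e1 K,
      ⟪K v (Lf v x), y⟫ = ⟪K v (Lf v y), x⟫ := by
    intro v hv x hx y hy
    rw [hPgram v hv x hx y, hPgram v hv y hy x, icomm (Lf v y) (Lf v x)]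
  have hPvinner : ∀ v ∈ D2s lam1 e1 K, ‖v‖ = 1 → ∀ x ∈ D2s lam1 e1 K,
      ⟪K v (Lf v x), v⟫ = lam1 * η / 2 * ⟪v, x⟫ := by
    intro v hv hv1 x hx
    rw [hPgram v hv x hx v, icomm (Lf v v) (Lf v x), ← hgram v hv v hv v x,
      star0 v hv hv1, real_inner_smul_left]
  -- linearity of Lf in the second argument
  have hLsmul : ∀ (v y : V) (a : ℝ), Lf v (a • y) = a • Lf v y := by
    intro v y a; rw [hLfdef]
    simp only [Lop, real_inner_smul_right, map_smul]
    module
  have hLsub : ∀ v x y : V, Lf v (x - y) = Lf v x - Lf v y := by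
    intro v x y; rw [hLfdef]
    simp only [Lop, inner_sub_right, map_sub]
    module
  have hLadd : ∀ v x y : V, Lf v (x + y) = Lf v x + Lf v y := by
    intro v x y; rw [hLfdef]
    simp only [Lop, inner_add_right, map_add]
    module
  -- spectral decomposition within D2 cap v-perp
  have hdecomp : ∀ v ∈ D2s lam1 e1 K, ‖v‖ = 1 → ∀ x ∈ D2s lam1 e1 K, ⟪v, x⟫ = 0 →
      x - τ⁻¹ • K v (Lf v x) ∈ Vvs lam1 0 e1 K v ∧
        τ⁻¹ • K v (Lf v x) ∈ Vvs lam1 τ e1 K v := by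
    intro v hv hv1 x hx hvx
    have hPx : K v (Lf v x) ∈ D2s lam1 e1 K := hKD2 v hv _ (hLmem v hv x hx)
    have hPxv : ⟪v, K v (Lf v x)⟫ = 0 := by
      rw [icomm v (K v (Lf v x)), hPvinner v hv hv1 x hx, hvx]; ring
    have hcore := core v hv hv1 x hx hvx
    constructor
    · rw [memVv]
      refine ⟨Submodule.sub_mem _ hx (Submodule.smul_mem _ _ hPx), ?_, ?_⟩
      · rw [inner_sub_right, real_inner_smul_right, hvx, hPxv]; ring
      · rw [hLsub, hLsmul, map_sub (K v), map_smul (K v), hcore, zero_smul,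
          smul_smul, inv_mul_cancel₀ hτne, one_smul, sub_self]
    · rw [memVv]
      refine ⟨Submodule.smul_mem _ _ hPx, ?_, ?_⟩
      · rw [real_inner_smul_right, hPxv]; ring
      · rw [hLsmul, map_smul (K v), hcore, smul_smul, smul_smul, inv_mul_cancel₀ hτne,
          mul_inv_cancel₀ hτne, one_smul]
  -- orthogonality of the 0- and tau-eigenspaces
  have eigOrth : ∀ v ∈ D2s lam1 e1 K, ∀ x ∈ Vvs lam1 0 e1 K v, ∀ y ∈ Vvs lam1 τ e1 K v,
      ⟪x, y⟫ = 0 := by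
    intro v hv x hx y hy
    obtain ⟨hxD, hvx, hx0⟩ := (memVv _ _ _).1 hx
    obtain ⟨hyD, hvy, hyτ⟩ := (memVv _ _ _).1 hy
    have h1 : ⟪K v (Lf v y), x⟫ = ⟪K v (Lf v x), y⟫ := hPself v hv y hyD x hxD
    rw [hyτ, real_inner_smul_left, hx0, zero_smul, inner_zero_left] at h1
    rcases mul_eq_zero.1 h1 with h | h
    · exact absurd h hτne
    · rw [icomm x y]; exact h
  -- Lemma (i): tau-relatedness is symmetric
  have lemH : ∀ v ∈ D2s lam1 e1 K, ‖v‖ = 1 → ∀ u ∈ D2s lam1 e1 K, ‖u‖ = 1 →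
      ⟪v, u⟫ = 0 → K v (Lf v u) = τ • u → K u (Lf u v) = τ • v := by
    intro v hv hv1 u hu hu1 hvu hP
    have huv : ⟪u, v⟫ = 0 := by rw [icomm u v]; exact hvu
    have huu : ⟪u, u⟫ = (1 : ℝ) := by rw [real_inner_self_eq_norm_sq, hu1]; norm_num
    have hPD : K u (Lf u v) ∈ D2s lam1 e1 K := hKD2 u hu _ (hLmem u hu v hv)
    have h1 : ⟪K u (Lf u v), v⟫ = τ := by
      rw [hPgram u hu v hv v, hLsymm u v, ← hPgram v hv u hu u, hP,
        real_inner_smul_left, huu]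
      ring
    have h2 : ⟪K u (Lf u v), K u (Lf u v)⟫ = τ * τ := by
      rw [hPself u hu v hv (K u (Lf u v)) hPD, core u hu hu1 v hv huv,
        real_inner_smul_left, h1]
    have hy : ⟪K u (Lf u v) - τ • v, K u (Lf u v) - τ • v⟫ = 0 := by
      rw [inner_sub_left, inner_sub_right, inner_sub_right, real_inner_smul_left,
        real_inner_smul_left, real_inner_smul_right, real_inner_smul_right, h2, h1,
        icomm v (K u (Lf u v)), h1, real_inner_self_eq_norm_sq, hv1]
      ring
    have h3 := inner_self_eq_zero.1 hy
    rw [sub_eq_zero] at h3; exact h3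
  have hR0 : ∀ X Y : V, Rc ε K X Y 0 = 0 := by
    intro X Y; simp [Rc]
  -- Lemma (ii): if u is tau-related to v, vectors killed by P_u are tau-eigenvectors of P_v
  have lemI : ∀ v ∈ D2s lam1 e1 K, ‖v‖ = 1 → ∀ u ∈ D2s lam1 e1 K, ‖u‖ = 1 →
      ⟪v, u⟫ = 0 → K v (Lf v u) = τ • u →
      ∀ z ∈ D2s lam1 e1 K, ⟪u, z⟫ = 0 → K u (Lf u z) = 0 →
      ⟪v, z⟫ = 0 ∧ K v (Lf v z) = τ • z := by
    intro v hv hv1 u hu hu1 hvu hP z hz huz hz0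
    have huv : ⟪u, v⟫ = 0 := by rw [icomm u v]; exact hvu
    have huu : ⟪u, u⟫ = (1 : ℝ) := by rw [real_inner_self_eq_norm_sq, hu1]; norm_num
    have hPu : K u (Lf u v) = τ • v := lemH v hv hv1 u hu hu1 hvu hP
    have hLuz : Lf u z = 0 := by
      have h1 : ⟪Lf u z, Lf u z⟫ = 0 := by
        rw [← hPgram u hu z hz z, hz0, inner_zero_left]
      exact inner_self_eq_zero.1 h1
    have hKuz : K u z = 0 := by
      rw [hKL u z, huz, hLuz]; simp
    have hvz : ⟪v, z⟫ = 0 := by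
      have h1 : ⟪K u (Lf u z), v⟫ = ⟪K u (Lf u v), z⟫ := hPself u hu z hz v hv
      rw [hz0, inner_zero_left, hPu, real_inner_smul_left] at h1
      rcases mul_eq_zero.1 h1.symm with h | h
      · exact absurd h hτne
      · exact h
    refine ⟨hvz, ?_⟩
    have hzu : ⟪z, u⟫ = 0 := by rw [icomm z u]; exact huz
    have hzv : ⟪z, v⟫ = 0 := by rw [icomm z v]; exact hvz
    have hKzu : K z u = 0 := by rw [hKsymm z u]; exact hKuz
    have hwD3 : Lf v z ∈ D3s μ e1 K := hLmem v hv z hz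
    have hwuD3 : Lf v u ∈ D3s μ e1 K := hLmem v hv u hu
    have hKve1 : K v e1 = (lam1 / 2) • v := by rw [hKsymm]; exact hKe1D2 v hv
    have hKue1 : K u e1 = (lam1 / 2) • u := by rw [hKsymm]; exact hKe1D2 u hu
    have hKze1 : K z e1 = (lam1 / 2) • z := by rw [hKsymm]; exact hKe1D2 z hz
    -- star instances
    have SA : K v (Lf z z) = (lam1 * η / 2 * ⟪z, z⟫) • v - (2 : ℝ) • K z (Lf v z) := by
      have h := hstar v hv z hz z hz
      rw [hvz] at h
      exact lc h (by module)
    have SB : K u (Lf z z) = (lam1 * η / 2 * ⟪z, z⟫) • u := by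
      have h := hstar u hu z hz z hz
      rw [huz, hLuz, map_zero] at h
      exact lc h (by module)
    have ST : K u (Lf v z) = - K z (Lf v u) := by
      have h := hstar v hv u hu z hz
      rw [huz, hvu, hvz, hLuz, map_zero] at h
      exact lc h (by module)
    -- curvature images
    have RA : Rc ε K v z u = K z (Lf v u) := by
      simp only [Rc, hKzu, map_zero, hKL v u, map_add, map_smul]
      rw [hzu, hvu, hKze1]
      module
    have RB : Rc ε K v z z = (-(4 * τ) * ⟪z, z⟫) • v + (3 : ℝ) • K z (Lf v z) := by
      simp only [Rc, hKL z z, hKL v z, map_add, map_smul, SA, hKve1, hKze1]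
      rw [hvz, hεη, hτη]
      module
    have RC : Rc ε K u z v = (2 : ℝ) • K z (Lf v u) := by
      simp only [Rc, hKsymm z v, hKL v z, hKL u v, map_add, map_smul, ST, hKue1, hKze1,
        hLsymm u v]
      rw [hzv, huv, hvz]
      module
    have RD : Rc ε K u z z = (-(4 * τ) * ⟪z, z⟫) • u := by
      simp only [Rc, hKuz, map_zero, hKL z z, map_add, map_smul, hKue1, SB]
      rw [huz, hεη, hτη]
      module
    have RE : Rc ε K u z (Lf v z) = - K u (K z (Lf v z)) - K z (K z (Lf v u)) := by
      simp only [Rc, hD2D3 z hz _ hwD3, hD2D3 u hu _ hwD3, ST, map_neg]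
      module
    have R1 : K z (K z (Lf v u)) + (3 : ℝ) • K u (K z (Lf v z)) =
        (4 * τ * ⟪z, z⟫) • Lf v u := by
      have h := hpar v z u z
      rw [hKuz, hR0, RA, RB] at h
      simp only [map_add, map_smul, LinearMap.add_apply, LinearMap.smul_apply,
        hKsymm (K z (Lf v u)) z, hKL u v, hLsymm u v] at h
      rw [huv] at h
      exact lc h.symm (by module)
    have R3 : (3 : ℝ) • K z (K z (Lf v u)) + K u (K z (Lf v z)) =
        (4 * τ * ⟪z, z⟫) • Lf v u := by
      have h := hpar u z v z
      rw [hKL v z, hRlin, RE, RC, RD] at h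
      simp only [map_add, map_smul, LinearMap.add_apply, LinearMap.smul_apply,
        hKsymm (K z (Lf v u)) z, hKL v u] at h
      rw [hvu, hvz] at h
      exact lc h.symm (by module)
    have keyT : K z (K z (Lf v u)) = (τ * ⟪z, z⟫) • Lf v u :=
      lcs2 (-1/8 : ℝ) (3/8 : ℝ) R1 R3 (by module)
    have hww : ⟪Lf v u, Lf v u⟫ = τ := by
      rw [← hPgram v hv u hu u, hP, real_inner_smul_left, huu]; ring
    have hA3w : ⟪K u (K z (Lf v z)), Lf v u⟫ = τ * ⟪Lf v z, Lf v z⟫ := by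
      rw [hKcub u (K z (Lf v z)) (Lf v u), hLsymm v u, hPu, real_inner_smul_left,
        icomm v (K z (Lf v z)), hKcub z (Lf v z) v, hKsymm z v, hKL v z, hvz,
        inner_add_left, real_inner_smul_left, he1D3 _ hwD3]
      ring
    have hpairR1 := congrArg (fun t : V => ⟪t, Lf v u⟫) R1
    simp only [inner_add_left, real_inner_smul_left] at hpairR1
    rw [keyT, real_inner_smul_left, hww, hA3w] at hpairR1
    have hnormw : ⟪Lf v z, Lf v z⟫ = τ * ⟪z, z⟫ := by
      have h9 : τ * ⟪Lf v z, Lf v z⟫ = τ * (τ * ⟪z, z⟫) := by linarith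
      exact mul_left_cancel₀ hτne h9
    have hPzz : ⟪K v (Lf v z), z⟫ = τ * ⟪z, z⟫ := by
      rw [hPgram v hv z hz z, hnormw]
    have hPzD : K v (Lf v z) ∈ D2s lam1 e1 K := hKD2 v hv _ hwD3
    have hPP : ⟪K v (Lf v z), K v (Lf v z)⟫ = τ * (τ * ⟪z, z⟫) := by
      rw [hPself v hv z hz _ hPzD, core v hv hv1 z hz hvz, real_inner_smul_left, hPzz]
    have hyy : ⟪K v (Lf v z) - τ • z, K v (Lf v z) - τ • z⟫ = 0 := by
      simp only [inner_sub_left, inner_sub_right, real_inner_smul_left, real_inner_smul_right]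
      rw [hPP, hPzz, icomm z (K v (Lf v z)), hPzz]
      ring
    have h3 := inner_self_eq_zero.1 hyy
    rw [sub_eq_zero] at h3; exact h3
  -- assembly helpers
  have hVle : ∀ w : V, Vvs lam1 0 e1 K w ≤ D2s lam1 e1 K := by
    intro w x hx; exact ((memVv w 0 x).1 hx).1
  have hClle : ∀ w ∈ D2s lam1 e1 K, (ℝ ∙ w) ⊔ Vvs lam1 0 e1 K w ≤ D2s lam1 e1 K := by
    intro w hw
    refine sup_le ?_ (hVle w)
    rw [Submodule.span_singleton_le_iff_mem]; exact hw
  have hClmem : ∀ (w x : V), x ∈ (ℝ ∙ w) ⊔ Vvs lam1 0 e1 K w ↔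
      ∃ a : ℝ, ∃ z ∈ Vvs lam1 0 e1 K w, x = a • w + z := by
    intro w x
    rw [Submodule.mem_sup]
    constructor
    · rintro ⟨y, hy, z, hz, hsum⟩
      rcases Submodule.mem_span_singleton.1 hy with ⟨a, rfl⟩
      exact ⟨a, z, hz, hsum.symm⟩
    · rintro ⟨a, z, hz, rfl⟩
      exact ⟨a • w, Submodule.mem_span_singleton.2 ⟨a, rfl⟩, z, hz, rfl⟩
  have hres : ∀ v ∈ D2s lam1 e1 K, ‖v‖ = 1 → ∀ x ∈ D2s lam1 e1 K, ⟪v, x⟫ = 0 →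
      (∀ y ∈ Vvs lam1 0 e1 K v, ⟪y, x⟫ = 0) → x ∈ Vvs lam1 τ e1 K v := by
    intro v hv hv1 x hx hvx hyx
    obtain ⟨h0, hτm⟩ := hdecomp v hv hv1 x hx hvx
    have h1 : ⟪x - τ⁻¹ • K v (Lf v x), x - τ⁻¹ • K v (Lf v x)⟫ = 0 := by
      rw [inner_sub_right, hyx _ h0, eigOrth v hv _ h0 _ hτm]
      ring
    have h2 := inner_self_eq_zero.1 h1
    rw [sub_eq_zero] at h2
    rw [h2]; exact hτm
  have hnewOrth : ∀ v ∈ D2s lam1 e1 K, ‖v‖ = 1 → ∀ u ∈ D2s lam1 e1 K, ‖u‖ = 1 →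
      u ∈ Vvs lam1 τ e1 K v → (∀ y ∈ Vvs lam1 0 e1 K v, ⟪y, u⟫ = 0) →
      ∀ x ∈ (ℝ ∙ v) ⊔ Vvs lam1 0 e1 K v, ∀ y ∈ (ℝ ∙ u) ⊔ Vvs lam1 0 e1 K u,
        ⟪x, y⟫ = 0 := by
    intro v hv hv1 u hu hu1 huτ hV0u x hx y hy
    obtain ⟨huD, hvu', hτeq⟩ := (memVv v τ u).1 huτ
    rcases (hClmem v x).1 hx with ⟨a, zx, hzx, rfl⟩
    rcases (hClmem u y).1 hy with ⟨b, zy, hzy, rfl⟩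
    obtain ⟨hzyD, huzy, hzy0⟩ := (memVv u 0 zy).1 hzy
    have hzy0' : K u (Lf u zy) = 0 := by rw [hzy0, zero_smul]
    obtain ⟨hvzy, hzyτ⟩ := lemI v hv hv1 u hu hu1 hvu' hτeq zy hzyD huzy hzy0'
    have hzyVτ : zy ∈ Vvs lam1 τ e1 K v := (memVv v τ zy).2 ⟨hzyD, hvzy, hzyτ⟩
    simp only [inner_add_left, inner_add_right, real_inner_smul_left, real_inner_smul_right]
    rw [hvu', hvzy, hV0u zx hzx, eigOrth v hv zx hzx zy hzyVτ]
    ring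
  -- finishing lemma
  have hfinish : ∀ (k : ℕ) (vv : Fin k → V),
      (∀ j, ‖vv j‖ = 1 ∧ vv j ∈ D2s lam1 e1 K) →
      D2s lam1 e1 K ⊓ (⨆ j, (ℝ ∙ vv j) ⊔ Vvs lam1 0 e1 K (vv j))ᗮ = ⊥ →
      (⨆ j, (ℝ ∙ vv j) ⊔ Vvs lam1 0 e1 K (vv j)) = D2s lam1 e1 K := by
    intro k vv hunit hbot
    have hCsle : (⨆ j, (ℝ ∙ vv j) ⊔ Vvs lam1 0 e1 K (vv j)) ≤ D2s lam1 e1 K :=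
      iSup_le fun j => hClle (vv j) (hunit j).2
    have hds := Submodule.sup_orthogonal_inf_of_hasOrthogonalProjection hCsle
    rw [← hds, show (⨆ j, (ℝ ∙ vv j) ⊔ Vvs lam1 0 e1 K (vv j))ᗮ ⊓ D2s lam1 e1 K = ⊥ from
      by rw [inf_comm]; exact hbot]
    exact (sup_bot_eq _).symm
  -- the main induction
  have main : ∀ (N k : ℕ) (vv : Fin k → V),
      (∀ j, ‖vv j‖ = 1 ∧ vv j ∈ D2s lam1 e1 K) →
      (∀ j l, j ≠ l → vv l ∈ Vvs lam1 τ e1 K (vv j)) →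
      (∀ j l, j ≠ l → ∀ x ∈ (ℝ ∙ vv j) ⊔ Vvs lam1 0 e1 K (vv j),
        ∀ y ∈ (ℝ ∙ vv l) ⊔ Vvs lam1 0 e1 K (vv l), ⟪x, y⟫ = 0) →
      finrank ℝ ↥(D2s lam1 e1 K ⊓ (⨆ j, (ℝ ∙ vv j) ⊔ Vvs lam1 0 e1 K (vv j))ᗮ) ≤ N →
      ∃ (k' : ℕ) (v' : Fin k' → V), k ≤ k' ∧
        (∀ j, ‖v' j‖ = 1 ∧ v' j ∈ D2s lam1 e1 K) ∧
        (∀ j l, j ≠ l → ∀ x ∈ (ℝ ∙ v' j) ⊔ Vvs lam1 0 e1 K (v' j),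
          ∀ y ∈ (ℝ ∙ v' l) ⊔ Vvs lam1 0 e1 K (v' l), ⟪x, y⟫ = 0) ∧
        (⨆ j, (ℝ ∙ v' j) ⊔ Vvs lam1 0 e1 K (v' j)) = D2s lam1 e1 K ∧
        (∀ j l, j ≠ l → v' l ∈ Vvs lam1 τ e1 K (v' j)) := by
    intro N
    induction N with
    | zero =>
      intro k vv hunit hτrel horth hrank
      have hbot : D2s lam1 e1 K ⊓ (⨆ j, (ℝ ∙ vv j) ⊔ Vvs lam1 0 e1 K (vv j))ᗮ = ⊥ :=
        Submodule.finrank_eq_zero.1 (Nat.le_zero.1 hrank)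
      exact ⟨k, vv, le_refl k, hunit, horth, hfinish k vv hunit hbot, hτrel⟩
    | succ N ih =>
      intro k vv hunit hτrel horth hrank
      by_cases hbot : D2s lam1 e1 K ⊓ (⨆ j, (ℝ ∙ vv j) ⊔ Vvs lam1 0 e1 K (vv j))ᗮ = ⊥
      · exact ⟨k, vv, le_refl k, hunit, horth, hfinish k vv hunit hbot, hτrel⟩
      · obtain ⟨u0, hu0R, hu0ne⟩ := Submodule.exists_mem_ne_zero_of_ne_bot hbot
        set u1 : V := ‖u0‖⁻¹ • u0 with hu1def
        have hu1R : u1 ∈ D2s lam1 e1 K ⊓ (⨆ j, (ℝ ∙ vv j) ⊔ Vvs lam1 0 e1 K (vv j))ᗮ :=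
          Submodule.smul_mem _ _ hu0R
        have hu1n : ‖u1‖ = 1 := norm_smul_inv_norm hu0ne
        have hu1D : u1 ∈ D2s lam1 e1 K := hu1R.1
        have hu1O : ∀ y ∈ (⨆ j, (ℝ ∙ vv j) ⊔ Vvs lam1 0 e1 K (vv j)), ⟪y, u1⟫ = 0 :=
          (Submodule.mem_orthogonal _ u1).1 hu1R.2
        have hClsub : ∀ j, ((ℝ ∙ vv j) ⊔ Vvs lam1 0 e1 K (vv j)) ≤
            (⨆ j, (ℝ ∙ vv j) ⊔ Vvs lam1 0 e1 K (vv j)) := fun j =>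
          le_iSup (fun j => (ℝ ∙ vv j) ⊔ Vvs lam1 0 e1 K (vv j)) j
        have hu1vj : ∀ j, ⟪vv j, u1⟫ = 0 := fun j =>
          hu1O _ (hClsub j (Submodule.mem_sup_left (Submodule.mem_span_singleton_self _)))
        have hu1V0 : ∀ j, ∀ y ∈ Vvs lam1 0 e1 K (vv j), ⟪y, u1⟫ = 0 := fun j y hy =>
          hu1O _ (hClsub j (Submodule.mem_sup_right hy))
        have hu1τ : ∀ j, u1 ∈ Vvs lam1 τ e1 K (vv j) := fun j =>
          hres (vv j) (hunit j).2 (hunit j).1 u1 hu1D (hu1vj j) (hu1V0 j)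
        have hvjτ : ∀ j, vv j ∈ Vvs lam1 τ e1 K u1 := by
          intro j
          obtain ⟨_, hvu', hτeq⟩ := (memVv (vv j) τ u1).1 (hu1τ j)
          refine (memVv u1 τ (vv j)).2 ⟨(hunit j).2, ?_, ?_⟩
          · rw [icomm u1 (vv j)]; exact hvu'
          · exact lemH (vv j) (hunit j).2 (hunit j).1 u1 hu1D hu1n hvu' hτeq
        set vv' : Fin (k+1) → V := Fin.snoc vv u1 with hvv'
        have hv'c : ∀ j : Fin k, vv' (Fin.castSucc j) = vv j := fun j => Fin.snoc_castSucc ..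
        have hv'l : vv' (Fin.last k) = u1 := Fin.snoc_last ..
        have hunit' : ∀ j, ‖vv' j‖ = 1 ∧ vv' j ∈ D2s lam1 e1 K := by
          intro j
          rcases Fin.eq_castSucc_or_eq_last j with ⟨i, rfl⟩ | rfl
          · rw [hv'c]; exact hunit i
          · rw [hv'l]; exact ⟨hu1n, hu1D⟩
        have hτrel' : ∀ j l, j ≠ l → vv' l ∈ Vvs lam1 τ e1 K (vv' j) := by
          intro j l hjl
          rcases Fin.eq_castSucc_or_eq_last j with ⟨i, rfl⟩ | rfl <;>
            rcases Fin.eq_castSucc_or_eq_last l with ⟨i', rfl⟩ | rfl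
          · rw [hv'c, hv'c]
            exact hτrel i i' fun h => hjl (congrArg Fin.castSucc h)
          · rw [hv'c, hv'l]; exact hu1τ i
          · rw [hv'c, hv'l]; exact hvjτ i'
          · exact absurd rfl hjl
        have horth' : ∀ j l, j ≠ l → ∀ x ∈ (ℝ ∙ vv' j) ⊔ Vvs lam1 0 e1 K (vv' j),
            ∀ y ∈ (ℝ ∙ vv' l) ⊔ Vvs lam1 0 e1 K (vv' l), ⟪x, y⟫ = 0 := by
          intro j l hjl
          rcases Fin.eq_castSucc_or_eq_last j with ⟨i, rfl⟩ | rfl <;>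
            rcases Fin.eq_castSucc_or_eq_last l with ⟨i', rfl⟩ | rfl
          · rw [hv'c, hv'c]
            exact horth i i' fun h => hjl (congrArg Fin.castSucc h)
          · rw [hv'c, hv'l]
            exact hnewOrth (vv i) (hunit i).2 (hunit i).1 u1 hu1D hu1n (hu1τ i) (hu1V0 i)
          · rw [hv'c, hv'l]
            intro x hx y hy
            rw [icomm]
            exact hnewOrth (vv i') (hunit i').2 (hunit i').1 u1 hu1D hu1n (hu1τ i')
              (hu1V0 i') y hy x hx
          · exact absurd rfl hjl
        have hCs'ge : (⨆ j, (ℝ ∙ vv j) ⊔ Vvs lam1 0 e1 K (vv j)) ≤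
            (⨆ j, (ℝ ∙ vv' j) ⊔ Vvs lam1 0 e1 K (vv' j)) := by
          refine iSup_le fun j => ?_
          have h5 := le_iSup (fun j => (ℝ ∙ vv' j) ⊔ Vvs lam1 0 e1 K (vv' j)) (Fin.castSucc j)
          rw [hv'c] at h5
          exact h5
        have hRle : D2s lam1 e1 K ⊓ (⨆ j, (ℝ ∙ vv' j) ⊔ Vvs lam1 0 e1 K (vv' j))ᗮ ≤
            D2s lam1 e1 K ⊓ (⨆ j, (ℝ ∙ vv j) ⊔ Vvs lam1 0 e1 K (vv j))ᗮ :=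
          inf_le_inf_left _ (Submodule.orthogonal_le hCs'ge)
        have hu1notin : u1 ∉ D2s lam1 e1 K ⊓ (⨆ j, (ℝ ∙ vv' j) ⊔ Vvs lam1 0 e1 K (vv' j))ᗮ := by
          intro hmem
          have h1 : u1 ∈ (⨆ j, (ℝ ∙ vv' j) ⊔ Vvs lam1 0 e1 K (vv' j)) := by
            have h6 := le_iSup (fun j => (ℝ ∙ vv' j) ⊔ Vvs lam1 0 e1 K (vv' j)) (Fin.last k)
            rw [hv'l] at h6
            exact h6 (Submodule.mem_sup_left (Submodule.mem_span_singleton_self u1))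
          have h2 := (Submodule.mem_orthogonal _ u1).1 hmem.2 u1 h1
          have h3 : u1 = 0 := inner_self_eq_zero.1 h2
          rw [h3, norm_zero] at hu1n
          exact absurd hu1n (by norm_num)
        have hlt : D2s lam1 e1 K ⊓ (⨆ j, (ℝ ∙ vv' j) ⊔ Vvs lam1 0 e1 K (vv' j))ᗮ <
            D2s lam1 e1 K ⊓ (⨆ j, (ℝ ∙ vv j) ⊔ Vvs lam1 0 e1 K (vv j))ᗮ :=
          lt_of_le_of_ne hRle fun h => hu1notin (h ▸ hu1R)
        have hrank' : finrank ℝ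
            ↥(D2s lam1 e1 K ⊓ (⨆ j, (ℝ ∙ vv' j) ⊔ Vvs lam1 0 e1 K (vv' j))ᗮ) ≤ N := by
          have h7 := Submodule.finrank_lt_finrank_of_lt hlt
          omega
        obtain ⟨k', v', hk, h8, h9, h10, h11⟩ := ih (k+1) vv' hunit' hτrel' horth' hrank'
        exact ⟨k', v', le_trans (Nat.le_succ k) hk, h8, h9, h10, h11⟩
  -- final assembly
  have hD2ne : D2s lam1 e1 K ≠ ⊥ := by
    intro h
    rw [h, finrank_bot] at hdimD2
    omega
  obtain ⟨x0, hx0D, hx0ne⟩ := Submodule.exists_mem_ne_zero_of_ne_bot hD2ne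
  set w1 : V := ‖x0‖⁻¹ • x0 with hw1def
  have hw1D : w1 ∈ D2s lam1 e1 K := Submodule.smul_mem _ _ hx0D
  have hw1n : ‖w1‖ = 1 := norm_smul_inv_norm hx0ne
  obtain ⟨k', v', hk', hu', ho', hs', ht'⟩ :=
    main (finrank ℝ ↥(D2s lam1 e1 K ⊓
        (⨆ _ : Fin 1, (ℝ ∙ w1) ⊔ Vvs lam1 0 e1 K w1)ᗮ)) 1 (fun _ => w1)
      (fun _ => ⟨hw1n, hw1D⟩)
      (fun j l hjl => absurd (Subsingleton.elim j l) hjl)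
      (fun j l hjl => absurd (Subsingleton.elim j l) hjl)
      (le_refl _)
  exact ⟨k', v', hk', hu', ho', hs', ht'⟩









end
end

section
/- Let v_1 ∈ D2 be a unit vector. Then: (i) for any unit vector u_1 ∈ span{v_1} ⊕ V_{v_1}(0) one has span{v_1} ⊕ V_{v_1}(0) = span{u_1} ⊕ V_{u_1}(0); and (ii) for any two orthonormal vectors u_1, ũ_1 ∈ span{v_1} ⊕ V_{v_1}(0) one has L(u_1, ũ_1) = 0. -/
open scoped RealInnerProductSpace
open Module Submodule

noncomputable section

variable {V : Type*} [NormedAddCommGroup V] [InnerProductSpace ℝ V]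

/- ############ auxiliary lemmas ############ -/

lemma pop_apply (lam1 : ℝ) (e1 : V) (K : V →ₗ[ℝ] V →ₗ[ℝ] V) (v x : V) :
    Pop lam1 e1 K v x = K v (Lop lam1 e1 K v x) := by
  simp [Pop, Lop, LinearMap.toSpanSingleton_apply, smul_smul]

lemma memD2 (lam1 : ℝ) (e1 : V) (K : V →ₗ[ℝ] V →ₗ[ℝ] V) (v : V) :
    v ∈ D2s lam1 e1 K ↔ ⟪e1, v⟫ = 0 ∧ K e1 v = (lam1 / 2) • v := by
  rw [D2s, Submodule.mem_inf, Submodule.mem_orthogonal_singleton_iff_inner_right,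
    Module.End.mem_eigenspace_iff]

lemma memD3 (mu : ℝ) (e1 : V) (K : V →ₗ[ℝ] V →ₗ[ℝ] V) (w : V) :
    w ∈ D3s mu e1 K ↔ ⟪e1, w⟫ = 0 ∧ K e1 w = mu • w := by
  rw [D3s, Submodule.mem_inf, Submodule.mem_orthogonal_singleton_iff_inner_right,
    Module.End.mem_eigenspace_iff]

lemma memVvs (lam1 : ℝ) (e1 : V) (K : V →ₗ[ℝ] V →ₗ[ℝ] V) (p z : V) :
    z ∈ Vvs lam1 0 e1 K p ↔
      z ∈ D2s lam1 e1 K ∧ ⟪p, z⟫ = 0 ∧ K p (Lop lam1 e1 K p z) = 0 := by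
  rw [Vvs, Submodule.mem_inf, Submodule.mem_inf,
    Submodule.mem_orthogonal_singleton_iff_inner_right,
    Module.End.mem_eigenspace_iff, pop_apply, zero_smul, and_assoc]

lemma aux_cube_bound (lam1 : ℝ) (K : V →ₗ[ℝ] V →ₗ[ℝ] V)
    (hmax : ∀ u : V, ‖u‖ = 1 → ⟪K u u, u⟫ ≤ lam1) :
    ∀ u : V, ⟪K u u, u⟫ ≤ lam1 * ‖u‖ ^ 3 := by
  intro u
  by_cases hu : u = 0
  · simp [hu]
  · have hr : (0:ℝ) < ‖u‖ := norm_pos_iff.mpr hu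
    have hunit : ‖(‖u‖⁻¹ • u)‖ = 1 := by
      rw [norm_smul, norm_inv, norm_norm, inv_mul_cancel₀ hr.ne']
    have h := hmax _ hunit
    have hexp : ⟪K (‖u‖⁻¹ • u) (‖u‖⁻¹ • u), (‖u‖⁻¹ • u)⟫
        = ‖u‖⁻¹ ^ 3 * ⟪K u u, u⟫ := by
      simp [map_smul, real_inner_smul_left, real_inner_smul_right, LinearMap.smul_apply]
      ring
    rw [hexp] at h
    have h3 : (0:ℝ) < ‖u‖ ^ 3 := by positivity
    calc ⟪K u u, u⟫ = (‖u‖ ^ 3) * (‖u‖⁻¹ ^ 3 * ⟪K u u, u⟫) := by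
          field_simp
      _ ≤ ‖u‖ ^ 3 * lam1 := by nlinarith
      _ = lam1 * ‖u‖ ^ 3 := by ring

set_option maxHeartbeats 2000000 in
lemma aux_orth_le (lam1 : ℝ) (K : V →ₗ[ℝ] V →ₗ[ℝ] V) (e1 : V)
    (he1 : ‖e1‖ = 1) (hlam1 : lam1 = ⟪K e1 e1, e1⟫) (hlam1pos : 0 < lam1)
    (hKsymm : ∀ X Y : V, K X Y = K Y X)
    (hKcub : ∀ X Y Z : V, ⟪K X Y, Z⟫ = ⟪K X Z, Y⟫)
    (hcube : ∀ u : V, ⟪K u u, u⟫ ≤ lam1 * ‖u‖ ^ 3)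
    (w : V) (hw : ⟪e1, w⟫ = 0) (hwu : ‖w‖ = 1) :
    ⟪K e1 e1, w⟫ ≤ 0 := by
  by_contra hpos
  push_neg at hpos
  set a := ⟪K e1 e1, w⟫ with ha
  set b := ⟪K e1 w, w⟫ with hb
  set cc := ⟪K w w, w⟫ with hcc
  set C := 3 * lam1 + 3 * |b| + |cc| with hC
  have hCpos : 0 < C := by positivity
  set t := min 1 (a / (C + 1)) with htdef
  have ht0 : 0 < t := lt_min one_pos (by positivity)
  have ht1 : t ≤ 1 := min_le_left _ _
  have hta : t ≤ a / (C + 1) := min_le_right _ _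
  set u := e1 + t • w with hu
  have hwe : ⟪w, e1⟫ = 0 := by rw [real_inner_comm]; exact hw
  have he11 : ⟪e1, e1⟫ = 1 := by rw [real_inner_self_eq_norm_sq, he1]; norm_num
  have hww : ⟪w, w⟫ = 1 := by rw [real_inner_self_eq_norm_sq, hwu]; norm_num
  have hKwe1w : ⟪K w e1, w⟫ = b := by rw [hKsymm w e1]
  have hKwe1e1 : ⟪K w e1, e1⟫ = a := by rw [hKsymm w e1, hKcub e1 w e1]
  have hKe1we1 : ⟪K e1 w, e1⟫ = a := by rw [hKcub e1 w e1]
  have hKwwe1 : ⟪K w w, e1⟫ = b := by rw [hKcub w w e1, hKsymm w e1]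
  have hKexp : ⟪K u u, u⟫ = lam1 + 3 * a * t + 3 * b * t ^ 2 + cc * t ^ 3 := by
    simp only [hu, map_add, map_smul, LinearMap.add_apply, LinearMap.smul_apply,
      inner_add_left, inner_add_right, real_inner_smul_left, real_inner_smul_right]
    rw [← hlam1, hKwe1w, hKwe1e1, hKe1we1, hKwwe1, ← ha, ← hb, ← hcc]
    ring
  have hnormsq : ‖u‖ ^ 2 = 1 + t ^ 2 := by
    rw [hu, norm_add_sq_real, real_inner_smul_right, hw, norm_smul, he1, hwu]
    simp [abs_of_pos ht0]
    try ring
  have hnle : ‖u‖ ≤ 1 + t ^ 2 := by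
    nlinarith [norm_nonneg u, sq_nonneg t]
  have hn3 : ‖u‖ ^ 3 ≤ (1 + t ^ 2) ^ 2 := by
    have : ‖u‖ ^ 3 = ‖u‖ * ‖u‖ ^ 2 := by ring
    rw [this, hnormsq]
    nlinarith [sq_nonneg t]
  have hmain := (hcube u).trans
    (by nlinarith [hlam1pos.le] : lam1 * ‖u‖ ^ 3 ≤ lam1 * (1 + t ^ 2) ^ 2)
  rw [hKexp] at hmain
  have habs1 : -b ≤ |b| := neg_le_abs b
  have habs2 : -cc ≤ |cc| := neg_le_abs cc
  have expand : lam1 * (1 + t ^ 2) ^ 2 = lam1 + lam1 * 2 * t ^ 2 + lam1 * t ^ 4 := by ring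
  rw [expand] at hmain
  have ht2 : t ^ 2 ≤ 1 := by nlinarith
  have e1t : t ^ 4 ≤ t ^ 2 := by nlinarith [mul_le_mul_of_nonneg_right ht2 (sq_nonneg t)]
  have e2t : t ^ 3 ≤ t ^ 2 := by nlinarith [mul_le_mul_of_nonneg_right ht1 (sq_nonneg t)]
  have hb2 := mul_le_mul_of_nonneg_right habs1 (sq_nonneg t)
  have hc3 := mul_le_mul_of_nonneg_right habs2 (pow_nonneg ht0.le 3)
  have hc32 : |cc| * t ^ 3 ≤ |cc| * t ^ 2 := mul_le_mul_of_nonneg_left e2t (abs_nonneg cc)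
  have hl4 : lam1 * t ^ 4 ≤ lam1 * t ^ 2 := mul_le_mul_of_nonneg_left e1t hlam1pos.le
  have hkey : 3 * a * t ≤ C * t ^ 2 := by rw [hC]; nlinarith
  have h3a : 3 * a ≤ C * t := by
    calc 3 * a = 3 * a * t * t⁻¹ := by field_simp
      _ ≤ C * t ^ 2 * t⁻¹ := by exact mul_le_mul_of_nonneg_right hkey (inv_pos.mpr ht0).le
      _ = C * t := by field_simp
  have hCt : C * t < a := by
    have h1 : C * t ≤ C * (a / (C + 1)) := by nlinarith
    have hfrac : C / (C + 1) < 1 := by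
      rw [div_lt_one (by linarith)]; linarith
    have h2 : C * (a / (C + 1)) < a := by
      calc C * (a / (C + 1)) = a * (C / (C + 1)) := by ring
        _ < a * 1 := by exact mul_lt_mul_of_pos_left hfrac hpos
        _ = a := mul_one a
    exact lt_of_le_of_lt h1 h2
  linarith

lemma aux_Ke1e1 (lam1 : ℝ) (K : V →ₗ[ℝ] V →ₗ[ℝ] V) (e1 : V)
    (he1 : ‖e1‖ = 1) (hlam1 : lam1 = ⟪K e1 e1, e1⟫)
    (horth : ∀ w : V, ⟪e1, w⟫ = 0 → ‖w‖ = 1 → ⟪K e1 e1, w⟫ ≤ 0) :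
    K e1 e1 = lam1 • e1 := by
  set d := K e1 e1 - lam1 • e1 with hd
  have he11 : ⟪e1, e1⟫ = 1 := by rw [real_inner_self_eq_norm_sq, he1]; norm_num
  have hde : ⟪e1, d⟫ = 0 := by
    rw [hd, inner_sub_right, real_inner_smul_right, he11, real_inner_comm, ← hlam1]
    ring
  by_cases hd0 : d = 0
  · exact sub_eq_zero.mp hd0
  · set w := ‖d‖⁻¹ • d with hwdef
    have hdn : (0:ℝ) < ‖d‖ := norm_pos_iff.mpr hd0
    have hwu : ‖w‖ = 1 := by
      rw [hwdef, norm_smul, norm_inv, norm_norm, inv_mul_cancel₀ hdn.ne']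
    have hwe : ⟪e1, w⟫ = 0 := by
      rw [hwdef, real_inner_smul_right, hde, mul_zero]
    have h1 := horth w hwe hwu
    have h2 := horth (-w) (by rw [inner_neg_right, hwe, neg_zero]) (by rw [norm_neg, hwu])
    rw [inner_neg_right] at h2
    have hzero : ⟪K e1 e1, w⟫ = 0 := le_antisymm h1 (by linarith)
    rw [hwdef, real_inner_smul_right] at hzero
    have hKd : ⟪K e1 e1, d⟫ = 0 := by
      rcases mul_eq_zero.mp hzero with h | h
      · exact absurd h (inv_ne_zero hdn.ne')
      · exact h
    have hdd : ⟪d, d⟫ = 0 := by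
      have hexp : ⟪d, d⟫ = ⟪K e1 e1, d⟫ - lam1 * ⟪e1, d⟫ := by
        conv_lhs => rw [hd]
        rw [inner_sub_left, real_inner_smul_left]
      rw [hexp, hKd, hde]; ring
    exact absurd (inner_self_eq_zero.mp hdd) hd0

lemma aux_master {ε lam1 η μ : ℝ} {K : V →ₗ[ℝ] V →ₗ[ℝ] V} {e1 : V}
    (hKsymm : ∀ X Y : V, K X Y = K Y X)
    (hKcub : ∀ X Y Z : V, ⟪K X Y, Z⟫ = ⟪K X Z, Y⟫)
    (hpar : ∀ X Y Z U : V,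
      Rc ε K X Y (K Z U) = K (Rc ε K X Y Z) U + K Z (Rc ε K X Y U))
    (he11 : ⟪e1, e1⟫ = (1:ℝ))
    (hKe : K e1 e1 = lam1 • e1)
    (hεeq : ε = lam1 ^ 2 / 4 - η ^ 2)
    (hμeq : μ = lam1 / 2 - η)
    (hηne : η ≠ 0)
    (hLD3 : ∀ v1 ∈ D2s lam1 e1 K, ∀ v2 ∈ D2s lam1 e1 K,
      Lop lam1 e1 K v1 v2 ∈ D3s μ e1 K)
    (hKD2 : ∀ v ∈ D2s lam1 e1 K, ∀ w ∈ D3s μ e1 K, K v w ∈ D2s lam1 e1 K) :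
    ∀ v ∈ D2s lam1 e1 K, ∀ z ∈ D2s lam1 e1 K, ∀ u ∈ D2s lam1 e1 K,
      K u (Lop lam1 e1 K v z) + K z (Lop lam1 e1 K v u) + K v (Lop lam1 e1 K z u)
        = ((lam1 * η) / 2) • (⟪z, u⟫ • v + ⟪v, z⟫ • u + ⟪v, u⟫ • z) := by
  have R1 : ∀ p : V, p ∈ D2s lam1 e1 K → Rc ε K e1 p e1 = (η ^ 2) • p := by
    intro p hp
    obtain ⟨hpe, hpK⟩ := (memD2 lam1 e1 K p).mp hp
    have hpe' : ⟪p, e1⟫ = 0 := by rw [real_inner_comm]; exact hpe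
    have h1 : K p e1 = (lam1 / 2) • p := by rw [hKsymm p e1]; exact hpK
    have h2 : K e1 (K p e1) = (lam1 / 2) • ((lam1 / 2) • p) := by
      rw [h1, map_smul, hpK]
    have h3 : K p (K e1 e1) = lam1 • ((lam1 / 2) • p) := by
      rw [hKe, map_smul, h1]
    simp only [Rc, hpe', he11, h2, h3]
    rw [hεeq]; module
  have R2 : ∀ p q : V, p ∈ D2s lam1 e1 K → q ∈ D2s lam1 e1 K →
      Rc ε K e1 p q = (-(η ^ 2) * ⟪p, q⟫) • e1 + η • Lop lam1 e1 K p q := by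
    intro p q hp hq
    obtain ⟨hpe, hpK⟩ := (memD2 lam1 e1 K p).mp hp
    obtain ⟨hqe, hqK⟩ := (memD2 lam1 e1 K q).mp hq
    obtain ⟨hLe, hLK⟩ := (memD3 μ e1 K _).mp (hLD3 p hp q hq)
    have hKpq : K p q = Lop lam1 e1 K p q + (lam1 / 2 * ⟪p, q⟫) • e1 := by
      rw [Lop]; abel
    have h2 : K e1 (K p q) = μ • Lop lam1 e1 K p q + (lam1 / 2 * ⟪p, q⟫) • (lam1 • e1) := by
      rw [hKpq, map_add, map_smul, hLK, hKe]
    have h3 : K p (K e1 q) = (lam1 / 2) • (Lop lam1 e1 K p q + (lam1 / 2 * ⟪p, q⟫) • e1) := by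
      rw [hqK, map_smul, hKpq]
    simp only [Rc, hqe, h2, h3]
    rw [hεeq, hμeq]; module
  have R3 : ∀ p w : V, p ∈ D2s lam1 e1 K → w ∈ D3s μ e1 K →
      Rc ε K e1 p w = (-η) • K p w := by
    intro p w hp hw
    obtain ⟨hpe, hpK⟩ := (memD2 lam1 e1 K p).mp hp
    obtain ⟨hwe, hwK⟩ := (memD3 μ e1 K w).mp hw
    have hpw : ⟪p, w⟫ = 0 := by
      have h1 : ⟪K e1 p, w⟫ = ⟪K e1 w, p⟫ := hKcub e1 p w
      rw [hpK, hwK, real_inner_smul_left, real_inner_smul_left] at h1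
      have hc : ⟪w, p⟫ = ⟪p, w⟫ := real_inner_comm p w
      have h2 : (lam1 / 2 - μ) * ⟪p, w⟫ = 0 := by linear_combination h1 + μ * hc
      rw [hμeq] at h2
      have h3 : lam1 / 2 - (lam1 / 2 - η) = η := by ring
      rw [h3] at h2
      rcases mul_eq_zero.mp h2 with h | h
      · exact absurd h hηne
      · exact h
    obtain ⟨hKe', hKK⟩ := (memD2 lam1 e1 K _).mp (hKD2 p hp w hw)
    have h3 : K p (K e1 w) = μ • K p w := by rw [hwK, map_smul]
    simp only [Rc, hpw, hwe, hKK, h3]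
    rw [hμeq]; module
  have Rz : ∀ (X Y a b : V) (c : ℝ),
      Rc ε K X Y (a + c • b) = Rc ε K X Y a + c • Rc ε K X Y b := by
    intro X Y a b c
    simp only [Rc, inner_add_right, real_inner_smul_right, map_add, map_smul]
    module
  intro v hv z hz u hu
  obtain ⟨hve, hvK⟩ := (memD2 lam1 e1 K v).mp hv
  obtain ⟨hze, hzK⟩ := (memD2 lam1 e1 K z).mp hz
  obtain ⟨hue, huK⟩ := (memD2 lam1 e1 K u).mp hu
  have E := hpar e1 v z u
  have hKzu : K z u = Lop lam1 e1 K z u + (lam1 / 2 * ⟪z, u⟫) • e1 := by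
    rw [Lop]; abel
  have EL : Rc ε K e1 v (K z u)
      = (-η) • K v (Lop lam1 e1 K z u) + (lam1 / 2 * ⟪z, u⟫) • ((η ^ 2) • v) := by
    rw [hKzu, Rz, R3 v _ hv (hLD3 z hz u hu), R1 v hv]
  have s1 : K (Lop lam1 e1 K v z) u = K u (Lop lam1 e1 K v z) := hKsymm _ _
  have s2 : K z e1 = (lam1 / 2) • z := by rw [hKsymm z e1]; exact hzK
  have ER : K (Rc ε K e1 v z) u + K z (Rc ε K e1 v u)
      = ((-(η ^ 2) * ⟪v, z⟫) • ((lam1 / 2) • u) + η • K u (Lop lam1 e1 K v z))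
        + ((-(η ^ 2) * ⟪v, u⟫) • ((lam1 / 2) • z) + η • K z (Lop lam1 e1 K v u)) := by
    rw [R2 v z hv hz, R2 v u hv hu]
    simp only [map_add, LinearMap.add_apply, map_smul, LinearMap.smul_apply]
    rw [huK, s1, s2]
  rw [EL, ER] at E
  have key : η • (K u (Lop lam1 e1 K v z) + K z (Lop lam1 e1 K v u)
        + K v (Lop lam1 e1 K z u))
      - η • (((lam1 * η) / 2) • (⟪z, u⟫ • v + ⟪v, z⟫ • u + ⟪v, u⟫ • z))
      = (((-(η ^ 2) * ⟪v, z⟫) • ((lam1 / 2) • u) + η • K u (Lop lam1 e1 K v z))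
        + ((-(η ^ 2) * ⟪v, u⟫) • ((lam1 / 2) • z) + η • K z (Lop lam1 e1 K v u)))
      - ((-η) • K v (Lop lam1 e1 K z u) + (lam1 / 2 * ⟪z, u⟫) • ((η ^ 2) • v)) := by
    module
  rw [← E, sub_self] at key
  exact smul_right_injective V hηne (sub_eq_zero.mp key)

/- ############ main theorem ############ -/

/-- Lemma 4.12: (i) for any unit vector `u₁ ∈ span{v₁} ⊕ V_{v₁}(0)` one has
`span{v₁} ⊕ V_{v₁}(0) = span{u₁} ⊕ V_{u₁}(0)`; (ii) for orthonormal
`u₁, ũ₁ ∈ span{v₁} ⊕ V_{v₁}(0)` one has `L(u₁,ũ₁) = 0`. -/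
theorem stmt_15 {V : Type*} [NormedAddCommGroup V] [InnerProductSpace ℝ V]
    (n m : ℕ) (hn : finrank ℝ V = n) (hn2 : 2 ≤ n)
    (ε : ℝ) (hε : ε = 1 ∨ ε = -1)
    (K : V →ₗ[ℝ] V →ₗ[ℝ] V)
    (hKsymm : ∀ X Y : V, K X Y = K Y X)
    (hKcub : ∀ X Y Z : V, ⟪K X Y, Z⟫ = ⟪K X Z, Y⟫)
    (hpar : ∀ X Y Z U : V,
      Rc ε K X Y (K Z U) = K (Rc ε K X Y Z) U + K Z (Rc ε K X Y U))
    (e1 : V) (he1 : ‖e1‖ = 1)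
    (lam1 η μ τ : ℝ)
    (hlam1 : lam1 = ⟪K e1 e1, e1⟫) (hlam1pos : 0 < lam1)
    (hmax : ∀ u : V, ‖u‖ = 1 → ⟪K u u, u⟫ ≤ lam1)
    (hdisc : 0 < lam1 ^ 2 - 4 * ε)
    (hη : η = Real.sqrt (lam1 ^ 2 - 4 * ε) / 2)
    (hμ : μ = (lam1 - Real.sqrt (lam1 ^ 2 - 4 * ε)) / 2)
    (hτ : τ = η * (η + lam1 / 2) / 4)
    (hm2 : 2 ≤ m) (hmn : m ≤ n - 1)
    (hdimD2 : finrank ℝ (D2s lam1 e1 K) = m - 1)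
    (hsplit : (ℝ ∙ e1) ⊔ D2s lam1 e1 K ⊔ D3s μ e1 K = ⊤)
    (hLD3 : ∀ v1 ∈ D2s lam1 e1 K, ∀ v2 ∈ D2s lam1 e1 K,
      Lop lam1 e1 K v1 v2 ∈ D3s μ e1 K)
    (hKD2 : ∀ v ∈ D2s lam1 e1 K, ∀ w ∈ D3s μ e1 K, K v w ∈ D2s lam1 e1 K)
    (v1 : V) (hv1 : v1 ∈ D2s lam1 e1 K) (hv1u : ‖v1‖ = 1) :
    (∀ u1 : V, ‖u1‖ = 1 → u1 ∈ (ℝ ∙ v1) ⊔ Vvs lam1 0 e1 K v1 →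
      (ℝ ∙ v1) ⊔ Vvs lam1 0 e1 K v1 = (ℝ ∙ u1) ⊔ Vvs lam1 0 e1 K u1) ∧
    (∀ u1 ut1 : V, u1 ∈ (ℝ ∙ v1) ⊔ Vvs lam1 0 e1 K v1 →
      ut1 ∈ (ℝ ∙ v1) ⊔ Vvs lam1 0 e1 K v1 →
      ‖u1‖ = 1 → ‖ut1‖ = 1 → ⟪u1, ut1⟫ = 0 → Lop lam1 e1 K u1 ut1 = 0) := by
  -- scalar facts
  have hsq : Real.sqrt (lam1 ^ 2 - 4 * ε) ^ 2 = lam1 ^ 2 - 4 * ε := Real.sq_sqrt hdisc.le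
  have hηpos : 0 < η := by
    rw [hη]
    have := Real.sqrt_pos.mpr hdisc
    positivity
  have hηne : η ≠ 0 := hηpos.ne'
  have hη2 : η ^ 2 = (lam1 ^ 2 - 4 * ε) / 4 := by
    rw [hη, div_pow, hsq]; norm_num
  have hεeq : ε = lam1 ^ 2 / 4 - η ^ 2 := by rw [hη2]; ring
  have hμeq : μ = lam1 / 2 - η := by rw [hμ, hη]; ring
  have he11 : ⟪e1, e1⟫ = (1:ℝ) := by rw [real_inner_self_eq_norm_sq, he1]; norm_num
  have hcube := aux_cube_bound lam1 K hmax
  have horth := aux_orth_le lam1 K e1 he1 hlam1 hlam1pos hKsymm hKcub hcube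
  have hKe : K e1 e1 = lam1 • e1 := aux_Ke1e1 lam1 K e1 he1 hlam1 horth
  have M := aux_master hKsymm hKcub hpar he11 hKe hεeq hμeq hηne hLD3 hKD2
  set c : ℝ := lam1 * η / 2 with hcdef
  have two_ne : (2:ℝ) ≠ 0 := by norm_num
  -- symmetric and positivity facts about L
  have hLsymm : ∀ x y : V, Lop lam1 e1 K x y = Lop lam1 e1 K y x := by
    intro x y
    rw [Lop, Lop, hKsymm x y, real_inner_comm y x]
  have innerKL : ∀ p ∈ D2s lam1 e1 K, ∀ q ∈ D2s lam1 e1 K,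
      ⟪K p (Lop lam1 e1 K p q), q⟫ = ⟪Lop lam1 e1 K p q, Lop lam1 e1 K p q⟫ := by
    intro p hp q hq
    have hLe : ⟪e1, Lop lam1 e1 K p q⟫ = 0 :=
      ((memD3 μ e1 K _).mp (hLD3 p hp q hq)).1
    have h1 : ⟪K p (Lop lam1 e1 K p q), q⟫ = ⟪K p q, Lop lam1 e1 K p q⟫ :=
      hKcub p _ q
    have hKpq : K p q = Lop lam1 e1 K p q + (lam1 / 2 * ⟪p, q⟫) • e1 := by
      rw [Lop]; abel
    rw [h1, hKpq, inner_add_left, real_inner_smul_left, hLe]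
    ring
  have Lzero : ∀ p ∈ D2s lam1 e1 K, ∀ q ∈ D2s lam1 e1 K,
      K p (Lop lam1 e1 K p q) = 0 → Lop lam1 e1 K p q = 0 := by
    intro p hp q hq h
    have h1 := innerKL p hp q hq
    rw [h, inner_zero_left] at h1
    exact inner_self_eq_zero.mp h1.symm
  -- instances of the master identity
  have Kstar : ∀ p ∈ D2s lam1 e1 K, K p (Lop lam1 e1 K p p) = (c * ⟪p, p⟫) • p := by
    intro p hp
    have h := M p hp p hp p hp
    have key : (3:ℝ) • (K p (Lop lam1 e1 K p p)) - (3:ℝ) • ((c * ⟪p, p⟫) • p)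
        = (K p (Lop lam1 e1 K p p) + K p (Lop lam1 e1 K p p) + K p (Lop lam1 e1 K p p))
          - ((lam1 * η) / 2) • (⟪p, p⟫ • p + ⟪p, p⟫ • p + ⟪p, p⟫ • p) := by
      rw [hcdef]; module
    rw [h, sub_self] at key
    exact smul_right_injective V (by norm_num : (3:ℝ) ≠ 0) (sub_eq_zero.mp key)
  have IdB : ∀ p ∈ D2s lam1 e1 K, ∀ q ∈ D2s lam1 e1 K,
      K q (Lop lam1 e1 K p p) + (2:ℝ) • K p (Lop lam1 e1 K p q)
        = c • ((2 * ⟪p, q⟫) • p + ⟪p, p⟫ • q) := by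
    intro p hp q hq
    have h := M p hp p hp q hq
    have key : (K q (Lop lam1 e1 K p p) + (2:ℝ) • K p (Lop lam1 e1 K p q))
        - c • ((2 * ⟪p, q⟫) • p + ⟪p, p⟫ • q)
        = (K q (Lop lam1 e1 K p p) + K p (Lop lam1 e1 K p q) + K p (Lop lam1 e1 K p q))
          - ((lam1 * η) / 2) • (⟪p, q⟫ • p + ⟪p, p⟫ • q + ⟪p, q⟫ • p) := by
      rw [hcdef]; module
    rw [h, sub_self] at key
    exact sub_eq_zero.mp key
  -- basic memberships
  have VvsD2 : ∀ p : V, Vvs lam1 0 e1 K p ≤ D2s lam1 e1 K := by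
    intro p
    exact le_trans inf_le_left inf_le_left
  have hv1v1 : ⟪v1, v1⟫ = (1:ℝ) := by rw [real_inner_self_eq_norm_sq, hv1u]; norm_num
  set ξ := Lop lam1 e1 K v1 v1 with hξ
  have hKv1ξ : K v1 ξ = c • v1 := by
    have h := Kstar v1 hv1
    rw [hv1v1, mul_one] at h
    exact h
  have hLv1z : ∀ z ∈ Vvs lam1 0 e1 K v1, Lop lam1 e1 K v1 z = 0 := by
    intro z hz
    obtain ⟨hzD2, hzo, hzP⟩ := (memVvs lam1 e1 K v1 z).mp hz
    exact Lzero v1 hv1 z hzD2 hzP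
  have hKzξ : ∀ z ∈ D2s lam1 e1 K, ⟪v1, z⟫ = 0 → Lop lam1 e1 K v1 z = 0 →
      K z ξ = c • z := by
    intro z hz ho hL
    have h := IdB v1 hv1 z hz
    rw [hL, ho, hv1v1] at h
    simp only [map_zero, smul_zero, add_zero, mul_zero, zero_smul, zero_add, one_smul] at h
    exact h
  have hξnorm : ⟪ξ, ξ⟫ = c := by
    have h1 := innerKL v1 hv1 v1 hv1
    rw [hKv1ξ, real_inner_smul_left, hv1v1, mul_one] at h1
    exact h1.symm
  have hξe : ⟪e1, ξ⟫ = 0 := ((memD3 μ e1 K ξ).mp (hLD3 v1 hv1 v1 hv1)).1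
  -- L(z,z) = ⟨z,z⟩ ξ on V_{v1}(0)
  have hLzz : ∀ z ∈ Vvs lam1 0 e1 K v1, Lop lam1 e1 K z z = ⟪z, z⟫ • ξ := by
    intro z hz
    obtain ⟨hzD2, hzo, hzP⟩ := (memVvs lam1 e1 K v1 z).mp hz
    have hLz := hLv1z z hz
    have hKzz : K z (Lop lam1 e1 K z z) = (c * ⟪z, z⟫) • z := Kstar z hzD2
    have hKzξ' : K z ξ = c • z := hKzξ z hzD2 hzo hLz
    have ha : ⟪Lop lam1 e1 K z z, Lop lam1 e1 K z z⟫ = c * ⟪z, z⟫ ^ 2 := by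
      have h := (innerKL z hzD2 z hzD2).symm
      rw [hKzz, real_inner_smul_left] at h
      rw [h]; ring
    have hb : ⟪Lop lam1 e1 K z z, ξ⟫ = c * ⟪z, z⟫ := by
      have h1 : ⟪K z z, ξ⟫ = ⟪K z ξ, z⟫ := hKcub z z ξ
      rw [hKzξ', real_inner_smul_left] at h1
      rw [Lop, inner_sub_left, real_inner_smul_left, h1, hξe]
      ring
    have hb' : ⟪ξ, Lop lam1 e1 K z z⟫ = c * ⟪z, z⟫ :=
      (real_inner_comm ξ (Lop lam1 e1 K z z)).symm.trans hb
    have hdd : ⟪Lop lam1 e1 K z z - ⟪z, z⟫ • ξ, Lop lam1 e1 K z z - ⟪z, z⟫ • ξ⟫ = 0 := by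
      rw [inner_sub_left, inner_sub_right, inner_sub_right, real_inner_smul_left,
        real_inner_smul_left, real_inner_smul_right, real_inner_smul_right,
        ha, hξnorm, hb, hb']
      ring
    exact sub_eq_zero.mp (inner_self_eq_zero.mp hdd)
  -- polarization : L(x,y) = ⟨x,y⟩ ξ on V_{v1}(0)
  have hLxy : ∀ x ∈ Vvs lam1 0 e1 K v1, ∀ y ∈ Vvs lam1 0 e1 K v1,
      Lop lam1 e1 K x y = ⟪x, y⟫ • ξ := by
    intro x hx y hy
    have hxy : x + y ∈ Vvs lam1 0 e1 K v1 := Submodule.add_mem _ hx hy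
    have e' := hLzz _ hxy
    have ex := hLzz x hx
    have ey := hLzz y hy
    have hLadd : Lop lam1 e1 K (x + y) (x + y)
        = Lop lam1 e1 K x x + Lop lam1 e1 K x y + Lop lam1 e1 K y x + Lop lam1 e1 K y y := by
      simp only [Lop, map_add, LinearMap.add_apply, inner_add_left, inner_add_right]
      module
    have hinner : ⟪x + y, x + y⟫ = ⟪x, x⟫ + ⟪x, y⟫ + ⟪x, y⟫ + ⟪y, y⟫ := by
      rw [inner_add_left, inner_add_right, inner_add_right, real_inner_comm y x]
      ring
    have hsy := hLsymm y x
    rw [hLadd, hinner, ex, ey, hsy] at e'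
    -- e' : ⟪x,x⟫•ξ + L x y + L x y + ⟪y,y⟫•ξ = (⟪x,x⟫+⟪x,y⟫+⟪x,y⟫+⟪y,y⟫)•ξ
    have key : (2:ℝ) • Lop lam1 e1 K x y - (2:ℝ) • (⟪x, y⟫ • ξ)
        = (⟪x, x⟫ • ξ + Lop lam1 e1 K x y + Lop lam1 e1 K x y + ⟪y, y⟫ • ξ)
          - (⟪x, x⟫ + ⟪x, y⟫ + ⟪x, y⟫ + ⟪y, y⟫) • ξ := by
      module
    rw [e', sub_self] at key
    exact smul_right_injective V two_ne (sub_eq_zero.mp key)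
  -- L = ⟨·,·⟩ ξ on all of W
  have hWD2 : (ℝ ∙ v1) ⊔ Vvs lam1 0 e1 K v1 ≤ D2s lam1 e1 K :=
    sup_le ((Submodule.span_singleton_le_iff_mem _ _).mpr hv1) (VvsD2 v1)
  have hLW : ∀ u ∈ (ℝ ∙ v1) ⊔ Vvs lam1 0 e1 K v1,
      ∀ w ∈ (ℝ ∙ v1) ⊔ Vvs lam1 0 e1 K v1, Lop lam1 e1 K u w = ⟪u, w⟫ • ξ := by
    intro u hu w hw
    obtain ⟨p, hp, x, hx, hpx⟩ := Submodule.mem_sup.mp hu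
    obtain ⟨q, hq, y, hy, hqy⟩ := Submodule.mem_sup.mp hw
    obtain ⟨a, rfl⟩ := Submodule.mem_span_singleton.mp hp
    obtain ⟨b, rfl⟩ := Submodule.mem_span_singleton.mp hq
    subst hpx hqy
    have hxv : ⟪v1, x⟫ = 0 := ((memVvs lam1 e1 K v1 x).mp hx).2.1
    have hyv : ⟪v1, y⟫ = 0 := ((memVvs lam1 e1 K v1 y).mp hy).2.1
    have hxv' : ⟪x, v1⟫ = 0 := by rw [real_inner_comm v1 x]; exact hxv
    have hLv1x : Lop lam1 e1 K v1 x = 0 := hLv1z x hx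
    have hLv1y : Lop lam1 e1 K v1 y = 0 := hLv1z y hy
    have hLxv1 : Lop lam1 e1 K x v1 = 0 := by rw [hLsymm x v1]; exact hLv1x
    have hLxy' : Lop lam1 e1 K x y = ⟪x, y⟫ • ξ := hLxy x hx y hy
    have hexp : Lop lam1 e1 K (a • v1 + x) (b • v1 + y)
        = (a * b) • Lop lam1 e1 K v1 v1 + a • Lop lam1 e1 K v1 y
          + b • Lop lam1 e1 K x v1 + Lop lam1 e1 K x y := by
      simp only [Lop, map_add, map_smul, LinearMap.add_apply, LinearMap.smul_apply,
        inner_add_left, inner_add_right, real_inner_smul_left, real_inner_smul_right]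
      module
    have hiexp : ⟪a • v1 + x, b • v1 + y⟫ = a * b + ⟪x, y⟫ := by
      rw [inner_add_left, inner_add_right, inner_add_right, real_inner_smul_left,
        real_inner_smul_left, real_inner_smul_right, real_inner_smul_right,
        hv1v1, hyv, hxv']
      ring
    rw [hexp, hLv1y, hLxv1, hLxy', hiexp, ← hξ]
    module
  constructor
  · -- part (i)
    intro u1 hu1n hu1W
    have hu1D2 : u1 ∈ D2s lam1 e1 K := hWD2 hu1W
    have hu1u1 : ⟪u1, u1⟫ = (1:ℝ) := by rw [real_inner_self_eq_norm_sq, hu1n]; norm_num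
    have hLu1u1 : Lop lam1 e1 K u1 u1 = ξ := by
      rw [hLW u1 hu1W u1 hu1W, hu1u1, one_smul]
    apply le_antisymm
    · intro w hw
      set w' := w - ⟪w, u1⟫ • u1 with hw'
      have hw'W : w' ∈ (ℝ ∙ v1) ⊔ Vvs lam1 0 e1 K v1 :=
        Submodule.sub_mem _ hw (Submodule.smul_mem _ _ hu1W)
      have ho : ⟪u1, w'⟫ = 0 := by
        rw [hw', inner_sub_right, real_inner_smul_right, hu1u1, real_inner_comm u1 w]
        ring
      have hPw' : K u1 (Lop lam1 e1 K u1 w') = 0 := by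
        rw [hLW u1 hu1W w' hw'W, ho, zero_smul, map_zero]
      have hw'V : w' ∈ Vvs lam1 0 e1 K u1 :=
        (memVvs lam1 e1 K u1 w').mpr ⟨hWD2 hw'W, ho, hPw'⟩
      have hweq : w = ⟪w, u1⟫ • u1 + w' := by rw [hw']; abel
      rw [hweq]
      exact Submodule.add_mem _
        (Submodule.mem_sup_left (Submodule.mem_span_singleton.mpr ⟨_, rfl⟩))
        (Submodule.mem_sup_right hw'V)
    · apply sup_le
      · rw [Submodule.span_singleton_le_iff_mem]; exact hu1W
      · intro z hz
        obtain ⟨hzD2, hzo, hzP⟩ := (memVvs lam1 e1 K u1 z).mp hz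
        have hLu1z : Lop lam1 e1 K u1 z = 0 := Lzero u1 hu1D2 z hzD2 hzP
        have hKzξ1 : K z ξ = c • z := by
          have h := IdB u1 hu1D2 z hzD2
          rw [hLu1u1, hLu1z, hzo, hu1u1] at h
          simp only [map_zero, smul_zero, add_zero, mul_zero, zero_smul, zero_add,
            one_smul] at h
          exact h
        set z' := z - ⟪v1, z⟫ • v1 with hz'
        have hz'D2 : z' ∈ D2s lam1 e1 K :=
          Submodule.sub_mem _ hzD2 (Submodule.smul_mem _ _ hv1)
        have hz'o : ⟪v1, z'⟫ = 0 := by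
          rw [hz', inner_sub_right, real_inner_smul_right, hv1v1]
          ring
        have hKz'ξ : K z' ξ = c • z' := by
          rw [hz']
          simp only [map_sub, map_smul, LinearMap.sub_apply, LinearMap.smul_apply]
          rw [hKzξ1, hKv1ξ]
          module
        have hPz' : K v1 (Lop lam1 e1 K v1 z') = 0 := by
          have h := IdB v1 hv1 z' hz'D2
          rw [← hξ, hKz'ξ, hz'o, hv1v1] at h
          simp only [mul_zero, zero_smul, zero_add, one_smul] at h
          have h2 : (2:ℝ) • K v1 (Lop lam1 e1 K v1 z') = 0 := by
            rwa [add_eq_left] at h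
          exact (smul_eq_zero.mp h2).resolve_left two_ne
        have hz'V : z' ∈ Vvs lam1 0 e1 K v1 :=
          (memVvs lam1 e1 K v1 z').mpr ⟨hz'D2, hz'o, hPz'⟩
        have hzeq : z = ⟪v1, z⟫ • v1 + z' := by rw [hz']; abel
        rw [hzeq]
        exact Submodule.add_mem _
          (Submodule.mem_sup_left (Submodule.mem_span_singleton.mpr ⟨_, rfl⟩))
          (Submodule.mem_sup_right hz'V)
  · -- part (ii)
    intro u1 ut1 hu1 hut1 _ _ hinner
    rw [hLW u1 hu1 ut1 hut1, hinner, zero_smul]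

end
end

section
/- Assume k0 ≥ 2. For every unit vector u_2 ∈ V_{v_2}(0) there exists a unique vector u_1 ∈ span{v_1} ⊕ V_{v_1}(0) such that L(u_1, v_2) = L(v_1, u_2). Moreover, this u_1 is a unit vector lying in V_{v_1}(0), and L(v_1, v_2) = −L(u_1, u_2). -/
open scoped RealInnerProductSpace
open Module Submodule

noncomputable section

variable {V : Type*} [NormedAddCommGroup V] [InnerProductSpace ℝ V]

set_option maxHeartbeats 2000000 in
/-- The core computational lemma. -/
lemma coreAux {V : Type*} [NormedAddCommGroup V] [InnerProductSpace ℝ V]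
    (ε lam1 η μ τ : ℝ)
    (K : V →ₗ[ℝ] V →ₗ[ℝ] V)
    (hKsymm : ∀ X Y : V, K X Y = K Y X)
    (hKcub : ∀ X Y Z : V, ⟪K X Y, Z⟫ = ⟪K X Z, Y⟫)
    (hpar : ∀ X Y Z U : V,
      Rc ε K X Y (K Z U) = K (Rc ε K X Y Z) U + K Z (Rc ε K X Y U))
    (e1 : V) (he1 : ‖e1‖ = 1)
    (hlam1 : lam1 = ⟪K e1 e1, e1⟫) (hlam1pos : 0 < lam1)
    (hdisc : 0 < lam1 ^ 2 - 4 * ε)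
    (hη : η = Real.sqrt (lam1 ^ 2 - 4 * ε) / 2)
    (hμ : μ = (lam1 - Real.sqrt (lam1 ^ 2 - 4 * ε)) / 2)
    (hτ : τ = η * (η + lam1 / 2) / 4)
    (hsplit : (ℝ ∙ e1) ⊔ D2s lam1 e1 K ⊔ D3s μ e1 K = ⊤)
    (hLD3 : ∀ v1 ∈ D2s lam1 e1 K, ∀ v2 ∈ D2s lam1 e1 K,
      Lop lam1 e1 K v1 v2 ∈ D3s μ e1 K)
    (hKD2 : ∀ v ∈ D2s lam1 e1 K, ∀ w ∈ D3s μ e1 K, K v w ∈ D2s lam1 e1 K)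
    (a b x : V)
    (haD2 : a ∈ D2s lam1 e1 K) (hbD2 : b ∈ D2s lam1 e1 K) (hxD2 : x ∈ D2s lam1 e1 K)
    (ha1 : ⟪a,a⟫ = 1) (hb1 : ⟪b,b⟫ = 1)
    (hab : ⟪a,b⟫ = 0) (hax : ⟪a,x⟫ = 0) (hbx : ⟪b,x⟫ = 0)
    (hτa : K a (K a b) = τ • b) (hτb : K b (K a b) = τ • a)
    (hKbx : K b x = 0) :
    K b (K b (K a x)) = τ • K a x ∧
    K a (K b (K a x)) = 0 ∧
    ⟪a, K b (K a x)⟫ = 0 ∧ ⟪b, K b (K a x)⟫ = 0 ∧ ⟪x, K b (K a x)⟫ = 0 ∧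
    K x (K b (K a x)) = -((τ * ⟪x,x⟫) • K a b) ∧
    ⟪K a x, K a x⟫ = τ * ⟪x,x⟫ ∧
    ⟪K b (K a x), K b (K a x)⟫ = τ * (τ * ⟪x,x⟫) := by
  -- scalar facts
  have hs0 : (0:ℝ) ≤ lam1^2 - 4*ε := le_of_lt hdisc
  have hsq : Real.sqrt (lam1^2 - 4*ε) ^ 2 = lam1^2 - 4*ε := Real.sq_sqrt hs0
  have hη0 : 0 < η := by
    rw [hη]; have := Real.sqrt_pos.mpr hdisc; linarith
  have hε2 : ε = lam1^2/4 - η^2 := by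
    have h : η^2 = (lam1^2 - 4*ε)/4 := by rw [hη, div_pow, hsq]; norm_num
    linarith
  have hμη : μ = lam1/2 - η := by rw [hμ, hη]; ring
  have hτ4 : η^2 + η*(lam1/2) = 4*τ := by rw [hτ]; ring
  have hτ0 : 0 < τ := by rw [hτ]; nlinarith [hη0, hlam1pos]
  -- basic membership facts
  have hee : ⟪e1,e1⟫ = (1:ℝ) := by
    rw [real_inner_self_eq_norm_mul_norm, he1]; norm_num
  have hiD2 : ∀ y ∈ D2s lam1 e1 K, ⟪e1,y⟫ = 0 := fun y hy =>
    (Submodule.mem_inf.mp hy).1 e1 (Submodule.mem_span_singleton_self e1)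
  have hiD2' : ∀ y ∈ D2s lam1 e1 K, ⟪y,e1⟫ = 0 := fun y hy => by
    rw [real_inner_comm]; exact hiD2 y hy
  have hKe1D2 : ∀ y ∈ D2s lam1 e1 K, K e1 y = (lam1/2) • y := fun y hy =>
    Module.End.mem_eigenspace_iff.mp (Submodule.mem_inf.mp hy).2
  have hKD2e1 : ∀ y ∈ D2s lam1 e1 K, K y e1 = (lam1/2) • y := fun y hy =>
    (hKsymm y e1).trans (hKe1D2 y hy)
  have hiD3 : ∀ z ∈ D3s μ e1 K, ⟪e1,z⟫ = 0 := fun z hz =>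
    (Submodule.mem_inf.mp hz).1 e1 (Submodule.mem_span_singleton_self e1)
  have hiD3' : ∀ z ∈ D3s μ e1 K, ⟪z,e1⟫ = 0 := fun z hz => by
    rw [real_inner_comm]; exact hiD3 z hz
  have hKe1D3 : ∀ z ∈ D3s μ e1 K, K e1 z = μ • z := fun z hz =>
    Module.End.mem_eigenspace_iff.mp (Submodule.mem_inf.mp hz).2
  have hp23 : ∀ y ∈ D2s lam1 e1 K, ∀ z ∈ D3s μ e1 K, ⟪y,z⟫ = 0 := by
    intro y hy z hz
    have h1 := hKcub e1 y z
    rw [hKe1D2 y hy, hKe1D3 z hz, real_inner_smul_left, real_inner_smul_left,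
      real_inner_comm y z] at h1
    have h2 : η * ⟪y,z⟫ = 0 := by rw [hμη] at h1; linear_combination h1
    exact (mul_eq_zero.mp h2).resolve_left (ne_of_gt hη0)
  -- span test
  have hST : ∀ y : V, ⟪e1,y⟫ = 0 → (∀ p ∈ D2s lam1 e1 K, ⟪p,y⟫ = 0) →
      (∀ q ∈ D3s μ e1 K, ⟪q,y⟫ = 0) → y = 0 := by
    intro y h1 h2 h3
    have hy : y ∈ (ℝ ∙ e1) ⊔ D2s lam1 e1 K ⊔ D3s μ e1 K := by rw [hsplit]; trivial
    obtain ⟨s, hs, z3, hz3, hy'⟩ := Submodule.mem_sup.mp hy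
    obtain ⟨z1, hz1, z2, hz2, hs'⟩ := Submodule.mem_sup.mp hs
    obtain ⟨c, rfl⟩ := Submodule.mem_span_singleton.mp hz1
    have hcalc : ⟪y,y⟫ = 0 := by
      have hyy : c • e1 + z2 + z3 = y := by rw [hs', hy']
      calc ⟪y,y⟫ = ⟪c • e1 + z2 + z3, y⟫ := by rw [hyy]
        _ = c * ⟪e1,y⟫ + ⟪z2,y⟫ + ⟪z3,y⟫ := by
            rw [inner_add_left, inner_add_left, real_inner_smul_left]
        _ = 0 := by rw [h1, h2 z2 hz2, h3 z3 hz3]; ring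
    exact inner_self_eq_zero.mp hcalc
  have hKe1e1 : K e1 e1 = lam1 • e1 := by
    have h0 : K e1 e1 - lam1 • e1 = 0 := by
      apply hST
      · rw [inner_sub_right, real_inner_smul_right, hee, real_inner_comm, ← hlam1]; ring
      · intro p hp
        rw [inner_sub_right, real_inner_smul_right]
        have h1 : ⟪p, K e1 e1⟫ = 0 := by
          rw [real_inner_comm, hKcub e1 e1 p, hKe1D2 p hp, real_inner_smul_left,
            hiD2' p hp]; ring
        rw [h1, hiD2' p hp]; ring
      · intro q hq
        rw [inner_sub_right, real_inner_smul_right]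
        have h1 : ⟪q, K e1 e1⟫ = 0 := by
          rw [real_inner_comm, hKcub e1 e1 q, hKe1D3 q hq, real_inner_smul_left,
            hiD3' q hq]; ring
        rw [h1, hiD3' q hq]; ring
    exact sub_eq_zero.mp h0
  -- decomposition of K on D2
  have hKdec : ∀ y z : V, K y z = (lam1/2 * ⟪y,z⟫) • e1 + Lop lam1 e1 K y z := by
    intro y z; simp [Lop]
  -- Rc is linear in the last slot
  have hRsmul : ∀ (c : ℝ) (X Y Z : V), Rc ε K X Y (c • Z) = c • Rc ε K X Y Z := by
    intro c X Y Z
    simp only [Rc, real_inner_smul_right, map_smul]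
    module
  have hRadd : ∀ (X Y Z Z' : V), Rc ε K X Y (Z + Z') = Rc ε K X Y Z + Rc ε K X Y Z' := by
    intro X Y Z Z'
    simp only [Rc, inner_add_right, map_add]
    module
  have hRzero : ∀ X Y : V, Rc ε K X Y (0:V) = 0 := by
    intro X Y; simp [Rc]
  -- curvature evaluations
  have hRe1e1 : ∀ y ∈ D2s lam1 e1 K, Rc ε K e1 y e1 = (η^2) • y := by
    intro y hy
    have c1 : K e1 (K y e1) = (lam1/2*(lam1/2)) • y := by
      rw [hKD2e1 y hy, map_smul, hKe1D2 y hy, smul_smul]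
    have c2 : K y (K e1 e1) = (lam1*(lam1/2)) • y := by
      rw [hKe1e1, map_smul, hKD2e1 y hy, smul_smul]
    simp only [Rc]
    rw [c1, c2, hiD2' y hy, hee, hε2]
    module
  have hRe1D2 : ∀ y ∈ D2s lam1 e1 K, ∀ z ∈ D2s lam1 e1 K,
      Rc ε K e1 y z = (-(η^2) * ⟪y,z⟫) • e1 + η • Lop lam1 e1 K y z := by
    intro y hy z hz
    have c1 : K e1 (K y z) = (lam1/2*⟪y,z⟫*lam1) • e1 + μ • Lop lam1 e1 K y z := by
      rw [hKdec y z]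
      simp only [map_add, map_smul]
      rw [hKe1e1, hKe1D3 _ (hLD3 y hy z hz), smul_smul]
    have c2 : K y (K e1 z) = (lam1/2) • ((lam1/2*⟪y,z⟫) • e1 + Lop lam1 e1 K y z) := by
      rw [hKe1D2 z hz]
      simp only [map_smul]
      rw [hKdec y z]
    simp only [Rc]
    rw [c1, c2, hiD2 z hz, hε2, hμη]
    module
  have hRe1D3 : ∀ y ∈ D2s lam1 e1 K, ∀ z ∈ D3s μ e1 K,
      Rc ε K e1 y z = (-η) • K y z := by
    intro y hy z hz
    have c1 : K e1 (K y z) = (lam1/2) • K y z := hKe1D2 _ (hKD2 y hy z hz)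
    have c2 : K y (K e1 z) = μ • K y z := by rw [hKe1D3 z hz, map_smul]
    simp only [Rc]
    rw [c1, c2, hp23 y hy z hz, hiD3 z hz, hμη]
    module
  have hRcE1 : ∀ y ∈ D2s lam1 e1 K, ∀ z ∈ D2s lam1 e1 K, Rc ε K y z e1 = 0 := by
    intro y hy z hz
    have c1 : K y (K z e1) = (lam1/2) • K y z := by
      rw [hKD2e1 z hz, map_smul]
    have c2 : K z (K y e1) = (lam1/2) • K z y := by
      rw [hKD2e1 y hy, map_smul]
    simp only [Rc]
    rw [c1, c2, hiD2' y hy, hiD2' z hz, hKsymm z y]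
    module
  have hRcD2 : ∀ x' ∈ D2s lam1 e1 K, ∀ y' ∈ D2s lam1 e1 K, ∀ z' ∈ D2s lam1 e1 K,
      Rc ε K x' y' z' = (-(η^2)*⟪y',z'⟫) • x' + (η^2*⟪x',z'⟫) • y' +
        (K y' (Lop lam1 e1 K x' z') - K x' (Lop lam1 e1 K y' z')) := by
    intro x' hx' y' hy' z' hz'
    have c1 : K x' (K y' z') = (lam1/2*⟪y',z'⟫*(lam1/2)) • x' + K x' (Lop lam1 e1 K y' z') := by
      rw [hKdec y' z']
      simp only [map_add, map_smul]
      rw [hKD2e1 x' hx', smul_smul]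
    have c2 : K y' (K x' z') = (lam1/2*⟪x',z'⟫*(lam1/2)) • y' + K y' (Lop lam1 e1 K x' z') := by
      rw [hKdec x' z']
      simp only [map_add, map_smul]
      rw [hKD2e1 y' hy', smul_smul]
    simp only [Rc]
    rw [c1, c2, hε2]
    module
  have hRcD3 : ∀ y' ∈ D2s lam1 e1 K, ∀ z' ∈ D2s lam1 e1 K, ∀ w' ∈ D3s μ e1 K,
      Rc ε K y' z' w' = K z' (K y' w') - K y' (K z' w') := by
    intro y' hy' z' hz' w' hw'
    simp only [Rc]
    rw [hp23 z' hz' w' hw', hp23 y' hy' w' hw']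
    module
  -- the fully symmetric identity (I)
  have hI : ∀ x' ∈ D2s lam1 e1 K, ∀ y' ∈ D2s lam1 e1 K, ∀ z' ∈ D2s lam1 e1 K,
      K x' (Lop lam1 e1 K y' z') + K y' (Lop lam1 e1 K x' z') + K z' (Lop lam1 e1 K x' y')
        = (lam1*η/2) • (⟪y',z'⟫ • x' + ⟪x',z'⟫ • y' + ⟪x',y'⟫ • z') := by
    intro x' hx' y' hy' z' hz'
    have hE := hpar e1 x' y' z'
    rw [hKdec y' z'] at hE
    rw [hRadd, hRsmul, hRe1e1 x' hx', hRe1D3 x' hx' _ (hLD3 y' hy' z' hz'),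
      hRe1D2 x' hx' y' hy', hRe1D2 x' hx' z' hz'] at hE
    simp only [map_add, map_smul, LinearMap.add_apply, LinearMap.smul_apply] at hE
    rw [hKe1D2 z' hz', hKD2e1 y' hy', hKsymm (Lop lam1 e1 K x' y') z'] at hE
    have key : η • (K x' (Lop lam1 e1 K y' z') + K y' (Lop lam1 e1 K x' z') +
        K z' (Lop lam1 e1 K x' y'))
        = η • ((lam1*η/2) • (⟪y',z'⟫ • x' + ⟪x',z'⟫ • y' + ⟪x',y'⟫ • z')) := by
      linear_combination (norm := module) -hE
    exact smul_right_injective V (ne_of_gt hη0) key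
  -- the star identity
  have hLsy : ∀ y z : V, Lop lam1 e1 K y z = Lop lam1 e1 K z y := by
    intro y z; simp [Lop, hKsymm y z, real_inner_comm z y]
  have hStar : ∀ vv ∈ D2s lam1 e1 K, ∀ xx ∈ D2s lam1 e1 K,
      K xx (Lop lam1 e1 K vv vv) = (lam1*η/2*⟪vv,vv⟫) • xx + (lam1*η*⟪vv,xx⟫) • vv
        - (2:ℝ) • K vv (Lop lam1 e1 K vv xx) := by
    intro vv hvv xx hxx
    have h := hI xx hxx vv hvv vv hvv
    rw [hLsy xx vv, real_inner_comm vv xx] at h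
    linear_combination (norm := module) h
  -- specialize: notation facts
  have hba : ⟪b,a⟫ = 0 := by rw [real_inner_comm a b]; exact hab
  have hxa : ⟪x,a⟫ = 0 := by rw [real_inner_comm a x]; exact hax
  have hxb : ⟪x,b⟫ = 0 := by rw [real_inner_comm b x]; exact hbx
  have lab : Lop lam1 e1 K a b = K a b := by simp [Lop, hab]
  have lba : Lop lam1 e1 K b a = K a b := by simp [Lop, hba, hKsymm b a]
  have lax : Lop lam1 e1 K a x = K a x := by simp [Lop, hax]
  have lxa : Lop lam1 e1 K x a = K a x := by simp [Lop, hxa, hKsymm x a]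
  have lbx : Lop lam1 e1 K b x = 0 := by simp [Lop, hbx, hKbx]
  have lxb : Lop lam1 e1 K x b = 0 := by
    simp [Lop, hxb, hKsymm x b, hKbx]
  have wD3 : K a x ∈ D3s μ e1 K := lax ▸ hLD3 a haD2 x hxD2
  have hbaK : K b a = K a b := hKsymm b a
  -- star specializations
  have s3 : K a (Lop lam1 e1 K b b) = (lam1*η/2 - 2*τ) • a := by
    have h := hStar b hbD2 a haD2
    rw [hb1, hba, lba, hτb] at h
    linear_combination (norm := module) h
  have s4 : K b (Lop lam1 e1 K a a) = (lam1*η/2 - 2*τ) • b := by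
    have h := hStar a haD2 b hbD2
    rw [ha1, hab, lab, hτa] at h
    linear_combination (norm := module) h
  have s5 : K x (Lop lam1 e1 K b b) = (lam1*η/2) • x := by
    have h := hStar b hbD2 x hxD2
    rw [hb1, hbx, lbx, map_zero] at h
    linear_combination (norm := module) h
  have s6 : K b (Lop lam1 e1 K x x) = (lam1*η/2*⟪x,x⟫) • b := by
    have h := hStar x hxD2 b hbD2
    rw [hxb, lxb, map_zero] at h
    linear_combination (norm := module) h
  have s7 : K a (Lop lam1 e1 K x x) = (lam1*η/2*⟪x,x⟫) • a - (2:ℝ) • K x (K a x) := by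
    have h := hStar x hxD2 a haD2
    rw [hxa, lxa] at h
    linear_combination (norm := module) h
  have s7' : K x (Lop lam1 e1 K a a) = (lam1*η/2) • x - (2:ℝ) • K a (K a x) := by
    have h := hStar a haD2 x hxD2
    rw [ha1, hax, lax] at h
    linear_combination (norm := module) h
  have s8 : K x (K a b) = - K b (K a x) := by
    have h := hI a haD2 b hbD2 x hxD2
    rw [lbx, map_zero, lax, lab, hbx, hax, hab] at h
    linear_combination (norm := module) h
  -- curvature values on a, b, x
  have r1 : Rc ε K a b b = (-τ) • a := by
    have h := hRcD2 a haD2 b hbD2 b hbD2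
    rw [hb1, hab, lab, hτb, s3] at h
    linear_combination (norm := module) h - hτ4 • a
  have r2 : Rc ε K a b a = τ • b := by
    have h := hRcD2 a haD2 b hbD2 a haD2
    rw [hba, ha1, s4, lba, hτa] at h
    linear_combination (norm := module) h + hτ4 • b
  have r3 : Rc ε K a b x = K b (K a x) := by
    have h := hRcD2 a haD2 b hbD2 x hxD2
    rw [hbx, hax, lax, lbx, map_zero] at h
    linear_combination (norm := module) h
  have r4 : Rc ε K b x b = (4*τ) • x := by
    have h := hRcD2 b hbD2 x hxD2 b hbD2
    rw [hxb, hb1, s5, lxb, map_zero] at h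
    linear_combination (norm := module) h + hτ4 • x
  have r5 : Rc ε K b x x = (-(4*τ*⟪x,x⟫)) • b := by
    have h := hRcD2 b hbD2 x hxD2 x hxD2
    rw [hbx, lbx, map_zero, s6] at h
    have h4 : ((η^2 + η*(lam1/2))*⟪x,x⟫) • b = (4*τ*⟪x,x⟫) • b := by rw [hτ4]
    linear_combination (norm := module) h - h4
  have r6 : Rc ε K b x a = (-2:ℝ) • K b (K a x) := by
    have h := hRcD2 b hbD2 x hxD2 a haD2
    rw [hxa, hba, lba, lxa, s8] at h
    linear_combination (norm := module) h
  -- main parallelism consequences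
  have E1 : K b (K b (K a x)) = τ • K a x := by
    have h := hpar a b b x
    rw [hKbx, hRzero, r1, r3] at h
    simp only [map_smul, LinearMap.smul_apply] at h
    linear_combination (norm := module) -h
  have E3 : K b (K a (K a x)) = (2:ℝ) • K a (K b (K a x)) := by
    have h := hpar a b a x
    rw [hRcD3 a haD2 b hbD2 (K a x) wD3, r2, r3] at h
    simp only [map_smul, LinearMap.smul_apply] at h
    rw [hKbx] at h
    simp only [smul_zero, zero_add] at h
    linear_combination (norm := module) h
  have E2 : K b (K a (K a x)) = (-2:ℝ) • K a (K b (K a x)) := by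
    have c1 : K x (K b (Lop lam1 e1 K a a)) = 0 := by
      rw [s4, map_smul, hKsymm x b, hKbx, smul_zero]
    have c2 : K b (K x (Lop lam1 e1 K a a)) = (-2:ℝ) • K b (K a (K a x)) := by
      rw [s7']
      simp only [map_sub, map_smul]
      rw [hKbx]
      module
    have h := hpar b x a a
    rw [hKdec a a] at h
    rw [hRadd, hRsmul, hRcE1 b hbD2 x hxD2,
      hRcD3 b hbD2 x hxD2 _ (hLD3 a haD2 a haD2), r6] at h
    rw [c1, c2] at h
    simp only [map_smul, LinearMap.smul_apply, smul_zero, zero_add, zero_sub] at h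
    rw [hKsymm (K b (K a x)) a] at h
    linear_combination (norm := module) ((1:ℝ)/2) • h
  have C2 : K a (K b (K a x)) = 0 := by
    have h4 : (4:ℝ) • K a (K b (K a x)) = (4:ℝ) • (0:V) := by
      rw [smul_zero]
      linear_combination (norm := module) E2 - E3
    exact smul_right_injective V (by norm_num : (4:ℝ) ≠ 0) h4
  -- E4 and E5
  have E4 : K x (K b (K a x)) - K b (K x (K a x))
      = (-(4*τ*⟪x,x⟫)) • K a b + (-2:ℝ) • K x (K b (K a x)) := by
    have h := hpar b x x a
    rw [hKsymm x a] at h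
    rw [hRcD3 b hbD2 x hxD2 (K a x) wD3, r5, r6] at h
    simp only [map_smul, LinearMap.smul_apply] at h
    rw [hbaK] at h
    linear_combination (norm := module) h
  have E5 : K x (K b (K a x)) = - K b (K x (K a x)) := by
    have c3 : K b (K a (Lop lam1 e1 K x x))
        = (lam1*η/2*⟪x,x⟫) • K a b - (2:ℝ) • K b (K x (K a x)) := by
      rw [s7]
      simp only [map_sub, map_smul]
      rw [hbaK]
    have c4 : K a (K b (Lop lam1 e1 K x x)) = (lam1*η/2*⟪x,x⟫) • K a b := by
      rw [s6, map_smul]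
    have h := hpar a b x x
    rw [hKdec x x] at h
    rw [hRadd, hRsmul, hRcE1 a haD2 b hbD2,
      hRcD3 a haD2 b hbD2 _ (hLD3 x hxD2 x hxD2), r3] at h
    rw [c3, c4, hKsymm (K b (K a x)) x] at h
    simp only [smul_zero, zero_add] at h
    linear_combination (norm := module) (-(1:ℝ)/2) • h
  have C4 : K x (K b (K a x)) = -((τ * ⟪x,x⟫) • K a b) := by
    linear_combination (norm := module) ((1:ℝ)/4) • E4 + ((1:ℝ)/4) • E5
  have C4b : K b (K x (K a x)) = (τ * ⟪x,x⟫) • K a b := by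
    linear_combination (norm := module) E5 - C4
  -- inner products
  have iKab : ⟪K a b, K a b⟫ = τ := by
    have h := hKcub a b (K a b)
    rw [hτa, real_inner_smul_left, hb1] at h
    simpa using h
  have C5 : ⟪K a x, K a x⟫ = τ * ⟪x,x⟫ := by
    have h2 : ⟪a, K x (K a x)⟫ = ⟪K a x, K a x⟫ := by
      rw [real_inner_comm (K x (K a x)) a, hKcub x (K a x) a, hKsymm x a]
    have h1 : ⟪K b (K x (K a x)), K a b⟫ = τ * ⟪K a x, K a x⟫ := by
      rw [hKcub b (K x (K a x)) (K a b), hτb, real_inner_smul_left, h2]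
    have h3 : ⟪K b (K x (K a x)), K a b⟫ = τ * ⟪x,x⟫ * τ := by
      rw [C4b, real_inner_smul_left, iKab]
    have h5 : τ * ⟪K a x, K a x⟫ = τ * (τ * ⟪x,x⟫) := by
      rw [← h1, h3]; ring
    exact mul_left_cancel₀ (ne_of_gt hτ0) h5
  have C6 : ⟪K b (K a x), K b (K a x)⟫ = τ * (τ * ⟪x,x⟫) := by
    have h := hKcub b (K a x) (K b (K a x))
    rw [E1, real_inner_smul_left, C5] at h
    exact h
  have C3a : ⟪a, K b (K a x)⟫ = 0 := by
    have h := hKcub a (K b (K a x)) e1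
    rw [C2, hKD2e1 a haD2, real_inner_smul_left] at h
    simp only [inner_zero_left] at h
    exact (mul_eq_zero.mp h.symm).resolve_left (by positivity)
  have C3b : ⟪b, K b (K a x)⟫ = 0 := by
    have h := hKcub b (K b (K a x)) e1
    rw [E1, hKD2e1 b hbD2, real_inner_smul_left, real_inner_smul_left,
      hiD3' (K a x) wD3] at h
    exact (mul_eq_zero.mp (by linarith : lam1/2 * ⟪b, K b (K a x)⟫ = 0)).resolve_left
      (by positivity)
  have C3x : ⟪x, K b (K a x)⟫ = 0 := by
    rw [real_inner_comm (K b (K a x)) x, hKcub b (K a x) x, hKbx]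
    simp
  exact ⟨E1, C2, C3a, C3b, C3x, C4, C5, C6⟩

set_option maxHeartbeats 2000000 in
/-- Lemma 4.13: given the decomposition of `D₂` and a unit vector `u₂ ∈ V_{v_l}(0)`,
there is a unique `u₁ ∈ span{v_j} ⊕ V_{v_j}(0)` with `L(u₁,v_l) = L(v_j,u₂)`; it is a
unit vector in `V_{v_j}(0)` and `L(v_j,v_l) = −L(u₁,u₂)`. -/
theorem stmt_16 {V : Type*} [NormedAddCommGroup V] [InnerProductSpace ℝ V]
    (n m : ℕ) (hn : finrank ℝ V = n) (hn2 : 2 ≤ n)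
    (ε : ℝ) (hε : ε = 1 ∨ ε = -1)
    (K : V →ₗ[ℝ] V →ₗ[ℝ] V)
    (hKsymm : ∀ X Y : V, K X Y = K Y X)
    (hKcub : ∀ X Y Z : V, ⟪K X Y, Z⟫ = ⟪K X Z, Y⟫)
    (hpar : ∀ X Y Z U : V,
      Rc ε K X Y (K Z U) = K (Rc ε K X Y Z) U + K Z (Rc ε K X Y U))
    (e1 : V) (he1 : ‖e1‖ = 1)
    (lam1 η μ τ : ℝ)
    (hlam1 : lam1 = ⟪K e1 e1, e1⟫) (hlam1pos : 0 < lam1)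
    (hmax : ∀ u : V, ‖u‖ = 1 → ⟪K u u, u⟫ ≤ lam1)
    (hdisc : 0 < lam1 ^ 2 - 4 * ε)
    (hη : η = Real.sqrt (lam1 ^ 2 - 4 * ε) / 2)
    (hμ : μ = (lam1 - Real.sqrt (lam1 ^ 2 - 4 * ε)) / 2)
    (hτ : τ = η * (η + lam1 / 2) / 4)
    (hm2 : 2 ≤ m) (hmn : m ≤ n - 1)
    (hdimD2 : finrank ℝ (D2s lam1 e1 K) = m - 1)
    (hsplit : (ℝ ∙ e1) ⊔ D2s lam1 e1 K ⊔ D3s μ e1 K = ⊤)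
    (hLD3 : ∀ v1 ∈ D2s lam1 e1 K, ∀ v2 ∈ D2s lam1 e1 K,
      Lop lam1 e1 K v1 v2 ∈ D3s μ e1 K)
    (hKD2 : ∀ v ∈ D2s lam1 e1 K, ∀ w ∈ D3s μ e1 K, K v w ∈ D2s lam1 e1 K)
    (k0 : ℕ) (hk0 : 1 ≤ k0) (v : Fin k0 → V)
    (hvj : ∀ j, ‖v j‖ = 1 ∧ v j ∈ D2s lam1 e1 K)
    (hblocks : ∀ j l, j ≠ l →
      ∀ x ∈ (ℝ ∙ v j) ⊔ Vvs lam1 0 e1 K (v j),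
        ∀ y ∈ (ℝ ∙ v l) ⊔ Vvs lam1 0 e1 K (v l), ⟪x, y⟫ = 0)
    (hsup : (⨆ j, (ℝ ∙ v j) ⊔ Vvs lam1 0 e1 K (v j)) = D2s lam1 e1 K)
    (hτmem : ∀ j l, j ≠ l → v l ∈ Vvs lam1 τ e1 K (v j))
    (hk02 : 2 ≤ k0)
    (j l : Fin k0) (hjl : j ≠ l)
    (u2 : V) (hu2 : u2 ∈ Vvs lam1 0 e1 K (v l)) (hu2u : ‖u2‖ = 1) :
    ∃ u1 : V, u1 ∈ (ℝ ∙ v j) ⊔ Vvs lam1 0 e1 K (v j) ∧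
      Lop lam1 e1 K u1 (v l) = Lop lam1 e1 K (v j) u2 ∧
      (∀ u1' ∈ (ℝ ∙ v j) ⊔ Vvs lam1 0 e1 K (v j),
        Lop lam1 e1 K u1' (v l) = Lop lam1 e1 K (v j) u2 → u1' = u1) ∧
      ‖u1‖ = 1 ∧ u1 ∈ Vvs lam1 0 e1 K (v j) ∧
      Lop lam1 e1 K (v j) (v l) = -Lop lam1 e1 K u1 u2 := by
  have hη0 : 0 < η := by
    rw [hη]; have := Real.sqrt_pos.mpr hdisc; linarith
  have hτ0 : 0 < τ := by rw [hτ]; nlinarith [hη0, hlam1pos]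
  have hτne : τ ≠ 0 := ne_of_gt hτ0
  have hPopEq : ∀ vv y : V,
      Pop lam1 e1 K vv y = K vv (K vv y - (lam1/2*⟪vv,y⟫) • e1) := by
    intro vv y
    simp only [Pop, LinearMap.comp_apply, LinearMap.sub_apply, LinearMap.smul_apply,
      LinearMap.toSpanSingleton_apply, ContinuousLinearMap.coe_coe, innerSL_apply_apply,
      smul_smul]
  have hVmem : ∀ (c : ℝ) (vv y : V), y ∈ Vvs lam1 c e1 K vv ↔
      (y ∈ D2s lam1 e1 K ∧ (∀ u ∈ (ℝ ∙ vv), ⟪u,y⟫ = 0) ∧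
        Pop lam1 e1 K vv y = c • y) := by
    intro c vv y
    simp only [Vvs, Submodule.mem_inf, Module.End.mem_eigenspace_iff,
      Submodule.mem_orthogonal, and_assoc]
  have haD2 := (hvj j).2
  have hbD2 := (hvj l).2
  have ha1 : ⟪v j, v j⟫ = 1 := by
    rw [real_inner_self_eq_norm_mul_norm, (hvj j).1]; norm_num
  have hb1 : ⟪v l, v l⟫ = 1 := by
    rw [real_inner_self_eq_norm_mul_norm, (hvj l).1]; norm_num
  have hu21 : ⟪u2, u2⟫ = 1 := by
    rw [real_inner_self_eq_norm_mul_norm, hu2u]; norm_num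
  obtain ⟨-, hbo, hbe⟩ := (hVmem τ (v j) (v l)).mp (hτmem j l hjl)
  have hab : ⟪v j, v l⟫ = 0 := hbo (v j) (Submodule.mem_span_singleton_self (v j))
  have hτab : K (v j) (K (v j) (v l)) = τ • (v l) := by
    have h := hbe; rw [hPopEq, hab] at h
    simpa using h
  obtain ⟨-, hao, hae⟩ := (hVmem τ (v l) (v j)).mp (hτmem l j (Ne.symm hjl))
  have hba : ⟪v l, v j⟫ = 0 := hao (v l) (Submodule.mem_span_singleton_self (v l))
  have hτba : K (v l) (K (v j) (v l)) = τ • (v j) := by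
    have h := hae; rw [hPopEq, hba, hKsymm (v l) (v j)] at h
    simpa using h
  obtain ⟨hu2D2, hu2o, hu2e⟩ := (hVmem 0 (v l) u2).mp hu2
  have hbu2 : ⟪v l, u2⟫ = 0 := hu2o (v l) (Submodule.mem_span_singleton_self (v l))
  have hKbu2 : K (v l) u2 = 0 := by
    have h0 : K (v l) (K (v l) u2) = 0 := by
      have h := hu2e; rw [hPopEq, hbu2] at h; simpa using h
    have h := hKcub (v l) (K (v l) u2) u2
    rw [h0] at h
    have h2 : ⟪K (v l) u2, K (v l) u2⟫ = (0:ℝ) := by simpa using h.symm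
    exact inner_self_eq_zero.mp h2
  have hau2 : ⟪v j, u2⟫ = 0 :=
    hblocks j l hjl (v j)
      (Submodule.mem_sup_left (Submodule.mem_span_singleton_self (v j)))
      u2 (Submodule.mem_sup_right hu2)
  obtain ⟨E1, C2, C3a, C3b, C3x, C4, C5, C6⟩ :=
    coreAux ε lam1 η μ τ K hKsymm hKcub hpar e1 he1 hlam1 hlam1pos hdisc hη hμ hτ
      hsplit hLD3 hKD2 (v j) (v l) u2 haD2 hbD2 hu2D2 ha1 hb1 hab hau2 hbu2
      hτab hτba hKbu2
  set p : V := K (v l) (K (v j) u2) with hp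
  set u1 : V := (τ⁻¹ : ℝ) • p with hu1
  have hwD3 : K (v j) u2 ∈ D3s μ e1 K := by
    have h := hLD3 (v j) haD2 u2 hu2D2
    rwa [show Lop lam1 e1 K (v j) u2 = K (v j) u2 by simp [Lop, hau2]] at h
  have hpD2 : p ∈ D2s lam1 e1 K := hKD2 (v l) hbD2 _ hwD3
  have hu1D2 : u1 ∈ D2s lam1 e1 K := Submodule.smul_mem _ _ hpD2
  have hau1 : ⟪v j, u1⟫ = 0 := by
    rw [hu1, real_inner_smul_right, C3a, mul_zero]
  have hKau1 : K (v j) u1 = 0 := by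
    rw [hu1, map_smul, C2, smul_zero]
  have hu1V : u1 ∈ Vvs lam1 0 e1 K (v j) := by
    rw [hVmem]
    refine ⟨hu1D2, ?_, ?_⟩
    · intro y hy
      obtain ⟨c, rfl⟩ := Submodule.mem_span_singleton.mp hy
      rw [real_inner_smul_left, hau1, mul_zero]
    · rw [hPopEq, hau1, hKau1]
      simp
  have hu1sup : u1 ∈ (ℝ ∙ (v j)) ⊔ Vvs lam1 0 e1 K (v j) :=
    Submodule.mem_sup_right hu1V
  have hτinv : τ⁻¹ * τ = 1 := inv_mul_cancel₀ hτne
  have hKu1b : K u1 (v l) = K (v j) u2 := by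
    rw [hu1]
    have h1 : K ((τ⁻¹:ℝ) • p) (v l) = (τ⁻¹:ℝ) • K p (v l) := by
      simp only [map_smul, LinearMap.smul_apply]
    rw [h1, hKsymm p (v l), E1, smul_smul, hτinv, one_smul]
  have hu1b0 : ⟪u1, v l⟫ = 0 := by
    rw [hu1, real_inner_smul_left]
    have h2 : ⟪p, v l⟫ = 0 := by rw [real_inner_comm]; exact C3b
    rw [h2, mul_zero]
  have hLu1b : Lop lam1 e1 K u1 (v l) = Lop lam1 e1 K (v j) u2 := by
    simp [Lop, hKu1b, hu1b0, hau2]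
  have hnorm1 : ‖u1‖ = 1 := by
    have h1 : ⟪u1, u1⟫ = 1 := by
      rw [hu1, real_inner_smul_left, real_inner_smul_right, C6, hu21]
      field_simp
    have h2 : ‖u1‖ * ‖u1‖ = 1 := by rw [← real_inner_self_eq_norm_mul_norm, h1]
    rcases mul_self_eq_one_iff.mp h2 with h | h
    · exact h
    · have := norm_nonneg u1; linarith
  have hLneg : Lop lam1 e1 K (v j) (v l) = -Lop lam1 e1 K u1 u2 := by
    have hKu1u2 : K u1 u2 = - K (v j) (v l) := by
      rw [hu1]
      have h1 : K ((τ⁻¹:ℝ) • p) u2 = (τ⁻¹:ℝ) • K u2 p := by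
        simp only [map_smul, LinearMap.smul_apply]
        rw [hKsymm p u2]
      rw [h1, C4, hu21, mul_one, smul_neg, smul_smul, hτinv, one_smul]
    have hu1u2 : ⟪u1, u2⟫ = 0 := by
      rw [hu1, real_inner_smul_left]
      have h2 : ⟪p, u2⟫ = 0 := by rw [real_inner_comm]; exact C3x
      rw [h2, mul_zero]
    simp [Lop, hKu1u2, hu1u2, hab]
  have huniq : ∀ u1' ∈ (ℝ ∙ (v j)) ⊔ Vvs lam1 0 e1 K (v j),
      Lop lam1 e1 K u1' (v l) = Lop lam1 e1 K (v j) u2 → u1' = u1 := by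
    intro u1' hu1' hL'
    have hdmem : u1' - u1 ∈ (ℝ ∙ (v j)) ⊔ Vvs lam1 0 e1 K (v j) :=
      Submodule.sub_mem _ hu1' hu1sup
    have hdb : ⟪u1' - u1, v l⟫ = 0 :=
      hblocks j l hjl _ hdmem (v l)
        (Submodule.mem_sup_left (Submodule.mem_span_singleton_self (v l)))
    have hKdb : K (u1' - u1) (v l) = 0 := by
      have hsub : Lop lam1 e1 K (u1' - u1) (v l)
          = Lop lam1 e1 K u1' (v l) - Lop lam1 e1 K u1 (v l) := by
        simp only [Lop, map_sub, LinearMap.sub_apply, inner_sub_left]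
        module
      have h0 : Lop lam1 e1 K (u1' - u1) (v l) = 0 := by
        rw [hsub, hL', hLu1b, sub_self]
      simp only [Lop, hdb] at h0
      simpa using h0
    obtain ⟨y, hy, d0, hd0, hsum⟩ := Submodule.mem_sup.mp hdmem
    obtain ⟨c, rfl⟩ := Submodule.mem_span_singleton.mp hy
    obtain ⟨hd0D2, hd0o, hd0e⟩ := (hVmem 0 (v j) d0).mp hd0
    have had0 : ⟪v j, d0⟫ = 0 := hd0o (v j) (Submodule.mem_span_singleton_self (v j))
    have hKad0 : K (v j) d0 = 0 := by
      have h0 : K (v j) (K (v j) d0) = 0 := by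
        have h := hd0e; rw [hPopEq, had0] at h; simpa using h
      have h := hKcub (v j) (K (v j) d0) d0
      rw [h0] at h
      have h2 : ⟪K (v j) d0, K (v j) d0⟫ = (0:ℝ) := by simpa using h.symm
      exact inner_self_eq_zero.mp h2
    have hbd0 : ⟪v l, d0⟫ = 0 := by
      rw [real_inner_comm]
      exact hblocks j l hjl d0 (Submodule.mem_sup_right hd0) (v l)
        (Submodule.mem_sup_left (Submodule.mem_span_singleton_self (v l)))
    have hτ1 : K (v l) (K (v l) (v j)) = τ • (v j) := by
      rw [hKsymm (v l) (v j)]; exact hτba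
    have hτ2 : K (v j) (K (v l) (v j)) = τ • (v l) := by
      rw [hKsymm (v l) (v j)]; exact hτab
    obtain ⟨-, -, -, -, -, -, C5', -⟩ :=
      coreAux ε lam1 η μ τ K hKsymm hKcub hpar e1 he1 hlam1 hlam1pos hdisc hη hμ hτ
        hsplit hLD3 hKD2 (v l) (v j) d0 hbD2 haD2 hd0D2 hb1 ha1 hba hbd0 had0
        hτ1 hτ2 hKad0
    have iKab : ⟪K (v j) (v l), K (v j) (v l)⟫ = τ := by
      have h := hKcub (v j) (v l) (K (v j) (v l))
      rw [hτab, real_inner_smul_left, hb1] at h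
      simpa using h
    have hcross : ⟪K (v j) (v l), K (v l) d0⟫ = 0 := by
      rw [real_inner_comm, hKcub (v l) d0 (K (v j) (v l)), hτba,
        real_inner_smul_left, had0, mul_zero]
    have hexp : (0:V) = c • K (v j) (v l) + K (v l) d0 := by
      rw [← hKdb, ← hsum]
      simp only [map_add, map_smul, LinearMap.add_apply, LinearMap.smul_apply]
      rw [hKsymm d0 (v l)]
    have hzero : (0:ℝ) = c*(c*τ) + 2*(c*0) + τ*⟪d0,d0⟫ := by
      have h : (0:ℝ) = ⟪c • K (v j) (v l) + K (v l) d0,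
          c • K (v j) (v l) + K (v l) d0⟫ := by
        rw [← hexp]; simp
      rw [real_inner_add_add_self] at h
      simp only [real_inner_smul_left, real_inner_smul_right] at h
      rw [iKab, hcross, C5'] at h
      exact h
    have hd0nn : (0:ℝ) ≤ ⟪d0,d0⟫ := real_inner_self_nonneg
    have e2' : τ * ⟪d0,d0⟫ = 0 :=
      le_antisymm (by nlinarith [mul_self_nonneg c, hτ0.le])
        (mul_nonneg hτ0.le hd0nn)
    have hd00 : ⟪d0,d0⟫ = 0 := by
      rcases mul_eq_zero.mp e2' with h | h
      · exact absurd h hτne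
      · exact h
    have hd0z : d0 = 0 := inner_self_eq_zero.mp hd00
    have hc0 : c = 0 := by
      have h2 : c * (c*τ) = 0 := by
        linear_combination -hzero - τ * hd00
      rcases mul_eq_zero.mp h2 with h | h
      · exact h
      · rcases mul_eq_zero.mp h with h' | h'
        · exact h'
        · exact absurd h' hτne
    have hfin : u1' - u1 = 0 := by rw [← hsum, hc0, hd0z]; simp
    exact sub_eq_zero.mp hfin
  exact ⟨u1, hu1sup, hLu1b, huniq, hnorm1, hu1V, hLneg⟩


end
end

section
/- If the image of L spans a one-dimensional subspace of D3, then there exists a unit vector w_1 ∈ D3 such that L(v_1, v_2) = √((1/2)λ1η)·⟨v_1, v_2⟩·w_1 for all v_1, v_2 ∈ D2. -/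
open scoped RealInnerProductSpace
open Module Submodule

noncomputable section

variable {V : Type*} [NormedAddCommGroup V] [InnerProductSpace ℝ V]

lemma sign_dichotomy {V : Type*} [NormedAddCommGroup V] [InnerProductSpace ℝ V]
    (D : Submodule ℝ V) (L : V → V → V) (w0 : V) (c : ℝ) (hc : 0 < c)
    (hw : ⟪w0, w0⟫ = 1)
    (hLs : ∀ a b : V, L a b = L b a)
    (hLa : ∀ a b d : V, L (a + b) d = L a d + L b d)
    (hrep : ∀ a ∈ D, ∀ b ∈ D, L a b = ⟪L a b, w0⟫ • w0)
    (hkey : ∀ a ∈ D, ∀ b ∈ D, ⟪L a b, L a a⟫ = c ^ 2 * (⟪a, b⟫ * ⟪a, a⟫)) :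
    (∀ a ∈ D, ∀ b ∈ D, L a b = (c * ⟪a, b⟫) • w0) ∨
    (∀ a ∈ D, ∀ b ∈ D, L a b = (c * ⟪a, b⟫) • (-w0)) := by
  have hL0 : ∀ b : V, L 0 b = 0 := by
    intro b
    have h := hLa 0 0 b
    rw [add_zero] at h
    exact add_eq_left.mp h.symm
  have hL0' : ∀ a : V, L a 0 = 0 := fun a => by rw [hLs, hL0]
  -- scalar form of the key identity
  have hkeyφ : ∀ a ∈ D, ∀ b ∈ D,
      ⟪L a b, w0⟫ * ⟪L a a, w0⟫ = c ^ 2 * (⟪a, b⟫ * ⟪a, a⟫) := by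
    intro a ha b hb
    have hk := hkey a ha b hb
    rw [hrep a ha b hb, hrep a ha a ha, real_inner_smul_left, real_inner_smul_right,
      hw] at hk
    linarith [hk]
  have hselfpos : ∀ a : V, a ≠ 0 → 0 < ⟪a, a⟫ := by
    intro a h0
    rw [real_inner_self_eq_norm_sq]
    exact pow_pos (norm_pos_iff.mpr h0) 2
  -- each diagonal value is ±c⟨a,a⟩
  have hBB : ∀ a ∈ D, ⟪L a a, w0⟫ = c * ⟪a, a⟫ ∨ ⟪L a a, w0⟫ = -(c * ⟪a, a⟫) := by
    intro a ha
    have h := hkeyφ a ha a ha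
    have h2 : ⟪L a a, w0⟫ * ⟪L a a, w0⟫ = (c * ⟪a, a⟫) * (c * ⟪a, a⟫) := by
      linear_combination h
    exact mul_self_eq_mul_self_iff.mp h2
  -- global sign consistency
  have hsign : (∀ a ∈ D, ⟪L a a, w0⟫ = c * ⟪a, a⟫) ∨
      (∀ a ∈ D, ⟪L a a, w0⟫ = -(c * ⟪a, a⟫)) := by
    by_contra h
    push_neg at h
    obtain ⟨⟨v, hv, hvne⟩, ⟨u, hu, hune⟩⟩ := h
    have hφv : ⟪L v v, w0⟫ = -(c * ⟪v, v⟫) := (hBB v hv).resolve_left hvne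
    have hφu : ⟪L u u, w0⟫ = c * ⟪u, u⟫ := (hBB u hu).resolve_right hune
    have hv0 : v ≠ 0 := by
      rintro rfl
      exact hvne (by rw [hL0, inner_zero_left, inner_zero_left, mul_zero])
    have hu0 : u ≠ 0 := by
      rintro rfl
      exact hune (by rw [hL0, inner_zero_left, inner_zero_left, mul_zero, neg_zero])
    have hpv : 0 < ⟪v, v⟫ := hselfpos v hv0
    have hpu : 0 < ⟪u, u⟫ := hselfpos u hu0
    -- cross values
    have hvu : ⟪L v u, w0⟫ = -(c * ⟪v, u⟫) := by
      have hk := hkeyφ v hv u hu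
      have h1 : ⟪L v u, w0⟫ * (c * ⟪v, v⟫) = (-(c * ⟪v, u⟫)) * (c * ⟪v, v⟫) := by
        linear_combination (-1 : ℝ) * hk + ⟪L v u, w0⟫ * hφv
      exact mul_right_cancel₀ (by positivity) h1
    have huv : ⟪L u v, w0⟫ = c * ⟪u, v⟫ := by
      have hk := hkeyφ u hu v hv
      have h1 : ⟪L u v, w0⟫ * (c * ⟪u, u⟫) = (c * ⟪u, v⟫) * (c * ⟪u, u⟫) := by
        linear_combination hk - ⟪L u v, w0⟫ * hφu
      exact mul_right_cancel₀ (by positivity) h1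
    have horth : ⟪v, u⟫ = 0 := by
      have hsymm : ⟪L v u, w0⟫ = ⟪L u v, w0⟫ := by rw [hLs]
      rw [real_inner_comm v u] at huv
      have : c * ⟪v, u⟫ = 0 := by linarith [hsymm, hvu, huv]
      exact (mul_eq_zero.mp this).resolve_left (ne_of_gt hc)
    have horth2 : ⟪u, v⟫ = 0 := by rw [real_inner_comm]; exact horth
    -- the vector u+v
    have hz : u + v ∈ D := D.add_mem hu hv
    have hLz : L (u+v) (u+v) = L u u + L u v + L v u + L v v := by
      have h2 : ∀ a b d : V, L d (a + b) = L d a + L d b := by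
        intro a b d; rw [hLs, hLa, hLs a d, hLs b d]
      rw [hLa, h2, h2]; abel
    have hφz : ⟪L (u+v) (u+v), w0⟫ = c * ⟪u, u⟫ - c * ⟪v, v⟫ := by
      rw [hLz, inner_add_left, inner_add_left, inner_add_left, hφu, hφv, hvu, huv,
        horth, horth2]
      ring
    have hzin : ⟪u + v, u + v⟫ = ⟪u, u⟫ + ⟪v, v⟫ := by
      rw [inner_add_left, inner_add_right, inner_add_right, horth, horth2]
      ring
    rcases hBB _ hz with h | h <;> rw [hφz, hzin] at h <;> nlinarith
  -- conclude
  rcases hsign with hpos | hneg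
  · left
    intro a ha b hb
    have hval : ⟪L a b, w0⟫ = c * ⟪a, b⟫ := by
      by_cases h0 : a = 0
      · subst h0; rw [hL0, inner_zero_left, inner_zero_left, mul_zero]
      · have hpa : 0 < ⟪a, a⟫ := hselfpos a h0
        have hk := hkeyφ a ha b hb
        have h1 : ⟪L a b, w0⟫ * (c * ⟪a, a⟫) = (c * ⟪a, b⟫) * (c * ⟪a, a⟫) := by
          linear_combination hk - ⟪L a b, w0⟫ * (hpos a ha)
        exact mul_right_cancel₀ (by positivity) h1
    rw [hrep a ha b hb, hval]
  · right
    intro a ha b hb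
    have hval : ⟪L a b, w0⟫ = -(c * ⟪a, b⟫) := by
      by_cases h0 : a = 0
      · subst h0; rw [hL0, inner_zero_left, inner_zero_left, mul_zero, neg_zero]
      · have hpa : 0 < ⟪a, a⟫ := hselfpos a h0
        have hk := hkeyφ a ha b hb
        have h1 : ⟪L a b, w0⟫ * (c * ⟪a, a⟫) = (-(c * ⟪a, b⟫)) * (c * ⟪a, a⟫) := by
          linear_combination (-1:ℝ) * hk + ⟪L a b, w0⟫ * (hneg a ha)
        exact mul_right_cancel₀ (by positivity) h1
    rw [hrep a ha b hb, hval, neg_smul, smul_neg]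

/-- The key scalar identity: `⟨L(v,u), L(v,v)⟩ = (λ₁η/2)⟨v,u⟩⟨v,v⟩`. -/
lemma key_identity {V : Type*} [NormedAddCommGroup V] [InnerProductSpace ℝ V]
    (ε : ℝ) (K : V →ₗ[ℝ] V →ₗ[ℝ] V)
    (hKsymm : ∀ X Y : V, K X Y = K Y X)
    (hKcub : ∀ X Y Z : V, ⟪K X Y, Z⟫ = ⟪K X Z, Y⟫)
    (e1 : V) (he1 : ⟪e1, e1⟫ = 1)
    (lam1 η μ : ℝ) (hηpos : 0 < η)
    (hμ' : μ = lam1 / 2 - η)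
    (hη2 : η ^ 2 = lam1 ^ 2 / 4 - ε)
    (hKe1e1 : K e1 e1 = lam1 • e1)
    (v u : V)
    (hev : ⟪e1, v⟫ = 0) (heu : ⟪e1, u⟫ = 0)
    (hKv : K e1 v = (lam1 / 2) • v) (hKu : K e1 u = (lam1 / 2) • u)
    (heLvv : ⟪e1, Lop lam1 e1 K v v⟫ = 0)
    (heLvu : ⟪e1, Lop lam1 e1 K v u⟫ = 0)
    (hKLvv : K e1 (Lop lam1 e1 K v v) = μ • Lop lam1 e1 K v v)
    (hpar : Rc ε K e1 v (K v v) = K (Rc ε K e1 v v) v + K v (Rc ε K e1 v v)) :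
    ⟪Lop lam1 e1 K v u, Lop lam1 e1 K v v⟫ = lam1 * η / 2 * (⟪v, u⟫ * ⟪v, v⟫) := by
  set Lvv := Lop lam1 e1 K v v with hLvvdef
  set Lvu := Lop lam1 e1 K v u with hLvudef
  set p := (⟪v, v⟫ : ℝ) with hp
  set q := (⟪v, u⟫ : ℝ) with hq
  set S := (⟪Lvu, Lvv⟫ : ℝ) with hS
  have hLvve1 : ⟪Lvv, e1⟫ = 0 := by rw [real_inner_comm]; exact heLvv
  have hLvue1 : ⟪Lvu, e1⟫ = 0 := by rw [real_inner_comm]; exact heLvu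
  have hKvv : K v v = Lvv + (lam1 / 2 * p) • e1 := by
    rw [hLvvdef]; simp only [Lop]; abel
  have hKvu : K v u = Lvu + (lam1 / 2 * q) • e1 := by
    rw [hLvudef]; simp only [Lop]; abel
  -- inner product expansion helper
  have hip : ∀ (a b : ℝ) (x y : V), ⟪x, e1⟫ = 0 → ⟪y, e1⟫ = 0 →
      ⟪x + a • e1, y + b • e1⟫ = ⟪x, y⟫ + a * b := by
    intro a b x y hx hy
    have hy' : ⟪e1, y⟫ = 0 := by rw [real_inner_comm]; exact hy
    rw [inner_add_left, inner_add_right, inner_add_right, real_inner_smul_left,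
      real_inner_smul_right, real_inner_smul_left, real_inner_smul_right,
      hx, hy', he1]
    ring
  have h2 : K e1 (K v v) = μ • Lvv + (lam1 / 2 * p * lam1) • e1 := by
    rw [hKvv, map_add, map_smul, hKLvv, hKe1e1, smul_smul]
  have hA : Rc ε K e1 v v = ((ε - lam1 ^ 2 / 4) * p) • e1 + η • Lvv := by
    simp only [Rc]
    rw [hev, hKv, map_smul, h2, hKvv, hμ']
    module
  -- pieces
  have t1e : ⟪e1, K v v⟫ = lam1 / 2 * p := by
    rw [hKvv, inner_add_right, heLvv, real_inner_smul_right, he1]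
    ring
  have t2 : ⟪K v u, K v v⟫ = S + (lam1 / 2 * q) * (lam1 / 2 * p) := by
    rw [hKvu, hKvv]
    exact hip _ _ _ _ hLvue1 hLvve1
  have tKvuLvv : ⟪K v u, Lvv⟫ = S := by
    rw [hKvu, inner_add_left, real_inner_smul_left, heLvv]
    ring
  have tKvue1 : ⟪K v u, e1⟫ = lam1 / 2 * q := by
    rw [hKvu, inner_add_left, real_inner_smul_left, hLvue1, he1]
    ring
  have hstep : ⟪u, K v (K v v)⟫ = ⟪K v u, K v v⟫ := by
    rw [real_inner_comm, hKcub v (K v v) u]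
  have t3 : ⟪K e1 (K v (K v v)), u⟫ = lam1 / 2 * (S + (lam1 / 2 * q) * (lam1 / 2 * p)) := by
    rw [hKcub e1 (K v (K v v)) u, hKu, real_inner_smul_left, hstep, t2]
  have t4 : ⟪K v (K e1 (K v v)), u⟫ = μ * S + (lam1 / 2 * p * lam1) * (lam1 / 2 * q) := by
    calc ⟪K v (K e1 (K v v)), u⟫ = ⟪K v u, K e1 (K v v)⟫ := hKcub v (K e1 (K v v)) u
      _ = μ * S + (lam1 / 2 * p * lam1) * (lam1 / 2 * q) := by
          rw [h2, inner_add_right, real_inner_smul_right, real_inner_smul_right,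
            tKvuLvv, tKvue1]
  have hR1 : ⟪K v u, Rc ε K e1 v v⟫ = ((ε - lam1 ^ 2 / 4) * p) * (lam1 / 2 * q) + η * S := by
    rw [hA, inner_add_right, real_inner_smul_right, real_inner_smul_right, tKvue1, tKvuLvv]
  have hterm1 : ⟪K (Rc ε K e1 v v) v, u⟫
      = ((ε - lam1 ^ 2 / 4) * p) * (lam1 / 2 * q) + η * S := by
    rw [hKsymm (Rc ε K e1 v v) v, hKcub v (Rc ε K e1 v v) u]
    exact hR1
  have hterm2 : ⟪K v (Rc ε K e1 v v), u⟫
      = ((ε - lam1 ^ 2 / 4) * p) * (lam1 / 2 * q) + η * S := by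
    rw [hKcub v (Rc ε K e1 v v) u]
    exact hR1
  have hLv : ⟪Rc ε K e1 v (K v v), u⟫
      = -(ε * (lam1 / 2 * p * q)) - lam1 / 2 * (S + (lam1 / 2 * q) * (lam1 / 2 * p))
        + (μ * S + (lam1 / 2 * p * lam1) * (lam1 / 2 * q)) := by
    simp only [Rc, inner_add_left, inner_sub_left, real_inner_smul_left]
    rw [t1e, heu, t3, t4]
    ring
  have hE2 : ⟪Rc ε K e1 v (K v v), u⟫
      = ⟪K (Rc ε K e1 v v) v, u⟫ + ⟪K v (Rc ε K e1 v v), u⟫ := by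
    rw [hpar, inner_add_left]
  have hEq : -(ε * (lam1 / 2 * p * q)) - lam1 / 2 * (S + (lam1 / 2 * q) * (lam1 / 2 * p))
        + (μ * S + (lam1 / 2 * p * lam1) * (lam1 / 2 * q))
      = (((ε - lam1 ^ 2 / 4) * p) * (lam1 / 2 * q) + η * S)
        + (((ε - lam1 ^ 2 / 4) * p) * (lam1 / 2 * q) + η * S) := by
    rw [hLv, hterm1, hterm2] at hE2
    exact hE2
  rw [hμ'] at hEq
  have hcancel : 3 * η * S = 3 * η * (lam1 * η / 2 * (q * p)) := by
    linear_combination (-1 : ℝ) * hEq - (3 * lam1 * p * q / 2) * hη2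
  exact mul_left_cancel₀ (by positivity) hcancel

/-- Lemma 7.1: if the image of `L` spans a one-dimensional subspace of `D₃`, then
there is a unit vector `w₁ ∈ D₃` with `L(v₁,v₂) = √(λ₁η/2)·⟨v₁,v₂⟩·w₁` on `D₂`. -/
theorem stmt_18 {V : Type*} [NormedAddCommGroup V] [InnerProductSpace ℝ V]
    (n m : ℕ) (hn : finrank ℝ V = n) (hn2 : 2 ≤ n)
    (ε : ℝ) (hε : ε = 1 ∨ ε = -1)
    (K : V →ₗ[ℝ] V →ₗ[ℝ] V)
    (hKsymm : ∀ X Y : V, K X Y = K Y X)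
    (hKcub : ∀ X Y Z : V, ⟪K X Y, Z⟫ = ⟪K X Z, Y⟫)
    (hpar : ∀ X Y Z U : V,
      Rc ε K X Y (K Z U) = K (Rc ε K X Y Z) U + K Z (Rc ε K X Y U))
    (e1 : V) (he1 : ‖e1‖ = 1)
    (lam1 η μ τ : ℝ)
    (hlam1 : lam1 = ⟪K e1 e1, e1⟫) (hlam1pos : 0 < lam1)
    (hmax : ∀ u : V, ‖u‖ = 1 → ⟪K u u, u⟫ ≤ lam1)
    (hdisc : 0 < lam1 ^ 2 - 4 * ε)
    (hη : η = Real.sqrt (lam1 ^ 2 - 4 * ε) / 2)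
    (hμ : μ = (lam1 - Real.sqrt (lam1 ^ 2 - 4 * ε)) / 2)
    (hτ : τ = η * (η + lam1 / 2) / 4)
    (hm2 : 2 ≤ m) (hmn : m ≤ n - 1)
    (hdimD2 : finrank ℝ (D2s lam1 e1 K) = m - 1)
    (hsplit : (ℝ ∙ e1) ⊔ D2s lam1 e1 K ⊔ D3s μ e1 K = ⊤)
    (hLD3 : ∀ v1 ∈ D2s lam1 e1 K, ∀ v2 ∈ D2s lam1 e1 K,
      Lop lam1 e1 K v1 v2 ∈ D3s μ e1 K)
    (hKD2 : ∀ v ∈ D2s lam1 e1 K, ∀ w ∈ D3s μ e1 K, K v w ∈ D2s lam1 e1 K)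
    (him : finrank ℝ (Submodule.span ℝ
      {w : V | ∃ v1 ∈ D2s lam1 e1 K, ∃ v2 ∈ D2s lam1 e1 K,
        w = Lop lam1 e1 K v1 v2}) = 1) :
    ∃ w1 : V, ‖w1‖ = 1 ∧ w1 ∈ D3s μ e1 K ∧
      ∀ v1 ∈ D2s lam1 e1 K, ∀ v2 ∈ D2s lam1 e1 K,
        Lop lam1 e1 K v1 v2 = (Real.sqrt (lam1 * η / 2) * ⟪v1, v2⟫) • w1 := by
  classical
  -- basic scalar facts
  have he1e1 : ⟪e1, e1⟫ = 1 := by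
    rw [real_inner_self_eq_norm_mul_norm, he1]; norm_num
  have hspos : 0 < Real.sqrt (lam1 ^ 2 - 4 * ε) := Real.sqrt_pos.mpr hdisc
  have hηpos : 0 < η := by rw [hη]; positivity
  have hμ' : μ = lam1 / 2 - η := by rw [hμ, hη]; ring
  have hη2' : η ^ 2 = lam1 ^ 2 / 4 - ε := by
    rw [hη, div_pow, Real.sq_sqrt hdisc.le]; ring
  -- membership extraction
  have hD2e : ∀ v ∈ D2s lam1 e1 K, ⟪e1, v⟫ = 0 := by
    intro v hv
    simp only [D2s, Submodule.mem_inf] at hv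
    exact (Submodule.mem_orthogonal _ v).mp hv.1 e1 (Submodule.mem_span_singleton_self e1)
  have hD2K : ∀ v ∈ D2s lam1 e1 K, K e1 v = (lam1 / 2) • v := by
    intro v hv
    simp only [D2s, Submodule.mem_inf] at hv
    exact Module.End.mem_eigenspace_iff.mp hv.2
  have hD3e : ∀ w ∈ D3s μ e1 K, ⟪e1, w⟫ = 0 := by
    intro w hw
    simp only [D3s, Submodule.mem_inf] at hw
    exact (Submodule.mem_orthogonal _ w).mp hw.1 e1 (Submodule.mem_span_singleton_self e1)
  have hD3K : ∀ w ∈ D3s μ e1 K, K e1 w = μ • w := by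
    intro w hw
    simp only [D3s, Submodule.mem_inf] at hw
    exact Module.End.mem_eigenspace_iff.mp hw.2
  -- K e1 e1 = lam1 • e1
  have hKe1e1 : K e1 e1 = lam1 • e1 := by
    have hz : ∀ z : V, ⟪K e1 e1 - lam1 • e1, z⟫ = 0 := by
      intro z
      have hzT : z ∈ (ℝ ∙ e1) ⊔ D2s lam1 e1 K ⊔ D3s μ e1 K := by
        rw [hsplit]; exact Submodule.mem_top
      obtain ⟨y, hy, w, hw, rfl⟩ := Submodule.mem_sup.mp hzT
      obtain ⟨a, ha, b, hb, rfl⟩ := Submodule.mem_sup.mp hy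
      obtain ⟨t, rfl⟩ := Submodule.mem_span_singleton.mp ha
      have hxa : ⟪K e1 e1 - lam1 • e1, e1⟫ = 0 := by
        rw [inner_sub_left, real_inner_smul_left, he1e1, ← hlam1]; ring
      have hxb : ⟪K e1 e1 - lam1 • e1, b⟫ = 0 := by
        have h1 : ⟪b, e1⟫ = 0 := by rw [real_inner_comm]; exact hD2e b hb
        rw [inner_sub_left, hKcub e1 e1 b, hD2K b hb, real_inner_smul_left,
          real_inner_smul_left, h1, hD2e b hb]
        ring
      have hxw : ⟪K e1 e1 - lam1 • e1, w⟫ = 0 := by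
        have h1 : ⟪w, e1⟫ = 0 := by rw [real_inner_comm]; exact hD3e w hw
        rw [inner_sub_left, hKcub e1 e1 w, hD3K w hw, real_inner_smul_left,
          real_inner_smul_left, h1, hD3e w hw]
        ring
      rw [inner_add_right, inner_add_right, real_inner_smul_right, hxa, hxb, hxw]
      ring
    have h0 := hz (K e1 e1 - lam1 • e1)
    rw [inner_self_eq_zero] at h0
    exact sub_eq_zero.mp h0
  -- the key quadratic identity
  have key : ∀ a ∈ D2s lam1 e1 K, ∀ b ∈ D2s lam1 e1 K,
      ⟪Lop lam1 e1 K a b, Lop lam1 e1 K a a⟫ = lam1 * η / 2 * (⟪a, b⟫ * ⟪a, a⟫) := by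
    intro a ha b hb
    exact key_identity ε K hKsymm hKcub e1 he1e1 lam1 η μ hηpos hμ' hη2' hKe1e1 a b
      (hD2e a ha) (hD2e b hb) (hD2K a ha) (hD2K b hb)
      (hD3e _ (hLD3 a ha a ha)) (hD3e _ (hLD3 a ha b hb))
      (hD3K _ (hLD3 a ha a ha)) (hpar e1 a a a)
  -- the one-dimensional image
  set Sp := Submodule.span ℝ
      {w : V | ∃ v1 ∈ D2s lam1 e1 K, ∃ v2 ∈ D2s lam1 e1 K,
        w = Lop lam1 e1 K v1 v2} with hSpdef
  have hSpD3 : Sp ≤ D3s μ e1 K := by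
    rw [hSpdef]
    apply Submodule.span_le.mpr
    rintro w ⟨v1, h1, v2, h2, rfl⟩
    exact hLD3 v1 h1 v2 h2
  haveI : FiniteDimensional ℝ Sp := FiniteDimensional.of_finrank_pos (by rw [him]; norm_num)
  obtain ⟨x, hxS, hx0⟩ : ∃ x ∈ Sp, x ≠ 0 := by
    rcases (Submodule.ne_bot_iff Sp).mp (by
      intro hbot
      rw [hbot] at him
      simp at him) with ⟨x, hx1, hx2⟩
    exact ⟨x, hx1, hx2⟩
  have hSpeq : Sp = ℝ ∙ x :=
    (Submodule.eq_of_le_of_finrank_le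
      ((Submodule.span_singleton_le_iff_mem x Sp).mpr hxS)
      (by rw [him, finrank_span_singleton hx0])).symm
  have hxn : ‖x‖ ≠ 0 := norm_ne_zero_iff.mpr hx0
  set w0 : V := ‖x‖⁻¹ • x with hw0def
  have hw0 : ‖w0‖ = 1 := by
    rw [hw0def, norm_smul, norm_inv, norm_norm]
    field_simp
  have hw0D3 : w0 ∈ D3s μ e1 K := hSpD3 (Submodule.smul_mem _ _ hxS)
  have hw0w0 : ⟪w0, w0⟫ = 1 := by
    rw [real_inner_self_eq_norm_mul_norm, hw0]; norm_num
  have hrep : ∀ a ∈ D2s lam1 e1 K, ∀ b ∈ D2s lam1 e1 K,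
      Lop lam1 e1 K a b = ⟪Lop lam1 e1 K a b, w0⟫ • w0 := by
    intro a ha b hb
    have hmem : Lop lam1 e1 K a b ∈ Sp := Submodule.subset_span ⟨a, ha, b, hb, rfl⟩
    rw [hSpeq] at hmem
    obtain ⟨t, ht⟩ := Submodule.mem_span_singleton.mp hmem
    have h1 : Lop lam1 e1 K a b = (t * ‖x‖) • w0 := by
      rw [← ht, hw0def, smul_smul, mul_assoc, mul_inv_cancel₀ hxn, mul_one]
    rw [h1, real_inner_smul_left, hw0w0, mul_one]
  -- symmetry and additivity of L
  have hLs : ∀ a b : V, Lop lam1 e1 K a b = Lop lam1 e1 K b a := by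
    intro a b
    simp only [Lop, hKsymm a b, real_inner_comm a b]
  have hLa : ∀ a b d : V, Lop lam1 e1 K (a + b) d
      = Lop lam1 e1 K a d + Lop lam1 e1 K b d := by
    intro a b d
    simp only [Lop, map_add, LinearMap.add_apply, inner_add_left, mul_add, add_smul]
    abel
  -- the constant
  have hc2pos : 0 < lam1 * η / 2 := by positivity
  have hcpos : 0 < Real.sqrt (lam1 * η / 2) := Real.sqrt_pos.mpr hc2pos
  have hc2 : (Real.sqrt (lam1 * η / 2)) ^ 2 = lam1 * η / 2 := Real.sq_sqrt hc2pos.le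
  have hkey : ∀ a ∈ D2s lam1 e1 K, ∀ b ∈ D2s lam1 e1 K,
      ⟪Lop lam1 e1 K a b, Lop lam1 e1 K a a⟫
        = (Real.sqrt (lam1 * η / 2)) ^ 2 * (⟪a, b⟫ * ⟪a, a⟫) := by
    intro a ha b hb
    rw [hc2]
    exact key a ha b hb
  rcases sign_dichotomy (D2s lam1 e1 K) (Lop lam1 e1 K) w0 (Real.sqrt (lam1 * η / 2))
      hcpos hw0w0 hLs hLa hrep hkey with h | h
  · exact ⟨w0, hw0, hw0D3, fun v1 h1 v2 h2 => h v1 h1 v2 h2⟩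
  · refine ⟨-w0, by rw [norm_neg]; exact hw0, Submodule.neg_mem _ hw0D3,
      fun v1 h1 v2 h2 => h v1 h1 v2 h2⟩

end
end
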